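/- arXiv:2403.00201 — 6 statements merged into one kernel-verified Lean document; each statement's English description precedes it below -/
import Mathlib

section
/- If an L-formula φ is falsifiable (respectively, satisfiable) on some CS4 frame, then φ is falsifiable (respectively, satisfiable) on some CS4 frame whose set of worlds is finite. That is, the logic CS4 has the finite frame property. -/
universe u

/-- Formulas of the intuitionistic modal language `L`, with a countably infinite
set of propositional variables indexed by `ℕ`. -/
inductive Fml : Type where
  | var : ℕ → Fml
  | bot : Fml
  | and : Fml → Fml → Fml
  | or : Fml → Fml → Fml
  | imp : Fml → Fml → Fml
  | dia : Fml → Fml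
  | box : Fml → Fml
  deriving DecidableEq

/-- A birelational structure: a set of worlds, a set of fallible worlds, an
intuitionistic relation `le` (`≼`), a modal relation `sq` (`⊑`) and a valuation. -/
structure KModel : Type (u + 1) where
  W : Type u
  fallible : Set W
  le : W → W → Prop
  sq : W → W → Prop
  val : ℕ → Set W

namespace KModel

/-- The satisfaction relation. -/
def Sat (M : KModel.{u}) : Fml → M.W → Prop
  | .var p, w => w ∈ M.val p
  | .bot, w => w ∈ M.fallible
  | .and φ ψ, w => Sat M φ w ∧ Sat M ψ w
  | .or φ ψ, w => Sat M φ w ∨ Sat M ψ w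
  | .imp φ ψ, w => ∀ v, M.le w v → Sat M φ v → Sat M ψ v
  | .dia φ, w => ∀ u, M.le w u → ∃ v, M.sq u v ∧ Sat M φ v
  | .box φ, w => ∀ u v, M.le w u → M.sq u v → Sat M φ v

/-- `M` is a bi-intuitionistic model: both relations are preorders, the set of
fallible worlds is closed under both relations, and the valuation is
`≼`-monotone and contains the fallible worlds. -/
def IsBiInt (M : KModel.{u}) : Prop :=
  (∀ w, M.le w w) ∧ (∀ u v w, M.le u v → M.le v w → M.le u w) ∧
  (∀ w, M.sq w w) ∧ (∀ u v w, M.sq u v → M.sq v w → M.sq u w) ∧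
  (∀ w v, w ∈ M.fallible → M.le w v → v ∈ M.fallible) ∧
  (∀ w v, w ∈ M.fallible → M.sq w v → v ∈ M.fallible) ∧
  (∀ p w v, w ∈ M.val p → M.le w v → v ∈ M.val p) ∧
  (∀ p w, w ∈ M.fallible → w ∈ M.val p)

/-- `⊑` is forth–up confluent for `≼`. -/
def ForthUp (M : KModel.{u}) : Prop :=
  ∀ w w' v, M.le w w' → M.sq w v → ∃ v', M.le v v' ∧ M.sq w' v'

/-- `⊑` is back–up confluent for `≼`. -/
def BackUp (M : KModel.{u}) : Prop :=
  ∀ w v v', M.sq w v → M.le v v' → ∃ w', M.le w w' ∧ M.sq w' v'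

/-- `⊑` is forth–down confluent for `≼`. -/
def ForthDown (M : KModel.{u}) : Prop :=
  ∀ w v v', M.le w v → M.sq v v' → ∃ w', M.sq w w' ∧ M.le w' v'

/-- `≼` is upward linear. -/
def UpLinear (M : KModel.{u}) : Prop :=
  ∀ w u v, M.le w u → M.le w v → M.le u v ∨ M.le v u

/-- There are no fallible worlds. -/
def Infallible (M : KModel.{u}) : Prop := M.fallible = ∅

/-- CS4 frames: back–up confluent bi-intuitionistic frames. -/
def IsCS4 (M : KModel.{u}) : Prop := M.IsBiInt ∧ M.BackUp

/-- IS4 frames: forth–up confluent infallible CS4 frames. -/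
def IsIS4 (M : KModel.{u}) : Prop := M.IsCS4 ∧ M.ForthUp ∧ M.Infallible

/-- GS4 frames: upward-linear IS4 frames. -/
def IsGS4 (M : KModel.{u}) : Prop := M.IsIS4 ∧ M.UpLinear

/-- GS4c frames: forth–down confluent GS4 frames. -/
def IsGS4c (M : KModel.{u}) : Prop := M.IsGS4 ∧ M.ForthDown

/-- S4I frames: forth–up and forth–down confluent infallible bi-intuitionistic frames. -/
def IsS4I (M : KModel.{u}) : Prop :=
  M.IsBiInt ∧ M.ForthUp ∧ M.ForthDown ∧ M.Infallible

end KModel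

/-! ### A Hilbert-style proof system for CS4 -/

namespace Fml

/-- Hilbert-style provability for CS4. -/
inductive Prv : Fml → Prop where
  | ax_k {α β : Fml} : Prv (α.imp (β.imp α))
  | ax_s {α β γ : Fml} : Prv ((α.imp (β.imp γ)).imp ((α.imp β).imp (α.imp γ)))
  | ax_and_l {α β : Fml} : Prv ((α.and β).imp α)
  | ax_and_r {α β : Fml} : Prv ((α.and β).imp β)
  | ax_and_i {α β : Fml} : Prv (α.imp (β.imp (α.and β)))
  | ax_or_l {α β : Fml} : Prv (α.imp (α.or β))
  | ax_or_r {α β : Fml} : Prv (β.imp (α.or β))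
  | ax_or_e {α β γ : Fml} : Prv ((α.imp γ).imp ((β.imp γ).imp ((α.or β).imp γ)))
  | ax_bot {α : Fml} : Prv (Fml.bot.imp α)
  | ax_kbox {α β : Fml} : Prv ((Fml.box (α.imp β)).imp ((Fml.box α).imp (Fml.box β)))
  | ax_kdia {α β : Fml} : Prv ((Fml.box (α.imp β)).imp ((Fml.dia α).imp (Fml.dia β)))
  | ax_t {α : Fml} : Prv ((Fml.box α).imp α)
  | ax_4 {α : Fml} : Prv ((Fml.box α).imp (Fml.box (Fml.box α)))
  | ax_tdia {α : Fml} : Prv (α.imp (Fml.dia α))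
  | ax_4dia {α : Fml} : Prv ((Fml.dia (Fml.dia α)).imp (Fml.dia α))
  | mp {α β : Fml} : Prv (α.imp β) → Prv α → Prv β
  | nec {α : Fml} : Prv α → Prv (Fml.box α)

namespace Prv

theorem prv_id {α : Fml} : Prv (α.imp α) :=
  mp (mp (ax_s (β := α.imp α) (γ := α)) ax_k) ax_k

theorem prv_const {α β : Fml} (h : Prv β) : Prv (α.imp β) := mp ax_k h

theorem mp_ctx {α β γ : Fml} (h1 : Prv (α.imp (β.imp γ))) (h2 : Prv (α.imp β)) :
    Prv (α.imp γ) := mp (mp ax_s h1) h2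

theorem imp_trans {α β γ : Fml} (h1 : Prv (α.imp β)) (h2 : Prv (β.imp γ)) :
    Prv (α.imp γ) := mp_ctx (prv_const h2) h1

theorem comp {α β γ : Fml} (h : Prv (β.imp γ)) : Prv ((α.imp β).imp (α.imp γ)) :=
  mp ax_s (prv_const h)

theorem and_intro_ctx {α β γ : Fml} (h1 : Prv (γ.imp α)) (h2 : Prv (γ.imp β)) :
    Prv (γ.imp (α.and β)) := mp_ctx (imp_trans h1 ax_and_i) h2

theorem curry {α β γ : Fml} (h : Prv ((α.and β).imp γ)) : Prv (α.imp (β.imp γ)) :=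
  imp_trans ax_and_i (comp h)

theorem uncurry {α β γ : Fml} (h : Prv (α.imp (β.imp γ))) : Prv ((α.and β).imp γ) :=
  mp_ctx (imp_trans ax_and_l h) ax_and_r

theorem swap {α β γ : Fml} (h : Prv (α.imp (β.imp γ))) : Prv (β.imp (α.imp γ)) :=
  curry (imp_trans (and_intro_ctx ax_and_r ax_and_l) (uncurry h))

theorem or_elim_ctx {α β γ : Fml} (h1 : Prv (α.imp γ)) (h2 : Prv (β.imp γ)) :
    Prv ((α.or β).imp γ) := mp (mp ax_or_e h1) h2

theorem box_mono {α β : Fml} (h : Prv (α.imp β)) :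
    Prv ((Fml.box α).imp (Fml.box β)) := mp ax_kbox (nec h)

theorem dia_mono {α β : Fml} (h : Prv (α.imp β)) :
    Prv ((Fml.dia α).imp (Fml.dia β)) := mp ax_kdia (nec h)

end Prv

/-! ### Finite conjunctions and disjunctions -/

/-- A provable `⊤`. -/
def top : Fml := Fml.bot.imp Fml.bot

/-- Conjunction of a list. -/
def conj : List Fml → Fml
  | [] => top
  | σ :: L => σ.and (conj L)

/-- Disjunction of a list. -/
def disj : List Fml → Fml
  | [] => Fml.bot
  | σ :: L => σ.or (disj L)

open Prv

theorem prv_top : Prv top := prv_id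

theorem conj_mem {σ : Fml} : ∀ {L : List Fml}, σ ∈ L → Prv ((conj L).imp σ)
  | τ :: L, h => by
    rcases List.mem_cons.1 h with h | h
    · exact h ▸ ax_and_l
    · exact imp_trans ax_and_r (conj_mem h)

theorem conj_intro {γ : Fml} : ∀ {L : List Fml},
    (∀ σ ∈ L, Prv (γ.imp σ)) → Prv (γ.imp (conj L))
  | [], _ => prv_const prv_top
  | τ :: L, h => and_intro_ctx (h τ (List.mem_cons_self))
      (conj_intro fun σ hσ => h σ (List.mem_cons_of_mem _ hσ))

theorem conj_mono {L L' : List Fml} (h : ∀ σ ∈ L, σ ∈ L') :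
    Prv ((conj L').imp (conj L)) := conj_intro fun σ hσ => conj_mem (h σ hσ)

theorem disj_mem {σ : Fml} : ∀ {L : List Fml}, σ ∈ L → Prv (σ.imp (disj L))
  | τ :: L, h => by
    rcases List.mem_cons.1 h with h | h
    · exact h ▸ ax_or_l
    · exact imp_trans (disj_mem h) ax_or_r

theorem disj_elim {θ : Fml} : ∀ {L : List Fml},
    (∀ σ ∈ L, Prv (σ.imp θ)) → Prv ((disj L).imp θ)
  | [], _ => ax_bot
  | τ :: L, h => or_elim_ctx (h τ (List.mem_cons_self))
      (disj_elim fun σ hσ => h σ (List.mem_cons_of_mem _ hσ))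

theorem box_conj : ∀ {L : List Fml}, Prv ((conj (L.map Fml.box)).imp (Fml.box (conj L)))
  | [] => prv_const (nec prv_top)
  | τ :: L => by
    have h1 : Prv ((Fml.box τ).imp (Fml.box ((conj L).imp (τ.and (conj L))))) :=
      box_mono ax_and_i
    have h2 : Prv ((Fml.box τ).imp ((Fml.box (conj L)).imp (Fml.box (τ.and (conj L))))) :=
      imp_trans h1 ax_kbox
    exact mp_ctx (imp_trans ax_and_l h2) (imp_trans ax_and_r box_conj)

end Fml

/-! ### Subformula closure -/

namespace Fml

/-- The set of subformulas of a formula. -/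
def subfml : Fml → Finset Fml
  | .var p => {.var p}
  | .bot => {.bot}
  | .and α β => insert (Fml.and α β) (subfml α ∪ subfml β)
  | .or α β => insert (Fml.or α β) (subfml α ∪ subfml β)
  | .imp α β => insert (Fml.imp α β) (subfml α ∪ subfml β)
  | .dia α => insert (Fml.dia α) (subfml α)
  | .box α => insert (Fml.box α) (subfml α)

theorem mem_subfml_self : ∀ ψ : Fml, ψ ∈ subfml ψ := by
  intro ψ; cases ψ <;> simp [subfml]

theorem subfml_trans : ∀ {χ ψ : Fml}, ψ ∈ subfml χ → subfml ψ ⊆ subfml χ := by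
  intro χ
  induction χ with
  | var p => intro ψ h; simp [subfml] at h; subst h; simp [subfml]
  | bot => intro ψ h; simp [subfml] at h; subst h; simp [subfml]
  | and α β ihα ihβ =>
    intro ψ h; simp only [subfml, Finset.mem_insert, Finset.mem_union] at h
    rcases h with h | h | h
    · subst h; exact fun _ h => h
    · exact (ihα h).trans (by intro x hx; simp [subfml, Finset.mem_union, hx])
    · exact (ihβ h).trans (by intro x hx; simp [subfml, Finset.mem_union, hx])
  | or α β ihα ihβ =>
    intro ψ h; simp only [subfml, Finset.mem_insert, Finset.mem_union] at h
    rcases h with h | h | h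
    · subst h; exact fun _ h => h
    · exact (ihα h).trans (by intro x hx; simp [subfml, Finset.mem_union, hx])
    · exact (ihβ h).trans (by intro x hx; simp [subfml, Finset.mem_union, hx])
  | imp α β ihα ihβ =>
    intro ψ h; simp only [subfml, Finset.mem_insert, Finset.mem_union] at h
    rcases h with h | h | h
    · subst h; exact fun _ h => h
    · exact (ihα h).trans (by intro x hx; simp [subfml, Finset.mem_union, hx])
    · exact (ihβ h).trans (by intro x hx; simp [subfml, Finset.mem_union, hx])
  | dia α ihα =>
    intro ψ h; simp only [subfml, Finset.mem_insert] at h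
    rcases h with h | h
    · subst h; exact fun _ h => h
    · exact (ihα h).trans (by intro x hx; simp [subfml, hx])
  | box α ihα =>
    intro ψ h; simp only [subfml, Finset.mem_insert] at h
    rcases h with h | h
    · subst h; exact fun _ h => h
    · exact (ihα h).trans (by intro x hx; simp [subfml, hx])

/-- The finite closure set used for the canonical model of `φ`. -/
def Sig (φ : Fml) : Finset Fml := insert Fml.bot (subfml φ)

theorem bot_mem_Sig (φ : Fml) : Fml.bot ∈ Sig φ := Finset.mem_insert_self _ _

theorem self_mem_Sig (φ : Fml) : φ ∈ Sig φ :=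
  Finset.mem_insert_of_mem (mem_subfml_self φ)

theorem Sig_closed {φ ψ : Fml} (h : ψ ∈ Sig φ) : subfml ψ ⊆ Sig φ := by
  rcases Finset.mem_insert.1 h with h | h
  · subst h; intro x hx; simp [subfml] at hx; subst hx; exact bot_mem_Sig φ
  · exact (subfml_trans h).trans (Finset.subset_insert _ _)

theorem Sig_and_left {φ α β : Fml} (h : Fml.and α β ∈ Sig φ) : α ∈ Sig φ :=
  Sig_closed h (by simp [subfml, Finset.mem_union]; exact Or.inr (Or.inl (mem_subfml_self α)))

theorem Sig_and_right {φ α β : Fml} (h : Fml.and α β ∈ Sig φ) : β ∈ Sig φ :=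
  Sig_closed h (by simp [subfml, Finset.mem_union]; exact Or.inr (Or.inr (mem_subfml_self β)))

theorem Sig_or_left {φ α β : Fml} (h : Fml.or α β ∈ Sig φ) : α ∈ Sig φ :=
  Sig_closed h (by simp [subfml, Finset.mem_union]; exact Or.inr (Or.inl (mem_subfml_self α)))

theorem Sig_or_right {φ α β : Fml} (h : Fml.or α β ∈ Sig φ) : β ∈ Sig φ :=
  Sig_closed h (by simp [subfml, Finset.mem_union]; exact Or.inr (Or.inr (mem_subfml_self β)))

theorem Sig_imp_left {φ α β : Fml} (h : Fml.imp α β ∈ Sig φ) : α ∈ Sig φ :=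
  Sig_closed h (by simp [subfml, Finset.mem_union]; exact Or.inr (Or.inl (mem_subfml_self α)))

theorem Sig_imp_right {φ α β : Fml} (h : Fml.imp α β ∈ Sig φ) : β ∈ Sig φ :=
  Sig_closed h (by simp [subfml, Finset.mem_union]; exact Or.inr (Or.inr (mem_subfml_self β)))

theorem Sig_dia {φ α : Fml} (h : Fml.dia α ∈ Sig φ) : α ∈ Sig φ :=
  Sig_closed h (by simp [subfml]; exact Or.inr (mem_subfml_self α))

theorem Sig_box {φ α : Fml} (h : Fml.box α ∈ Sig φ) : α ∈ Sig φ :=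
  Sig_closed h (by simp [subfml]; exact Or.inr (mem_subfml_self α))

/-! ### Finite contexts and theories -/

open Prv

/-- Derivability from a finite context. -/
def FCtx (Γ : Finset Fml) (ψ : Fml) : Prop := Prv ((conj Γ.toList).imp ψ)

theorem fctx_prv {Γ : Finset Fml} {ψ : Fml} (h : Prv ψ) : FCtx Γ ψ := prv_const h

theorem fctx_mem {Γ : Finset Fml} {ψ : Fml} (h : ψ ∈ Γ) : FCtx Γ ψ :=
  conj_mem (Finset.mem_toList.2 h)

theorem fctx_mp {Γ : Finset Fml} {α β : Fml} (h1 : FCtx Γ (α.imp β)) (h2 : FCtx Γ α) :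
    FCtx Γ β := mp_ctx h1 h2

theorem fctx_mono {Γ Γ' : Finset Fml} {ψ : Fml} (hs : Γ ⊆ Γ') (h : FCtx Γ ψ) :
    FCtx Γ' ψ :=
  imp_trans (conj_mono fun σ hσ => Finset.mem_toList.2 (hs (Finset.mem_toList.1 hσ))) h

theorem fctx_insert_of {Γ : Finset Fml} {α β : Fml} (h : FCtx Γ (α.imp β)) :
    FCtx (insert α Γ) β := by
  have h1 : Prv ((conj (insert α Γ).toList).imp (α.and (conj Γ.toList))) :=
    and_intro_ctx (conj_mem (Finset.mem_toList.2 (Finset.mem_insert_self _ _)))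
      (conj_mono fun σ hσ =>
        Finset.mem_toList.2 (Finset.mem_insert_of_mem (Finset.mem_toList.1 hσ)))
  exact imp_trans h1 (uncurry (swap h))

theorem fctx_insert_to {Γ : Finset Fml} {α β : Fml} (h : FCtx (insert α Γ) β) :
    FCtx Γ (α.imp β) := by
  have h1 : Prv ((α.and (conj Γ.toList)).imp (conj (insert α Γ).toList)) :=
    conj_intro fun σ hσ => by
      rcases Finset.mem_insert.1 (Finset.mem_toList.1 hσ) with rfl | hσ
      · exact ax_and_l
      · exact imp_trans ax_and_r (conj_mem (Finset.mem_toList.2 hσ))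
  exact swap (curry (imp_trans h1 h))

theorem fctx_disj_elim {Γ : Finset Fml} {θ : Fml} :
    ∀ {L : List Fml}, (∀ σ ∈ L, FCtx Γ (σ.imp θ)) → FCtx Γ ((disj L).imp θ)
  | [], _ => fctx_prv ax_bot
  | τ :: L, h =>
    mp_ctx (mp_ctx (fctx_prv ax_or_e) (h τ (List.mem_cons_self)))
      (fctx_disj_elim fun σ hσ => h σ (List.mem_cons_of_mem _ hσ))

/-- A prime theory over a finite closure set `S`. -/
structure IsTheory (S Γ : Finset Fml) : Prop where
  sub : Γ ⊆ S
  ded : ∀ ψ ∈ S, FCtx Γ ψ → ψ ∈ Γ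
  prime : ∀ L : List Fml, (∀ σ ∈ L, σ ∈ S) → FCtx Γ (disj L) →
    Fml.bot ∈ Γ ∨ ∃ σ ∈ L, σ ∈ Γ

theorem IsTheory.not_fctx {S Γ : Finset Fml} (h : IsTheory S Γ) {ψ : Fml}
    (hψ : ψ ∈ S) (hn : ψ ∉ Γ) : ¬ FCtx Γ ψ := fun hf => hn (h.ded ψ hψ hf)

theorem IsTheory.bot_mem {S Γ : Finset Fml} (h : IsTheory S Γ) (hb : Fml.bot ∈ Γ)
    {ψ : Fml} (hψ : ψ ∈ S) : ψ ∈ Γ :=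
  h.ded ψ hψ (fctx_mp (fctx_prv ax_bot) (fctx_mem hb))

theorem isTheory_self (S : Finset Fml) (hb : Fml.bot ∈ S) : IsTheory S S where
  sub := fun _ h => h
  ded := fun _ hψ _ => hψ
  prime := fun _ _ _ => Or.inl hb

open Classical in
/-- Finite Lindenbaum lemma: any context not deriving `θ` extends to a prime
theory not deriving `θ`. -/
theorem lindenbaum {S Γ₀ : Finset Fml} {θ : Fml} (hsub : Γ₀ ⊆ S)
    (h : ¬ FCtx Γ₀ θ) : ∃ Γ : Finset Fml, IsTheory S Γ ∧ Γ₀ ⊆ Γ ∧ ¬ FCtx Γ θ := by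
  classical
  let P : Finset Fml → Prop := fun Γ => Γ₀ ⊆ Γ ∧ ¬ FCtx Γ θ
  let C : Finset (Finset Fml) := S.powerset.filter P
  have hΓ₀ : Γ₀ ∈ C := by
    simp only [C, Finset.mem_filter, Finset.mem_powerset]
    exact ⟨hsub, Finset.Subset.refl _, h⟩
  obtain ⟨Γ, hΓC, hmax⟩ := C.exists_max_image Finset.card ⟨Γ₀, hΓ₀⟩
  simp only [C, Finset.mem_filter, Finset.mem_powerset] at hΓC
  obtain ⟨hΓS, hΓ₀Γ, hΓθ⟩ := hΓC
  -- maximality: adding any new element of S makes θ derivable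
  have key : ∀ ψ ∈ S, ψ ∉ Γ → FCtx (insert ψ Γ) θ := by
    intro ψ hψS hψΓ
    by_contra hc
    have hmem : insert ψ Γ ∈ C := by
      simp only [C, Finset.mem_filter, Finset.mem_powerset]
      exact ⟨Finset.insert_subset hψS hΓS, hΓ₀Γ.trans (Finset.subset_insert _ _), hc⟩
    have := hmax _ hmem
    rw [Finset.card_insert_of_notMem hψΓ] at this
    omega
  refine ⟨Γ, ⟨hΓS, ?_, ?_⟩, hΓ₀Γ, hΓθ⟩
  · intro ψ hψS hd
    by_contra hn
    exact hΓθ (fctx_mp (fctx_insert_to (key ψ hψS hn)) hd)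
  · intro L hL hd
    by_contra hn
    push_neg at hn
    have hall : ∀ σ ∈ L, FCtx Γ (σ.imp θ) := fun σ hσ =>
      fctx_insert_to (key σ (hL σ hσ) (hn.2 σ hσ))
    exact hΓθ (fctx_mp (fctx_disj_elim hall) hd)

end Fml

/-! ### Soundness of the Hilbert system over CS4 models -/

namespace KModel

theorem sat_mono {M : KModel.{u}} (hM : M.IsBiInt) :
    ∀ (ψ : Fml) {w v : M.W}, M.le w v → M.Sat ψ w → M.Sat ψ v := by
  obtain ⟨hrefl, htrans, hsqr, hsqt, hfle, hfsq, hval, hfval⟩ := hM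
  intro ψ
  induction ψ with
  | var p => exact fun h hs => hval _ _ _ hs h
  | bot => exact fun h hs => hfle _ _ hs h
  | and α β ihα ihβ => exact fun h hs => ⟨ihα h hs.1, ihβ h hs.2⟩
  | or α β ihα ihβ =>
    exact fun h hs => hs.elim (fun s => Or.inl (ihα h s)) fun s => Or.inr (ihβ h s)
  | imp α β ihα ihβ =>
    exact fun h hs => fun u hu ha => hs u (htrans _ _ _ h hu) ha
  | dia α ihα => exact fun h hs => fun u hu => hs u (htrans _ _ _ h hu)
  | box α ihα => exact fun h hs => fun u x hu hx => hs u x (htrans _ _ _ h hu) hx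

theorem fallible_sat {M : KModel.{u}} (hM : M.IsBiInt) :
    ∀ (ψ : Fml) {w : M.W}, w ∈ M.fallible → M.Sat ψ w := by
  obtain ⟨hrefl, htrans, hsqr, hsqt, hfle, hfsq, hval, hfval⟩ := hM
  intro ψ
  induction ψ with
  | var p => exact fun h => hfval _ _ h
  | bot => exact fun h => h
  | and α β ihα ihβ => exact fun h => ⟨ihα h, ihβ h⟩
  | or α β ihα ihβ => exact fun h => Or.inl (ihα h)
  | imp α β ihα ihβ => exact fun h => fun v hv _ => ihβ (hfle _ _ h hv)
  | dia α ihα => exact fun h => fun u hu => ⟨u, hsqr u, ihα (hfle _ _ h hu)⟩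
  | box α ihα => exact fun h => fun u v hu hv => ihα (hfsq _ _ (hfle _ _ h hu) hv)

theorem soundness {α : Fml} (h : Fml.Prv α) :
    ∀ (M : KModel.{u}), M.IsCS4 → ∀ w : M.W, M.Sat α w := by
  induction h with
  | @ax_k α β =>
    intro M hM w
    intro v hv ha u hu _
    exact sat_mono hM.1 α hu ha
  | @ax_s α β γ =>
    intro M ⟨hBI, hBU⟩ w
    obtain ⟨hrefl, htrans, _⟩ := hBI
    intro v hv h1 u hu h2 x hx ha
    exact h1 x (htrans _ _ _ hu hx) ha x (hrefl x)
      (h2 x hx ha)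
  | @ax_and_l α β =>
    intro M hM w; intro v hv ha; exact ha.1
  | @ax_and_r α β =>
    intro M hM w; intro v hv ha; exact ha.2
  | @ax_and_i α β =>
    intro M ⟨hBI, hBU⟩ w
    intro v hv ha u hu hb
    exact ⟨sat_mono hBI α hu ha, hb⟩
  | @ax_or_l α β =>
    intro M hM w; intro v hv ha; exact Or.inl ha
  | @ax_or_r α β =>
    intro M hM w; intro v hv hb; exact Or.inr hb
  | @ax_or_e α β γ =>
    intro M ⟨hBI, hBU⟩ w
    obtain ⟨hrefl, htrans, _⟩ := hBI
    intro v hv h1 u hu h2 x hx hab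
    rcases hab with ha | hb
    · exact h1 x (htrans _ _ _ hu hx) ha
    · exact h2 x hx hb
  | @ax_bot α =>
    intro M ⟨hBI, hBU⟩ w
    intro v hv hb
    exact fallible_sat hBI α hb
  | @ax_kbox α β =>
    intro M ⟨hBI, hBU⟩ w
    obtain ⟨hrefl, htrans, _⟩ := hBI
    intro v hv h1 u hu h2 x y hx hy
    exact h1 x y (htrans _ _ _ hu hx) hy y (hrefl y) (h2 x y hx hy)
  | @ax_kdia α β =>
    intro M ⟨hBI, hBU⟩ w
    obtain ⟨hrefl, htrans, _⟩ := hBI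
    intro v hv h1 u hu h2 x hx
    obtain ⟨y, hxy, hay⟩ := h2 x hx
    exact ⟨y, hxy, h1 x y (htrans _ _ _ hu hx) hxy y (hrefl y) hay⟩
  | @ax_t α =>
    intro M ⟨hBI, hBU⟩ w
    obtain ⟨hrefl, htrans, hsqr, _⟩ := hBI
    intro v hv h1
    exact h1 v v (hrefl v) (hsqr v)
  | @ax_4 α =>
    intro M ⟨hBI, hBU⟩ w
    obtain ⟨hrefl, htrans, hsqr, hsqt, _⟩ := hBI
    intro v hv h1 u x hu hx y z hy hz
    obtain ⟨u', huu', hu'y⟩ := hBU u x y hx hy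
    exact h1 u' z (htrans _ _ _ hu huu') (hsqt _ _ _ hu'y hz)
  | @ax_tdia α =>
    intro M ⟨hBI, hBU⟩ w
    intro v hv ha u hu
    exact ⟨u, hBI.2.2.1 u, sat_mono hBI α hu ha⟩
  | @ax_4dia α =>
    intro M ⟨hBI, hBU⟩ w
    obtain ⟨hrefl, htrans, hsqr, hsqt, _⟩ := hBI
    intro v hv h1 u hu
    obtain ⟨x, hux, hx⟩ := h1 u hu
    obtain ⟨y, hxy, hy⟩ := hx x (hrefl x)
    exact ⟨y, hsqt _ _ _ hux hxy, hy⟩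
  | @mp α β h1 h2 ih1 ih2 =>
    intro M hM w
    exact ih1 M hM w w (hM.1.1 w) (ih2 M hM w)
  | @nec α h ih =>
    intro M hM w
    intro u v hu hv
    exact ih M hM v

end KModel

/-! ### The finite canonical model -/

namespace Fml

open Prv

/-- For each boxed member `□χ` of `Γ`, collect `χ` and `□χ`. -/
def unboxSet (Γ : Finset Fml) : Finset Fml :=
  Γ.biUnion fun σ => match σ with
    | .box χ => {χ, .box χ}
    | _ => ∅

theorem mem_unboxSet_left {Γ : Finset Fml} {χ : Fml} (h : Fml.box χ ∈ Γ) :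
    χ ∈ unboxSet Γ :=
  Finset.mem_biUnion.2 ⟨Fml.box χ, h, by simp⟩

theorem mem_unboxSet_right {Γ : Finset Fml} {χ : Fml} (h : Fml.box χ ∈ Γ) :
    Fml.box χ ∈ unboxSet Γ :=
  Finset.mem_biUnion.2 ⟨Fml.box χ, h, by simp⟩

theorem unboxSet_sub {φ : Fml} {Γ : Finset Fml} (h : Γ ⊆ Sig φ) :
    unboxSet Γ ⊆ Sig φ := by
  intro σ hσ
  obtain ⟨τ, hτ, hστ⟩ := Finset.mem_biUnion.1 hσ
  cases τ with
  | box χ =>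
    simp only [Finset.mem_insert, Finset.mem_singleton] at hστ
    rcases hστ with rfl | rfl
    · exact Sig_box (h hτ)
    · exact h hτ
  | var p => simp at hστ
  | bot => simp at hστ
  | and α β => simp at hστ
  | or α β => simp at hστ
  | imp α β => simp at hστ
  | dia α => simp at hστ

/-- The context of a theory proves the box of the conjunction of its unboxing. -/
theorem fctx_box_unbox (Γ : Finset Fml) :
    FCtx Γ (Fml.box (conj (unboxSet Γ).toList)) := by
  have h1 : Prv ((conj Γ.toList).imp (conj (((unboxSet Γ).toList).map Fml.box))) := by
    apply conj_intro
    intro τ hτ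
    obtain ⟨σ, hσ, rfl⟩ := List.mem_map.1 hτ
    obtain ⟨ρ, hρ, hσρ⟩ := Finset.mem_biUnion.1 (Finset.mem_toList.1 hσ)
    cases ρ with
    | box χ =>
      simp only [Finset.mem_insert, Finset.mem_singleton] at hσρ
      rcases hσρ with rfl | rfl
      · exact conj_mem (Finset.mem_toList.2 hρ)
      · exact imp_trans (conj_mem (Finset.mem_toList.2 hρ)) ax_4
    | var p => simp at hσρ
    | bot => simp at hσρ
    | and α β => simp at hσρ
    | or α β => simp at hσρ
    | imp α β => simp at hσρ
    | dia α => simp at hσρ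
  exact imp_trans h1 box_conj

theorem thy_unbox {φ : Fml} {Γ : Finset Fml} (hT : IsTheory (Sig φ) Γ) {χ : Fml}
    (h : Fml.box χ ∈ Γ) : χ ∈ Γ :=
  hT.ded χ (Sig_box (hT.sub h)) (fctx_mp (fctx_prv ax_t) (fctx_mem h))

theorem thy_dia_of_mem {φ : Fml} {Γ : Finset Fml} (hT : IsTheory (Sig φ) Γ) {ψ : Fml}
    (h : ψ ∈ Γ) (hSg : Fml.dia ψ ∈ Sig φ) : Fml.dia ψ ∈ Γ :=
  hT.ded _ hSg (fctx_mp (fctx_prv ax_tdia) (fctx_mem h))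

/-- Key underivability for the diamond existence lemma. -/
theorem key_dia {φ : Fml} {Γ : Finset Fml} (hT : IsTheory (Sig φ) Γ) {ψ χ : Fml}
    (hψ : Fml.dia ψ ∈ Γ) (hchS : Fml.dia χ ∈ Sig φ) (hχ : Fml.dia χ ∉ Γ) :
    ¬ FCtx (insert ψ (unboxSet Γ)) (Fml.dia χ) := by
  intro h
  set b := conj (unboxSet Γ).toList with hb
  have hmono : Prv ((ψ.and b).imp (conj (insert ψ (unboxSet Γ)).toList)) := by
    apply conj_intro
    intro σ hσ
    rcases Finset.mem_insert.1 (Finset.mem_toList.1 hσ) with rfl | hσ'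
    · exact ax_and_l
    · exact imp_trans ax_and_r (conj_mem (Finset.mem_toList.2 hσ'))
  have h' : Prv ((ψ.and b).imp (Fml.dia χ)) := imp_trans hmono h
  have hbox : FCtx Γ (Fml.box b) := fctx_box_unbox Γ
  have hstep : Prv ((Fml.box b).imp ((Fml.dia ψ).imp (Fml.dia (ψ.and b)))) :=
    imp_trans (box_mono (swap ax_and_i)) ax_kdia
  have hΓd : FCtx Γ (Fml.dia (ψ.and b)) :=
    fctx_mp (fctx_mp (fctx_prv hstep) hbox) (fctx_mem hψ)
  have h2 : FCtx Γ (Fml.dia (Fml.dia χ)) := fctx_mp (fctx_prv (dia_mono h')) hΓd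
  exact hχ (hT.ded _ hchS (fctx_mp (fctx_prv ax_4dia) h2))

/-- Key underivability for the box existence lemma. -/
theorem key_box {φ : Fml} {Γ : Finset Fml} (hT : IsTheory (Sig φ) Γ) {ψ : Fml}
    (hpsS : Fml.box ψ ∈ Sig φ) (hψ : Fml.box ψ ∉ Γ) : ¬ FCtx (unboxSet Γ) ψ := by
  intro h
  exact hψ (hT.ded _ hpsS (fctx_mp (fctx_prv (box_mono h)) (fctx_box_unbox Γ)))

end Fml

/-- Worlds of the finite canonical model: a prime theory together with an
optional diamond "commitment". -/
def WT (φ : Fml) : Type :=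
  {x : Finset Fml × Option Fml //
    Fml.IsTheory (Fml.Sig φ) x.1 ∧
    ∀ χ, x.2 = some χ → Fml.dia χ ∈ Fml.Sig φ ∧ Fml.dia χ ∉ x.1}

/-- The finite canonical model for `φ`. -/
def NModel (φ : Fml) : KModel.{0} where
  W := WT φ
  fallible := {x | Fml.bot ∈ x.1.1}
  le x y := x.1.1 ⊆ y.1.1
  sq x y := (∀ χ, Fml.box χ ∈ x.1.1 → χ ∈ y.1.1 ∧ Fml.box χ ∈ y.1.1) ∧
    (Fml.bot ∈ x.1.1 → Fml.bot ∈ y.1.1) ∧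
    (∀ χ, x.1.2 = some χ → y.1.2 = some χ)
  val p := {x | Fml.var p ∈ x.1.1 ∨ Fml.bot ∈ x.1.1}

theorem nmodel_isCS4 (φ : Fml) : (NModel φ).IsCS4 := by
  classical
  refine ⟨⟨?_, ?_, ?_, ?_, ?_, ?_, ?_, ?_⟩, ?_⟩
  · exact fun x => Finset.Subset.refl _
  · exact fun x y z h1 h2 => h1.trans h2
  · exact fun x => ⟨fun χ h => ⟨Fml.thy_unbox x.2.1 h, h⟩, id, fun χ h => h⟩
  · exact fun x y z h1 h2 =>
      ⟨fun χ h => h2.1 χ (h1.1 χ h).2, fun h => h2.2.1 (h1.2.1 h),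
        fun χ h => h2.2.2 χ (h1.2.2 χ h)⟩
  · exact fun x y h hle => hle h
  · exact fun x y h hsq => hsq.2.1 h
  · exact fun p x y h hle => h.elim (fun h' => Or.inl (hle h')) (fun h' => Or.inr (hle h'))
  · exact fun p x h => Or.inr h
  · -- back-up confluence
    rintro x y z ⟨hbox, hbot, hpers⟩ hle
    by_cases hbz : Fml.bot ∈ z.1.1
    · refine ⟨⟨(Fml.Sig φ, none), Fml.isTheory_self _ (Fml.bot_mem_Sig φ),
        fun χ h => nomatch h⟩, x.2.1.sub, ?_, ?_, ?_⟩
      · exact fun χ h => ⟨z.2.1.bot_mem hbz (Fml.Sig_box h), z.2.1.bot_mem hbz h⟩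
      · exact fun _ => hbz
      · exact fun χ h => nomatch h
    · -- the bad list: ⊥ together with all boxed formulas of Sig φ not in z
      set L : List Fml := Fml.bot ::
        ((Fml.Sig φ \ z.1.1).toList.filter fun σ => match σ with
          | .box _ => true | _ => false) with hL
      have hLS : ∀ σ ∈ L, σ ∈ Fml.Sig φ := by
        intro σ hσ
        rcases List.mem_cons.1 hσ with rfl | hσ'
        · exact Fml.bot_mem_Sig φ
        · exact (Finset.mem_sdiff.1 (Finset.mem_toList.1 (List.mem_of_mem_filter hσ'))).1
      have hnd : ¬ Fml.FCtx x.1.1 (Fml.disj L) := by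
        intro hd
        rcases x.2.1.prime L hLS hd with hb | ⟨σ, hσL, hσΓ⟩
        · exact hbz (hle (hbot hb))
        · rcases List.mem_cons.1 hσL with rfl | hσ'
          · exact hbz (hle (hbot hσΓ))
          · have hmem := Finset.mem_toList.1 (List.mem_of_mem_filter hσ')
            have hpr := List.of_mem_filter hσ'
            cases σ with
            | box χ =>
              exact (Finset.mem_sdiff.1 hmem).2 (hle (hbox χ hσΓ).2)
            | var p => simp at hpr
            | bot => simp at hpr
            | and α β => simp at hpr
            | or α β => simp at hpr
            | imp α β => simp at hpr
            | dia α => simp at hpr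
      obtain ⟨Γ', hT', hsub', hnd'⟩ := Fml.lindenbaum x.2.1.sub hnd
      refine ⟨⟨(Γ', none), hT', fun χ h => nomatch h⟩, hsub', ?_, ?_, ?_⟩
      · intro χ hχ
        by_cases hz : Fml.box χ ∈ z.1.1
        · exact ⟨Fml.thy_unbox z.2.1 hz, hz⟩
        · exfalso
          have hmem : Fml.box χ ∈ L := by
            refine List.mem_cons_of_mem _ (List.mem_filter.2 ⟨?_, rfl⟩)
            exact Finset.mem_toList.2 (Finset.mem_sdiff.2 ⟨hT'.sub hχ, hz⟩)
          exact hnd' (Fml.fctx_mp (Fml.fctx_prv (Fml.disj_mem hmem)) (Fml.fctx_mem hχ))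
      · intro hb
        exfalso
        have hmem : Fml.bot ∈ L := List.mem_cons_self
        exact hnd' (Fml.fctx_mp (Fml.fctx_prv (Fml.disj_mem hmem)) (Fml.fctx_mem hb))
      · exact fun χ h => nomatch h

theorem nmodel_finite (φ : Fml) : Finite (NModel φ).W := by
  classical
  have hfin : Set.Finite {x : Finset Fml × Option Fml |
      Fml.IsTheory (Fml.Sig φ) x.1 ∧
      ∀ χ, x.2 = some χ → Fml.dia χ ∈ Fml.Sig φ ∧ Fml.dia χ ∉ x.1} := by
    apply Set.Finite.subset
      (((Fml.Sig φ).powerset ×ˢ insert none ((Fml.Sig φ).image some)).finite_toSet)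
    rintro ⟨Γ, c⟩ ⟨hT, hc⟩
    simp only [Finset.coe_mem, Finset.mem_coe, Finset.mem_product, Finset.mem_powerset,
      Finset.mem_insert, Finset.mem_image]
    refine ⟨hT.sub, ?_⟩
    cases c with
    | none => exact Or.inl rfl
    | some χ =>
      exact Or.inr ⟨χ, Fml.Sig_dia (hc χ rfl).1, rfl⟩
  exact hfin.to_subtype


/-! ### The truth lemma -/

open Fml Fml.Prv in
theorem truth_lemma (φ : Fml) :
    ∀ (ψ : Fml), ψ ∈ Fml.Sig φ → ∀ x : (NModel φ).W,
      ((NModel φ).Sat ψ x ↔ ψ ∈ x.1.1) := by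
  intro ψ
  induction ψ with
  | var p =>
    intro hSg x
    constructor
    · intro h
      rcases h with h | h
      · exact h
      · exact x.2.1.bot_mem h hSg
    · exact Or.inl
  | bot => exact fun _ x => Iff.rfl
  | and α β ihα ihβ =>
    intro hSg x
    have hαS := Fml.Sig_and_left hSg
    have hβS := Fml.Sig_and_right hSg
    constructor
    · rintro ⟨ha, hb⟩
      exact x.2.1.ded _ hSg
        (and_intro_ctx (fctx_mem ((ihα hαS x).1 ha)) (fctx_mem ((ihβ hβS x).1 hb)))
    · intro h
      exact ⟨(ihα hαS x).2 (x.2.1.ded _ hαS (fctx_mp (fctx_prv ax_and_l) (fctx_mem h))),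
        (ihβ hβS x).2 (x.2.1.ded _ hβS (fctx_mp (fctx_prv ax_and_r) (fctx_mem h)))⟩
  | or α β ihα ihβ =>
    intro hSg x
    have hαS := Fml.Sig_or_left hSg
    have hβS := Fml.Sig_or_right hSg
    constructor
    · intro h
      rcases h with h | h
      · exact x.2.1.ded _ hSg (fctx_mp (fctx_prv ax_or_l) (fctx_mem ((ihα hαS x).1 h)))
      · exact x.2.1.ded _ hSg (fctx_mp (fctx_prv ax_or_r) (fctx_mem ((ihβ hβS x).1 h)))
    · intro h
      have hd : Fml.FCtx x.1.1 (Fml.disj [α, β]) := by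
        refine fctx_mp (fctx_prv ?_) (fctx_mem h)
        exact or_elim_ctx ax_or_l (imp_trans ax_or_l ax_or_r)
      rcases x.2.1.prime [α, β] (by
          intro σ hσ
          rcases List.mem_cons.1 hσ with rfl | hσ'
          · exact hαS
          · rcases List.mem_cons.1 hσ' with rfl | h0
            · exact hβS
            · exact absurd h0 (List.not_mem_nil)) hd with hb | ⟨σ, hσL, hσΓ⟩
      · exact Or.inl ((ihα hαS x).2 (x.2.1.bot_mem hb hαS))
      · rcases List.mem_cons.1 hσL with rfl | hσ'
        · exact Or.inl ((ihα hαS x).2 hσΓ)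
        · rcases List.mem_cons.1 hσ' with rfl | h0
          · exact Or.inr ((ihβ hβS x).2 hσΓ)
          · exact absurd h0 (List.not_mem_nil)
  | imp α β ihα ihβ =>
    intro hSg x
    have hαS := Fml.Sig_imp_left hSg
    have hβS := Fml.Sig_imp_right hSg
    constructor
    · intro h
      by_contra hn
      have hni : ¬ Fml.FCtx x.1.1 (α.imp β) := x.2.1.not_fctx hSg hn
      have hni' : ¬ Fml.FCtx (insert α x.1.1) β := fun hf => hni (Fml.fctx_insert_to hf)
      obtain ⟨Γ', hT', hsub', hnd'⟩ :=
        Fml.lindenbaum (Finset.insert_subset hαS x.2.1.sub) hni'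
      have hy : ∀ χ, (((Γ', none) : Finset Fml × Option Fml)).2 = some χ →
          Fml.dia χ ∈ Fml.Sig φ ∧ Fml.dia χ ∉ ((Γ', none) : Finset Fml × Option Fml).1 :=
        fun χ h => nomatch h
      set y : (NModel φ).W := ⟨(Γ', none), hT', hy⟩ with hydef
      have hle : (NModel φ).le x y := fun σ hσ => hsub' (Finset.mem_insert_of_mem hσ)
      have ha : (NModel φ).Sat α y := (ihα hαS y).2 (hsub' (Finset.mem_insert_self _ _))
      have hb := h y hle ha
      exact hnd' (fctx_mem ((ihβ hβS y).1 hb))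
    · intro h y hle ha
      have hαy := (ihα hαS y).1 ha
      have himp : (α.imp β) ∈ y.1.1 := hle h
      exact (ihβ hβS y).2 (y.2.1.ded _ hβS (fctx_mp (fctx_mem himp) (fctx_mem hαy)))
  | dia ψ ih =>
    intro hSg x
    have hψS := Fml.Sig_dia hSg
    constructor
    · -- Sat → mem
      intro h
      by_contra hn
      have hni : ¬ Fml.FCtx x.1.1 (Fml.dia ψ) := x.2.1.not_fctx hSg hn
      obtain ⟨Γ', hT', hsub', hnd'⟩ := Fml.lindenbaum x.2.1.sub hni
      have hdn' : Fml.dia ψ ∉ Γ' := fun hm => hnd' (fctx_mem hm)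
      set x' : (NModel φ).W := ⟨(Γ', some ψ), hT', fun χ hc => by
        obtain rfl := Option.some.inj hc; exact ⟨hSg, hdn'⟩⟩ with hx'def
      obtain ⟨y, hsq, hSy⟩ := h x' hsub'
      have hpers : y.1.2 = some ψ := hsq.2.2 ψ rfl
      have hdn : Fml.dia ψ ∉ y.1.1 := (y.2.2 ψ hpers).2
      exact hdn (Fml.thy_dia_of_mem y.2.1 ((ih hψS y).1 hSy) (y.2.2 ψ hpers).1)
    · -- mem → Sat
      intro h y hle
      have hdy : Fml.dia ψ ∈ y.1.1 := hle h
      cases hcy : y.1.2 with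
      | none =>
        refine ⟨⟨(Fml.Sig φ, none), Fml.isTheory_self _ (Fml.bot_mem_Sig φ),
          fun χ hc => nomatch hc⟩, ⟨?_, ?_, ?_⟩, ?_⟩
        · exact fun χ hb => ⟨Fml.Sig_box (y.2.1.sub hb), y.2.1.sub hb⟩
        · exact fun _ => Fml.bot_mem_Sig φ
        · intro χ hc; rw [hcy] at hc; exact nomatch hc
        · exact (ih hψS _).2 hψS
      | some χ =>
        obtain ⟨hchS, hchn⟩ := y.2.2 χ hcy
        have hkey := Fml.key_dia y.2.1 hdy hchS hchn
        obtain ⟨Δ, hTΔ, hsubΔ, hndΔ⟩ :=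
          Fml.lindenbaum (Finset.insert_subset hψS (Fml.unboxSet_sub y.2.1.sub)) hkey
        have hchΔ : Fml.dia χ ∉ Δ := fun hm => hndΔ (fctx_mem hm)
        refine ⟨⟨(Δ, some χ), hTΔ, fun χ' hc => by obtain rfl := Option.some.inj hc; exact ⟨hchS, hchΔ⟩⟩,
          ⟨?_, ?_, ?_⟩, ?_⟩
        · intro χ' hb
          exact ⟨hsubΔ (Finset.mem_insert_of_mem (Fml.mem_unboxSet_left hb)),
            hsubΔ (Finset.mem_insert_of_mem (Fml.mem_unboxSet_right hb))⟩
        · intro hb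
          exact absurd (y.2.1.bot_mem hb hchS) hchn
        · intro χ' hc
          rw [hcy] at hc
          obtain rfl := Option.some.inj hc
          rfl
        · exact (ih hψS _).2 (hsubΔ (Finset.mem_insert_self _ _))
  | box ψ ih =>
    intro hSg x
    have hψS := Fml.Sig_box hSg
    constructor
    · -- Sat → mem
      intro h
      by_contra hn
      have hkey := Fml.key_box x.2.1 hSg hn
      obtain ⟨Δ, hTΔ, hsubΔ, hndΔ⟩ := Fml.lindenbaum (Fml.unboxSet_sub x.2.1.sub) hkey
      have hψΔ : ψ ∉ Δ := fun hm => hndΔ (fctx_mem hm)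
      set z : (NModel φ).W := ⟨(Δ, none), hTΔ, fun χ hc => nomatch hc⟩ with hzdef
      set x' : (NModel φ).W := ⟨(x.1.1, none), x.2.1, fun χ hc => nomatch hc⟩ with hx'def
      have hsq : (NModel φ).sq x' z := by
        refine ⟨?_, ?_, ?_⟩
        · intro χ hb
          exact ⟨hsubΔ (Fml.mem_unboxSet_left hb), hsubΔ (Fml.mem_unboxSet_right hb)⟩
        · intro hb
          exact absurd (x.2.1.bot_mem hb hSg) hn
        · exact fun χ hc => nomatch hc
      have hz := h x' z (Finset.Subset.refl _) hsq
      exact hψΔ ((ih hψS z).1 hz)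
    · -- mem → Sat
      intro h u z hle hsq
      exact (ih hψS z).2 (hsq.1 ψ (hle h)).1

/-! ### From an arbitrary CS4 model to the finite canonical model -/

theorem sat_conj {M : KModel.{u}} :
    ∀ {L : List Fml} {w : M.W}, (∀ σ ∈ L, M.Sat σ w) → M.Sat (Fml.conj L) w
  | [], w, _ => fun v _ hb => hb
  | τ :: L, w, h =>
    ⟨h τ (List.mem_cons_self), sat_conj fun σ hσ => h σ (List.mem_cons_of_mem _ hσ)⟩

theorem sat_disj {M : KModel.{u}} :
    ∀ {L : List Fml} {w : M.W}, M.Sat (Fml.disj L) w →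
      w ∈ M.fallible ∨ ∃ σ ∈ L, M.Sat σ w
  | [], _, h => Or.inl h
  | τ :: L, w, h => by
    rcases h with h | h
    · exact Or.inr ⟨τ, List.mem_cons_self, h⟩
    · rcases sat_disj h with h' | ⟨σ, hσ, hs⟩
      · exact Or.inl h'
      · exact Or.inr ⟨σ, List.mem_cons_of_mem _ hσ, hs⟩

/-- Falsifiability transfers to the finite canonical model. -/
theorem fals_finite (φ : Fml) (M : KModel.{u}) (w : M.W) (hM : M.IsCS4)
    (hw : w ∉ M.fallible) (hns : ¬ M.Sat φ w) :
    ∃ (N : KModel.{0}) (v : N.W), N.IsCS4 ∧ Finite N.W ∧ v ∉ N.fallible ∧ ¬ N.Sat φ v := by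
  classical
  set Γ₀ : Finset Fml := (Fml.Sig φ).filter (fun ψ => M.Sat ψ w) with hΓ₀
  have hsat : ∀ σ ∈ Γ₀, M.Sat σ w := fun σ hσ => (Finset.mem_filter.1 hσ).2
  have hded : ∀ ψ, Fml.FCtx Γ₀ ψ → M.Sat ψ w := by
    intro ψ hf
    have hv := KModel.soundness hf M hM w
    exact hv w (hM.1.1 w) (sat_conj fun σ hσ => hsat σ (Finset.mem_toList.1 hσ))
  have hT : Fml.IsTheory (Fml.Sig φ) Γ₀ := by
    refine ⟨Finset.filter_subset _ _, ?_, ?_⟩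
    · intro ψ hψ hf
      exact Finset.mem_filter.2 ⟨hψ, hded ψ hf⟩
    · intro L hL hf
      rcases sat_disj (hded _ hf) with h | ⟨σ, hσ, hs⟩
      · exact absurd h hw
      · exact Or.inr ⟨σ, hσ, Finset.mem_filter.2 ⟨hL σ hσ, hs⟩⟩
  set x₀ : (NModel φ).W := ⟨(Γ₀, none), hT, fun χ hc => nomatch hc⟩ with hx₀
  refine ⟨NModel φ, x₀, nmodel_isCS4 φ, nmodel_finite φ, ?_, ?_⟩
  · intro hb
    exact hw (Finset.mem_filter.1 hb).2
  · intro hsatN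
    have := (truth_lemma φ φ (Fml.self_mem_Sig φ) x₀).1 hsatN
    exact hns (Finset.mem_filter.1 this).2

/-- **The finite frame property for CS4.** If an `L`-formula `φ` is falsifiable
(respectively, satisfiable) on some CS4 frame, then `φ` is falsifiable
(respectively, satisfiable) on some CS4 frame whose set of worlds is finite. -/
theorem cs4_finite_frame_property (φ : Fml) :
    ((∃ (M : KModel.{u}) (w : M.W), M.IsCS4 ∧ w ∉ M.fallible ∧ ¬ M.Sat φ w) →
      ∃ (N : KModel.{0}) (v : N.W), N.IsCS4 ∧ Finite N.W ∧ v ∉ N.fallible ∧ ¬ N.Sat φ v) ∧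
    ((∃ (M : KModel.{u}) (w : M.W), M.IsCS4 ∧ w ∉ M.fallible ∧ M.Sat φ w) →
      ∃ (N : KModel.{0}) (v : N.W), N.IsCS4 ∧ Finite N.W ∧ v ∉ N.fallible ∧ N.Sat φ v) := by
  constructor
  · rintro ⟨M, w, hM, hw, hns⟩
    exact fals_finite φ M w hM hw hns
  · rintro ⟨M, w, hM, hw, hs⟩
    have hns : ¬ M.Sat (φ.imp Fml.bot) w := fun h => hw (h w (hM.1.1 w) hs)
    obtain ⟨N, v, hN, hfin, hv, hnv⟩ := fals_finite (φ.imp Fml.bot) M w hM hw hns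
    have : ∃ v', N.le v v' ∧ N.Sat φ v' ∧ ¬ N.Sat Fml.bot v' := by
      by_contra hc
      push_neg at hc
      exact hnv hc
    obtain ⟨v', hle, hsφ, hnb⟩ := this
    exact ⟨N, v', hN, hfin, hnb, hsφ⟩
end

section
/- If an L-formula φ is falsifiable (respectively, satisfiable) on some GS4 frame, then φ is falsifiable (respectively, satisfiable) on some GS4 frame whose set of worlds is finite. That is, the logic GS4 has the finite birelational frame property. -/
universe u

namespace GS4FMP

/-- The set of subformulas of a formula. -/
def sub : Fml → Finset Fml
  | .var p => {.var p}
  | .bot => {.bot}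
  | .and a b => insert (.and a b) (sub a ∪ sub b)
  | .or a b => insert (.or a b) (sub a ∪ sub b)
  | .imp a b => insert (.imp a b) (sub a ∪ sub b)
  | .dia a => insert (.dia a) (sub a)
  | .box a => insert (.box a) (sub a)

lemma self_mem_sub (φ : Fml) : φ ∈ sub φ := by
  cases φ <;> simp [sub]

lemma sub_sub : ∀ {φ ψ : Fml}, ψ ∈ sub φ → sub ψ ⊆ sub φ := by
  intro φ
  induction φ with
  | var p => intro ψ h; simp [sub] at h; subst h; simp [sub]
  | bot => intro ψ h; simp [sub] at h; subst h; simp [sub]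
  | and a b iha ihb =>
      intro ψ h; simp only [sub, Finset.mem_insert, Finset.mem_union] at h
      rcases h with h | h | h
      · subst h; exact fun x hx => hx
      · exact (iha h).trans (by intro x hx; simp [sub, Finset.mem_union, hx])
      · exact (ihb h).trans (by intro x hx; simp [sub, Finset.mem_union, hx])
  | or a b iha ihb =>
      intro ψ h; simp only [sub, Finset.mem_insert, Finset.mem_union] at h
      rcases h with h | h | h
      · subst h; exact fun x hx => hx
      · exact (iha h).trans (by intro x hx; simp [sub, Finset.mem_union, hx])
      · exact (ihb h).trans (by intro x hx; simp [sub, Finset.mem_union, hx])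
  | imp a b iha ihb =>
      intro ψ h; simp only [sub, Finset.mem_insert, Finset.mem_union] at h
      rcases h with h | h | h
      · subst h; exact fun x hx => hx
      · exact (iha h).trans (by intro x hx; simp [sub, Finset.mem_union, hx])
      · exact (ihb h).trans (by intro x hx; simp [sub, Finset.mem_union, hx])
  | dia a iha =>
      intro ψ h; simp only [sub, Finset.mem_insert] at h
      rcases h with h | h
      · subst h; exact fun x hx => hx
      · exact (iha h).trans (by intro x hx; simp [sub, hx])
  | box a iha =>
      intro ψ h; simp only [sub, Finset.mem_insert] at h
      rcases h with h | h
      · subst h; exact fun x hx => hx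
      · exact (iha h).trans (by intro x hx; simp [sub, hx])

lemma mem_sub_and_left {φ a b : Fml} (h : Fml.and a b ∈ sub φ) : a ∈ sub φ :=
  sub_sub h (by simp [sub, self_mem_sub])
lemma mem_sub_and_right {φ a b : Fml} (h : Fml.and a b ∈ sub φ) : b ∈ sub φ :=
  sub_sub h (by simp [sub, self_mem_sub])
lemma mem_sub_or_left {φ a b : Fml} (h : Fml.or a b ∈ sub φ) : a ∈ sub φ :=
  sub_sub h (by simp [sub, self_mem_sub])
lemma mem_sub_or_right {φ a b : Fml} (h : Fml.or a b ∈ sub φ) : b ∈ sub φ :=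
  sub_sub h (by simp [sub, self_mem_sub])
lemma mem_sub_imp_left {φ a b : Fml} (h : Fml.imp a b ∈ sub φ) : a ∈ sub φ :=
  sub_sub h (by simp [sub, self_mem_sub])
lemma mem_sub_imp_right {φ a b : Fml} (h : Fml.imp a b ∈ sub φ) : b ∈ sub φ :=
  sub_sub h (by simp [sub, self_mem_sub])
lemma mem_sub_dia {φ a : Fml} (h : Fml.dia a ∈ sub φ) : a ∈ sub φ :=
  sub_sub h (by simp [sub, self_mem_sub])
lemma mem_sub_box {φ a : Fml} (h : Fml.box a ∈ sub φ) : a ∈ sub φ :=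
  sub_sub h (by simp [sub, self_mem_sub])

end GS4FMP
namespace GS4FMP

section Core

variable (M : KModel.{u}) (φ : Fml)

/-- The type of a world: the subformulas of `φ` true at it. -/
def tau (u : M.W) : Set Fml := {ψ | ψ ∈ sub φ ∧ M.Sat ψ u}

/-- The chain of types realized in the `≼`-cone of a world. -/
def TT (u : M.W) : Set (Set Fml) := {t | ∃ u', M.le u u' ∧ t = tau M φ u'}

/-- The worlds of the finite model: realized cone-chains. -/
def Wor : Set (Set (Set Fml)) := {C | ∃ u, C = TT M φ u}

/-- The intuitionistic order on the finite model: up-closed subsets. -/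
def leN (C D : Set (Set Fml)) : Prop :=
  D ⊆ C ∧ ∀ s ∈ C, ∀ t ∈ D, t ⊆ s → s ∈ D

/-- One step of the modal relation on the finite model. -/
def sq1 (C D : Set (Set Fml)) : Prop :=
  ∃ w v, M.sq w v ∧ C = TT M φ w ∧ D = TT M φ v

/-- The finite model. -/
def N : KModel.{0} where
  W := ↥(Wor M φ)
  fallible := ∅
  le C D := leN C.1 D.1
  sq C D := Relation.ReflTransGen (sq1 M φ) C.1 D.1
  val p := {C | Fml.var p ∈ ⋂₀ C.1}

variable {M φ}

lemma leN_refl (C : Set (Set Fml)) : leN C C :=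
  ⟨fun _ h => h, fun _ hs _ _ _ => hs⟩

lemma leN_trans {C D E : Set (Set Fml)} (h1 : leN C D) (h2 : leN D E) : leN C E :=
  ⟨h2.1.trans h1.1, fun s hs t ht hts => h2.2 s (h1.2 s hs t (h2.1 ht) hts) t ht hts⟩

variable (hM : M.IsGS4)
include hM

lemma persist :
    ∀ (ψ : Fml) {u v : M.W}, M.le u v → M.Sat ψ u → M.Sat ψ v := by
  obtain ⟨⟨⟨⟨hr, htr, hsr, hstr, hfle, hfsq, hval, hfval⟩, hback⟩, hforth, hinf⟩, hlin⟩ := id hM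
  intro ψ
  induction ψ with
  | var p => intro u v huv h; exact hval p u v h huv
  | bot => intro u v huv h; exact hfle u v h huv
  | and a b iha ihb => intro u v huv h; exact ⟨iha huv h.1, ihb huv h.2⟩
  | or a b iha ihb =>
      intro u v huv h
      exact h.elim (fun h => Or.inl (iha huv h)) (fun h => Or.inr (ihb huv h))
  | imp a b iha ihb => intro u v huv h x hvx hax; exact h x (htr _ _ _ huv hvx) hax
  | dia a ih => intro u v huv h x hvx; exact h x (htr _ _ _ huv hvx)
  | box a ih => intro u v huv h x y hvx hxy; exact h x y (htr _ _ _ huv hvx) hxy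

lemma tau_mono {u v : M.W} (huv : M.le u v) : tau M φ u ⊆ tau M φ v :=
  fun ψ hψ => ⟨hψ.1, persist hM ψ huv hψ.2⟩

lemma tau_mem_TT (u : M.W) : tau M φ u ∈ TT M φ u :=
  ⟨u, hM.1.1.1.1 u, rfl⟩

lemma TT_min (u : M.W) : ⋂₀ TT M φ u = tau M φ u := by
  apply Set.Subset.antisymm
  · exact Set.sInter_subset_of_mem (tau_mem_TT hM u)
  · intro ψ hψ t ht
    obtain ⟨u', huu', rfl⟩ := ht
    exact tau_mono hM huu' hψ

/-- `TT` is monotone for `leN`. -/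
lemma le_TT_TT {a b : M.W} (hab : M.le a b) : leN (TT M φ a) (TT M φ b) := by
  obtain ⟨⟨⟨⟨hr, htr, hsr, hstr, hfle, hfsq, hval, hfval⟩, hback⟩, hforth, hinf⟩, hlin⟩ := id hM
  constructor
  · rintro t ⟨c, hbc, rfl⟩
    exact ⟨c, htr _ _ _ hab hbc, rfl⟩
  · rintro s ⟨c, hac, rfl⟩ t ⟨d, hbd, rfl⟩ hts
    rcases hlin a c b hac hab with hcb | hbc
    · -- c ≼ b : then tau c = tau b
      have h1 : tau M φ c ⊆ tau M φ b := tau_mono hM hcb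
      have h2 : tau M φ b ⊆ tau M φ d := tau_mono hM hbd
      have h3 : tau M φ b = tau M φ c := Set.Subset.antisymm (h2.trans hts) h1
      exact ⟨b, hr b, h3.symm⟩
    · exact ⟨c, hbc, rfl⟩

/-- Worlds above `TT u` in the finite model are cones of worlds above `u`. -/
lemma leN_dest {u : M.W} {D : Set (Set Fml)} (hD : D ∈ Wor M φ)
    (h : leN (TT M φ u) D) : ∃ u', M.le u u' ∧ D = TT M φ u' := by
  obtain ⟨⟨⟨⟨hr, htr, hsr, hstr, hfle, hfsq, hval, hfval⟩, hback⟩, hforth, hinf⟩, hlin⟩ := id hM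
  obtain ⟨w, rfl⟩ := hD
  have hw : tau M φ w ∈ TT M φ u := h.1 (tau_mem_TT hM w)
  obtain ⟨u', huu', hww⟩ := hw
  refine ⟨u', huu', ?_⟩
  apply Set.Subset.antisymm
  · rintro t ⟨b, hwb, rfl⟩
    have htu : tau M φ b ∈ TT M φ u := h.1 ⟨b, hwb, rfl⟩
    obtain ⟨c, huc, hc⟩ := htu
    rcases hlin u u' c huu' huc with h1 | h1
    · exact hc ▸ ⟨c, h1, rfl⟩
    · -- c ≼ u' : tau b = tau c ⊆ tau u' and tau u' = tau w ⊆ tau b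
      have h2 : tau M φ b ⊆ tau M φ u' := hc ▸ tau_mono hM h1
      have h3 : tau M φ u' ⊆ tau M φ b := hww ▸ tau_mono hM hwb
      have : tau M φ b = tau M φ u' := Set.Subset.antisymm h2 h3
      exact this ▸ ⟨u', hr u', rfl⟩
  · rintro t ⟨a, hu'a, rfl⟩
    have hta : tau M φ a ∈ TT M φ u := ⟨a, htr _ _ _ huu' hu'a, rfl⟩
    have hwD : tau M φ w ∈ TT M φ w := tau_mem_TT hM w
    have hsub : tau M φ w ⊆ tau M φ a := hww ▸ tau_mono hM hu'a
    exact h.2 _ hta _ hwD hsub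

end Core

end GS4FMP
namespace GS4FMP

section Modal

variable {M : KModel.{u}} {φ : Fml} (hM : M.IsGS4)

/-- The type of a world characterizes satisfaction of subformulas. -/
lemma mem_tau_iff {ψ : Fml} (hψ : ψ ∈ sub φ) {u : M.W} :
    ψ ∈ tau M φ u ↔ M.Sat ψ u := by
  constructor
  · exact fun h => h.2
  · exact fun h => ⟨hψ, h⟩

lemma dia_self {ψ : Fml} (hψ : Fml.dia ψ ∈ sub φ) {u : M.W}
    (hM : M.IsGS4) (h : M.Sat ψ u) : Fml.dia ψ ∈ tau M φ u := by
  obtain ⟨⟨⟨⟨hr, htr, hsr, hstr, hfle, hfsq, hval, hfval⟩, hback⟩, hforth, hinf⟩, hlin⟩ := id hM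
  refine ⟨hψ, fun x hux => ⟨x, hsr x, persist hM ψ hux h⟩⟩

include hM

/-- `□`-formulas propagate along `⊑`. -/
lemma box_step {w v : M.W} (hwv : M.sq w v) {ψ : Fml}
    (h : Fml.box ψ ∈ tau M φ w) :
    ψ ∈ tau M φ v ∧ Fml.box ψ ∈ tau M φ v := by
  obtain ⟨⟨⟨⟨hr, htr, hsr, hstr, hfle, hfsq, hval, hfval⟩, hback⟩, hforth, hinf⟩, hlin⟩ := id hM
  obtain ⟨hmem, hsat⟩ := h
  constructor
  · exact ⟨mem_sub_box hmem, hsat w v (hr w) hwv⟩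
  · refine ⟨hmem, fun a b hva hab => ?_⟩
    obtain ⟨w', hww', hw'a⟩ := hback w v a hwv hva
    exact hsat w' b hww' (hstr _ _ _ hw'a hab)

/-- `◇`-formulas reflect along `⊑`. -/
lemma dia_step {w v : M.W} (hwv : M.sq w v) {ψ : Fml}
    (h : Fml.dia ψ ∈ tau M φ v) : Fml.dia ψ ∈ tau M φ w := by
  obtain ⟨⟨⟨⟨hr, htr, hsr, hstr, hfle, hfsq, hval, hfval⟩, hback⟩, hforth, hinf⟩, hlin⟩ := id hM
  obtain ⟨hmem, hsat⟩ := h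
  refine ⟨hmem, fun a hwa => ?_⟩
  obtain ⟨v', hvv', hav'⟩ := hforth w a v hwa hwv
  obtain ⟨b, hv'b, hb⟩ := persist hM (Fml.dia ψ) hvv' hsat v' (hr v')
  exact ⟨b, hstr _ _ _ hav' hv'b, hb⟩

lemma box_chain {C D : Set (Set Fml)} (hC : C ∈ Wor M φ)
    (h : Relation.ReflTransGen (sq1 M φ) C D) {ψ : Fml}
    (hb : Fml.box ψ ∈ ⋂₀ C) : ψ ∈ ⋂₀ D ∧ Fml.box ψ ∈ ⋂₀ D := by
  induction h with
  | refl =>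
      obtain ⟨u, rfl⟩ := hC
      rw [TT_min hM] at hb ⊢
      obtain ⟨⟨⟨⟨hr, htr, hsr, hstr, hfle, hfsq, hval, hfval⟩, hback⟩, hforth, hinf⟩, hlin⟩ := id hM
      exact ⟨⟨mem_sub_box hb.1, hb.2 u u (hr u) (hsr u)⟩, hb⟩
  | tail hab hbc ih =>
      obtain ⟨hψ, hbψ⟩ := ih
      obtain ⟨w, v, hwv, rfl, rfl⟩ := hbc
      rw [TT_min hM] at hbψ ⊢
      exact box_step hM hwv hbψ

lemma dia_chain {C D : Set (Set Fml)}
    (h : Relation.ReflTransGen (sq1 M φ) C D) {ψ : Fml}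
    (hd : Fml.dia ψ ∈ ⋂₀ D) : Fml.dia ψ ∈ ⋂₀ C := by
  induction h with
  | refl => exact hd
  | tail hab hbc ih =>
      obtain ⟨w, v, hwv, rfl, rfl⟩ := hbc
      rw [TT_min hM] at hd
      apply ih
      rw [TT_min hM]
      exact dia_step hM hwv hd

/-- Back–up confluence at the level of cone-chains. -/
lemma backupN {C D : Set (Set Fml)} (h : Relation.ReflTransGen (sq1 M φ) C D) :
    ∀ D', D ∈ Wor M φ → D' ∈ Wor M φ → leN D D' →
      ∃ C', C' ∈ Wor M φ ∧ leN C C' ∧ Relation.ReflTransGen (sq1 M φ) C' D' := by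
  induction h with
  | refl => exact fun D' _ hD' hle => ⟨D', hD', hle, Relation.ReflTransGen.refl⟩
  | tail hab hbc ih =>
      intro D' hD hD' hle
      obtain ⟨w, v, hwv, hB, rfl⟩ := hbc
      obtain ⟨v', hvv', rfl⟩ := leN_dest hM hD' hle
      obtain ⟨⟨⟨⟨hr, htr, hsr, hstr, hfle, hfsq, hval, hfval⟩, hback⟩, hforth, hinf⟩, hlin⟩ := id hM
      obtain ⟨w', hww', hw'v'⟩ := hback w v v' hwv hvv'
      obtain ⟨C', hC', hCC', hsq⟩ := ih (TT M φ w') ⟨w, hB⟩ ⟨w', rfl⟩ (hB ▸ le_TT_TT hM hww')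
      exact ⟨C', hC', hCC', hsq.tail ⟨w', v', hw'v', rfl, rfl⟩⟩

/-- Forth–up confluence at the level of cone-chains. -/
lemma forthupN {C D : Set (Set Fml)} (h : Relation.ReflTransGen (sq1 M φ) C D) :
    ∀ C', C ∈ Wor M φ → C' ∈ Wor M φ → leN C C' →
      ∃ D', D' ∈ Wor M φ ∧ leN D D' ∧ Relation.ReflTransGen (sq1 M φ) C' D' := by
  induction h with
  | refl => exact fun C' _ hC' hle => ⟨C', hC', hle, Relation.ReflTransGen.refl⟩
  | tail hab hbc ih =>
      intro C' hC hC' hle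
      obtain ⟨b', hb', hbb', hsq⟩ := ih C' hC hC' hle
      obtain ⟨w, v, hwv, rfl, rfl⟩ := hbc
      obtain ⟨w', hww', rfl⟩ := leN_dest hM hb' hbb'
      obtain ⟨⟨⟨⟨hr, htr, hsr, hstr, hfle, hfsq, hval, hfval⟩, hback⟩, hforth, hinf⟩, hlin⟩ := id hM
      obtain ⟨v', hvv', hw'v'⟩ := hforth w w' v hww' hwv
      exact ⟨TT M φ v', ⟨v', rfl⟩, le_TT_TT hM hvv', hsq.tail ⟨w', v', hw'v', rfl, rfl⟩⟩

end Modal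

end GS4FMP
namespace GS4FMP

section Final

variable {M : KModel.{u}} {φ : Fml} (hM : M.IsGS4)
include hM

lemma leN_dest' {C D : (N M φ).W} {u : M.W} (hC : C.1 = TT M φ u)
    (h : (N M φ).le C D) : ∃ u', M.le u u' ∧ D.1 = TT M φ u' := by
  have h' : leN C.1 D.1 := h
  rw [hC] at h'
  exact leN_dest hM D.2 h'

lemma N_isGS4 : (N M φ).IsGS4 := by
  obtain ⟨⟨⟨⟨hr, htr, hsr, hstr, hfle, hfsq, hval, hfval⟩, hback⟩, hforth, hinf⟩, hlin⟩ := id hM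
  refine ⟨⟨⟨⟨?_, ?_, ?_, ?_, ?_, ?_, ?_, ?_⟩, ?_⟩, ?_, ?_⟩, ?_⟩
  · exact fun C => leN_refl C.1
  · exact fun C D E h1 h2 => leN_trans h1 h2
  · exact fun C => Relation.ReflTransGen.refl
  · exact fun C D E h1 h2 => h1.trans h2
  · exact fun C D h _ => h.elim
  · exact fun C D h _ => h.elim
  · intro p C D hC hle
    exact Set.sInter_subset_sInter hle.1 hC
  · exact fun p C h => h.elim
  · -- BackUp
    intro C D D' hsq hle
    obtain ⟨C', hC', hCC', hsq'⟩ := backupN hM hsq D'.1 D.2 D'.2 hle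
    exact ⟨⟨C', hC'⟩, hCC', hsq'⟩
  · -- ForthUp
    intro C C' D hle hsq
    obtain ⟨D', hD', hDD', hsq'⟩ := forthupN hM hsq C'.1 C.2 C'.2 hle
    exact ⟨⟨D', hD'⟩, hDD', hsq'⟩
  · -- Infallible
    rfl
  · -- UpLinear
    intro C D E h1 h2
    obtain ⟨u, hu⟩ := C.2
    obtain ⟨a, hua, hD⟩ := leN_dest' hM hu h1
    obtain ⟨b, hub, hE⟩ := leN_dest' hM hu h2
    rcases hlin u a b hua hub with h | h
    · exact Or.inl (show leN D.1 E.1 from hD ▸ hE ▸ le_TT_TT hM h)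
    · exact Or.inr (show leN E.1 D.1 from hD ▸ hE ▸ le_TT_TT hM h)

omit hM

lemma finiteN : Finite (N M φ).W := by
  have h2 : (𝒫 (𝒫 ((sub φ : Finset Fml) : Set Fml))).Finite :=
    ((sub φ).finite_toSet.powerset).powerset
  have h1 : Wor M φ ⊆ 𝒫 (𝒫 ((sub φ : Finset Fml) : Set Fml)) := by
    rintro C ⟨u, rfl⟩ t ⟨u', _, rfl⟩ ψ hψ
    exact hψ.1
  exact (h2.subset h1).to_subtype

include hM

lemma truth : ∀ (ψ : Fml), ψ ∈ sub φ → ∀ (C : (N M φ).W) (u : M.W), C.1 = TT M φ u →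
    ((N M φ).Sat ψ C ↔ M.Sat ψ u) := by
  obtain ⟨⟨⟨⟨hr, htr, hsr, hstr, hfle, hfsq, hval, hfval⟩, hback⟩, hforth, hinf⟩, hlin⟩ := id hM
  intro ψ
  induction ψ with
  | var p =>
      intro hψ C u hC
      show Fml.var p ∈ ⋂₀ C.1 ↔ _
      rw [hC, TT_min hM]
      exact mem_tau_iff hψ
  | bot =>
      intro hψ C u hC
      show C ∈ (∅ : Set (N M φ).W) ↔ u ∈ M.fallible
      rw [hinf]
      exact Iff.rfl
  | and a b iha ihb =>
      intro hψ C u hC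
      show ((N M φ).Sat a C ∧ (N M φ).Sat b C) ↔ (M.Sat a u ∧ M.Sat b u)
      rw [iha (mem_sub_and_left hψ) C u hC, ihb (mem_sub_and_right hψ) C u hC]
  | or a b iha ihb =>
      intro hψ C u hC
      show ((N M φ).Sat a C ∨ (N M φ).Sat b C) ↔ (M.Sat a u ∨ M.Sat b u)
      rw [iha (mem_sub_or_left hψ) C u hC, ihb (mem_sub_or_right hψ) C u hC]
  | imp a b iha ihb =>
      intro hψ C u hC
      constructor
      · intro h v huv hav
        have hle : (N M φ).le C ⟨TT M φ v, v, rfl⟩ :=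
          show leN C.1 (TT M φ v) from hC ▸ le_TT_TT hM huv
        exact (ihb (mem_sub_imp_right hψ) ⟨TT M φ v, v, rfl⟩ v rfl).1
          (h _ hle ((iha (mem_sub_imp_left hψ) ⟨TT M φ v, v, rfl⟩ v rfl).2 hav))
      · intro h C' hle hav
        obtain ⟨u', huu', hC'⟩ := leN_dest' hM hC hle
        exact (ihb (mem_sub_imp_right hψ) C' u' hC').2
          (h u' huu' ((iha (mem_sub_imp_left hψ) C' u' hC').1 hav))
  | dia a iha =>
      intro hψ C u hC
      have ha : a ∈ sub φ := mem_sub_dia hψ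
      constructor
      · intro hN
        by_contra hns
        simp only [KModel.Sat] at hns
        push_neg at hns
        obtain ⟨x, hux, hx⟩ := hns
        have hle : (N M φ).le C ⟨TT M φ x, x, rfl⟩ :=
          show leN C.1 (TT M φ x) from hC ▸ le_TT_TT hM hux
        obtain ⟨D, hsq, hD⟩ := hN _ hle
        obtain ⟨v₀, hv₀⟩ := D.2
        have haD : M.Sat a v₀ := (iha ha D v₀ hv₀).1 hD
        have h1 : Fml.dia a ∈ ⋂₀ D.1 := by
          rw [hv₀, TT_min hM]; exact dia_self hψ hM haD
        have h2 : Fml.dia a ∈ ⋂₀ (TT M φ x) := dia_chain hM hsq h1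
        rw [TT_min hM] at h2
        obtain ⟨y, hxy, hay⟩ := h2.2 x (hr x)
        exact hx y hxy hay
      · intro h C' hle
        obtain ⟨w, huw, hC'⟩ := leN_dest' hM hC hle
        obtain ⟨b, hwb, hab⟩ := persist hM _ huw h w (hr w)
        refine ⟨⟨TT M φ b, b, rfl⟩, ?_, ?_⟩
        · exact Relation.ReflTransGen.single ⟨w, b, hwb, hC', rfl⟩
        · exact (iha ha ⟨TT M φ b, b, rfl⟩ b rfl).2 hab
  | box a iha =>
      intro hψ C u hC
      have ha : a ∈ sub φ := mem_sub_box hψ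
      constructor
      · intro hN
        by_contra hns
        simp only [KModel.Sat] at hns
        push_neg at hns
        obtain ⟨x, y, hux, hxy, hay⟩ := hns
        have hle : (N M φ).le C ⟨TT M φ x, x, rfl⟩ :=
          show leN C.1 (TT M φ x) from hC ▸ le_TT_TT hM hux
        have hsq : (N M φ).sq ⟨TT M φ x, x, rfl⟩ ⟨TT M φ y, y, rfl⟩ :=
          Relation.ReflTransGen.single ⟨x, y, hxy, rfl, rfl⟩
        exact hay ((iha ha ⟨TT M φ y, y, rfl⟩ y rfl).1 (hN _ _ hle hsq))
      · intro h C' D hle hsq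
        obtain ⟨w, huw, hC'⟩ := leN_dest' hM hC hle
        have hb2 : Fml.box a ∈ ⋂₀ C'.1 := by
          rw [hC', TT_min hM]
          exact tau_mono hM huw ⟨hψ, h⟩
        have h3 := (box_chain hM C'.2 hsq hb2).1
        obtain ⟨v₀, hv₀⟩ := D.2
        rw [hv₀, TT_min hM] at h3
        exact (iha ha D v₀ hv₀).2 h3.2

omit hM

lemma main (M : KModel.{u}) (φ : Fml) (hM : M.IsGS4) (w : M.W) :
    ∃ (N' : KModel.{0}) (v : N'.W), N'.IsGS4 ∧ Finite N'.W ∧ v ∉ N'.fallible ∧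
      (N'.Sat φ v ↔ M.Sat φ w) :=
  ⟨N M φ, ⟨TT M φ w, w, rfl⟩, N_isGS4 hM, finiteN, Set.notMem_empty _,
    truth hM φ (self_mem_sub φ) _ w rfl⟩

end Final

end GS4FMP

/-- **The finite birelational frame property for GS4.** If an `L`-formula `φ` is
falsifiable (respectively, satisfiable) on some GS4 frame, then `φ` is falsifiable
(respectively, satisfiable) on some GS4 frame whose set of worlds is finite. -/
theorem gs4_finite_frame_property (φ : Fml) :
    ((∃ (M : KModel.{u}) (w : M.W), M.IsGS4 ∧ w ∉ M.fallible ∧ ¬ M.Sat φ w) →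
      ∃ (N : KModel.{0}) (v : N.W), N.IsGS4 ∧ Finite N.W ∧ v ∉ N.fallible ∧ ¬ N.Sat φ v) ∧
    ((∃ (M : KModel.{u}) (w : M.W), M.IsGS4 ∧ w ∉ M.fallible ∧ M.Sat φ w) →
      ∃ (N : KModel.{0}) (v : N.W), N.IsGS4 ∧ Finite N.W ∧ v ∉ N.fallible ∧ N.Sat φ v) := by
  constructor
  · rintro ⟨M, w, hM, hw, hsat⟩
    obtain ⟨N', v, h1, h2, h3, h4⟩ := GS4FMP.main M φ hM w
    exact ⟨N', v, h1, h2, h3, fun h => hsat (h4.1 h)⟩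
  · rintro ⟨M, w, hM, hw, hsat⟩
    obtain ⟨N', v, h1, h2, h3, h4⟩ := GS4FMP.main M φ hM w
    exact ⟨N', v, h1, h2, h3, h4.2 hsat⟩
end

section
/- For each Λ among IS4, S4I, GS4, and GS4c, and for every set Γ of L-formulas and every L-formula φ: Γ ⊨_Λ φ if and only if Γ ⊢_Λ φ, where ⊨_Λ denotes local semantic consequence on the class of Λ frames. In particular each of these logics is sound and strongly complete with respect to its class of frames. -/
universe u

/-- Hilbert-style derivability from intuitionistic propositional axiom schemes,
the S4 modal axiom schemes, an extra set `Ax` of axioms, modus ponens and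
necessitation.  Since all axioms are given as schemes, the resulting set of
formulas is closed under substitution. -/
inductive Deriv (Ax : Fml → Prop) : Fml → Prop where
  | ax {φ} : Ax φ → Deriv Ax φ
  | then₁ (φ ψ : Fml) : Deriv Ax (φ.imp (ψ.imp φ))
  | then₂ (φ ψ χ : Fml) :
      Deriv Ax ((φ.imp (ψ.imp χ)).imp ((φ.imp ψ).imp (φ.imp χ)))
  | andE₁ (φ ψ : Fml) : Deriv Ax ((φ.and ψ).imp φ)
  | andE₂ (φ ψ : Fml) : Deriv Ax ((φ.and ψ).imp ψ)
  | andI (φ ψ : Fml) : Deriv Ax (φ.imp (ψ.imp (φ.and ψ)))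
  | orI₁ (φ ψ : Fml) : Deriv Ax (φ.imp (φ.or ψ))
  | orI₂ (φ ψ : Fml) : Deriv Ax (ψ.imp (φ.or ψ))
  | orE (φ ψ χ : Fml) :
      Deriv Ax ((φ.imp χ).imp ((ψ.imp χ).imp ((φ.or ψ).imp χ)))
  | exfalso (φ : Fml) : Deriv Ax (Fml.bot.imp φ)
  | kBox (φ ψ : Fml) : Deriv Ax (((φ.imp ψ).box).imp ((φ.box).imp (ψ.box)))
  | kDia (φ ψ : Fml) : Deriv Ax (((φ.imp ψ).box).imp ((φ.dia).imp (ψ.dia)))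
  | tBox (φ : Fml) : Deriv Ax ((φ.box).imp φ)
  | tDia (φ : Fml) : Deriv Ax (φ.imp (φ.dia))
  | fourBox (φ : Fml) : Deriv Ax ((φ.box).imp ((φ.box).box))
  | fourDia (φ : Fml) : Deriv Ax (((φ.dia).dia).imp (φ.dia))
  | mp {φ ψ} : Deriv Ax (φ.imp ψ) → Deriv Ax φ → Deriv Ax ψ
  | nec {φ} : Deriv Ax φ → Deriv Ax (φ.box)

/-- The axiom scheme DP: `◇(p∨q) → ◇p ∨ ◇q`. -/
def AxDP (χ : Fml) : Prop :=
  ∃ φ ψ : Fml, χ = ((φ.or ψ).dia).imp ((φ.dia).or (ψ.dia))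

/-- The axiom N: `¬◇⊥`, where `¬φ` abbreviates `φ → ⊥`. -/
def AxN (χ : Fml) : Prop := χ = (Fml.bot.dia).imp Fml.bot

/-- The axiom scheme FS2: `(◇p → □q) → □(p → q)`. -/
def AxFS2 (χ : Fml) : Prop :=
  ∃ φ ψ : Fml, χ = ((φ.dia).imp (ψ.box)).imp ((φ.imp ψ).box)

/-- The axiom scheme CD: `□(p∨q) → □p ∨ ◇q`. -/
def AxCD (χ : Fml) : Prop :=
  ∃ φ ψ : Fml, χ = ((φ.or ψ).box).imp ((φ.box).or (ψ.dia))

/-- The axiom scheme GD: `(p→q) ∨ (q→p)`. -/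
def AxGD (χ : Fml) : Prop :=
  ∃ φ ψ : Fml, χ = (φ.imp ψ).or (ψ.imp φ)

/-- The logic CS4. -/
def CS4 : Fml → Prop := Deriv (fun _ => False)

/-- The logic IS4 = CS4 + DP + N + FS2. -/
def IS4 : Fml → Prop := Deriv (fun χ => AxDP χ ∨ AxN χ ∨ AxFS2 χ)

/-- The logic S4I = CS4 + DP + N + CD. -/
def S4I : Fml → Prop := Deriv (fun χ => AxDP χ ∨ AxN χ ∨ AxCD χ)

/-- The logic GS4 = IS4 + GD. -/
def GS4 : Fml → Prop := Deriv (fun χ => AxDP χ ∨ AxN χ ∨ AxFS2 χ ∨ AxGD χ)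

/-- The logic GS4c = GS4 + CD. -/
def GS4c : Fml → Prop :=
  Deriv (fun χ => AxDP χ ∨ AxN χ ∨ AxFS2 χ ∨ AxGD χ ∨ AxCD χ)

/-- Conjunction of a finite list of formulas (the empty conjunction is `⊥ → ⊥`). -/
def conjList (l : List Fml) : Fml := l.foldr Fml.and (Fml.bot.imp Fml.bot)

/-- Syntactic consequence: `Γ ⊢_Λ φ` iff `⋀Γ' → φ ∈ Λ` for some finite `Γ' ⊆ Γ`. -/
def SynConseq (L : Fml → Prop) (Γ : Set Fml) (φ : Fml) : Prop :=
  ∃ l : List Fml, (∀ ψ ∈ l, ψ ∈ Γ) ∧ L ((conjList l).imp φ)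

/-- Local semantic consequence on the class of models satisfying `C`: at every
infallible world of every model of the class, if all formulas of `Γ` are
satisfied then so is `φ`. -/
def SemConseq (C : KModel.{u} → Prop) (Γ : Set Fml) (φ : Fml) : Prop :=
  ∀ M : KModel.{u}, C M → ∀ w : M.W, w ∉ M.fallible →
    (∀ ψ ∈ Γ, M.Sat ψ w) → M.Sat φ w

/-! ### Auxiliary development for the completeness proof -/

namespace RegCompl

open Fml

variable {Ax : Fml → Prop}

/-! #### Propositional combinators -/

theorem dk {ψ : Fml} (h : Deriv Ax ψ) (φ : Fml) : Deriv Ax (φ.imp ψ) :=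
  (Deriv.then₁ ψ φ).mp h

theorem did (φ : Fml) : Deriv Ax (φ.imp φ) :=
  ((Deriv.then₂ φ (φ.imp φ) φ).mp (Deriv.then₁ φ (φ.imp φ))).mp (Deriv.then₁ φ φ)

theorem dmp2 {φ ψ χ : Fml} (h₁ : Deriv Ax (φ.imp (ψ.imp χ))) (h₂ : Deriv Ax (φ.imp ψ)) :
    Deriv Ax (φ.imp χ) :=
  ((Deriv.then₂ φ ψ χ).mp h₁).mp h₂

theorem dcomp {φ ψ χ : Fml} (h₁ : Deriv Ax (φ.imp ψ)) (h₂ : Deriv Ax (ψ.imp χ)) :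
    Deriv Ax (φ.imp χ) :=
  dmp2 (dk h₂ φ) h₁

theorem imp_swap {φ ψ χ : Fml} (h : Deriv Ax (φ.imp (ψ.imp χ))) :
    Deriv Ax (ψ.imp (φ.imp χ)) :=
  dcomp (Deriv.then₁ ψ φ) ((Deriv.then₂ φ ψ χ).mp h)

theorem imp2_comp {a b c d : Fml} (h : Deriv Ax (a.imp (b.imp c)))
    (g : Deriv Ax (c.imp d)) : Deriv Ax (a.imp (b.imp d)) :=
  dcomp h ((Deriv.then₂ b c d).mp (dk g b))

theorem curry {a b c : Fml} (h : Deriv Ax ((a.and b).imp c)) :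
    Deriv Ax (a.imp (b.imp c)) :=
  imp2_comp (Deriv.andI a b) h

theorem uncurry {a b c : Fml} (h : Deriv Ax (a.imp (b.imp c))) :
    Deriv Ax ((a.and b).imp c) :=
  dmp2 (dcomp (Deriv.andE₁ a b) h) (Deriv.andE₂ a b)

theorem imp_and_intro {a b c : Fml} (h₁ : Deriv Ax (c.imp a)) (h₂ : Deriv Ax (c.imp b)) :
    Deriv Ax (c.imp (a.and b)) :=
  dmp2 (dmp2 (dk (Deriv.andI a b) c) h₁) h₂

theorem and_mono {a a' b b' : Fml} (h₁ : Deriv Ax (a.imp a')) (h₂ : Deriv Ax (b.imp b')) :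
    Deriv Ax ((a.and b).imp (a'.and b')) :=
  imp_and_intro (dcomp (Deriv.andE₁ a b) h₁) (dcomp (Deriv.andE₂ a b) h₂)

theorem or_elim_d {a b c : Fml} (h₁ : Deriv Ax (a.imp c)) (h₂ : Deriv Ax (b.imp c)) :
    Deriv Ax ((a.or b).imp c) :=
  ((Deriv.orE a b c).mp h₁).mp h₂

theorem or_mono {a a' b b' : Fml} (h₁ : Deriv Ax (a.imp a')) (h₂ : Deriv Ax (b.imp b')) :
    Deriv Ax ((a.or b).imp (a'.or b')) :=
  or_elim_d (dcomp h₁ (Deriv.orI₁ a' b')) (dcomp h₂ (Deriv.orI₂ a' b'))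

theorem imp_antitone {a b c : Fml} (h : Deriv Ax (a.imp b)) :
    Deriv Ax ((b.imp c).imp (a.imp c)) :=
  imp_swap (dcomp h (imp_swap (did (b.imp c))))

theorem imp_mono_right {a b c : Fml} (h : Deriv Ax (b.imp c)) :
    Deriv Ax ((a.imp b).imp (a.imp c)) :=
  (Deriv.then₂ a b c).mp (dk h a)

/-! #### Conjunctions of lists -/

theorem conjList_nil : conjList [] = Fml.bot.imp Fml.bot := rfl

theorem conjList_cons (a : Fml) (l : List Fml) :
    conjList (a :: l) = a.and (conjList l) := rfl

theorem d_conj_nil : Deriv Ax (conjList []) := Deriv.exfalso Fml.bot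

theorem conj_mem {l : List Fml} {ψ : Fml} (h : ψ ∈ l) :
    Deriv Ax ((conjList l).imp ψ) := by
  induction l with
  | nil => exact absurd h List.not_mem_nil
  | cons a l ih =>
    rcases List.mem_cons.mp h with h | h
    · subst h; exact Deriv.andE₁ _ _
    · exact dcomp (Deriv.andE₂ a (conjList l)) (ih h)

theorem imp_conj {χ : Fml} {l : List Fml} (h : ∀ ψ ∈ l, Deriv Ax (χ.imp ψ)) :
    Deriv Ax (χ.imp (conjList l)) := by
  induction l with
  | nil => exact dk d_conj_nil χ
  | cons a l ih =>
    exact imp_and_intro (h a (List.mem_cons_self))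
      (ih fun ψ hψ => h ψ (List.mem_cons_of_mem a hψ))

theorem conj_mono {l l' : List Fml} (h : ∀ ψ ∈ l, ψ ∈ l') :
    Deriv Ax ((conjList l').imp (conjList l)) :=
  imp_conj fun ψ hψ => conj_mem (h ψ hψ)

/-! #### Deducibility from a set -/

/-- `Ded Ax Γ φ`: `φ` is deducible from `Γ` in the logic axiomatised by `Ax`. -/
def Ded (Ax : Fml → Prop) (Γ : Set Fml) (φ : Fml) : Prop := SynConseq (Deriv Ax) Γ φ

theorem ded_mem {Γ : Set Fml} {φ : Fml} (h : φ ∈ Γ) : Ded Ax Γ φ :=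
  ⟨[φ], by simpa using h, conj_mem (List.mem_cons_self)⟩

theorem ded_thm {Γ : Set Fml} {φ : Fml} (h : Deriv Ax φ) : Ded Ax Γ φ :=
  ⟨[], by simp, dk h _⟩

theorem ded_mono {Γ Γ' : Set Fml} {φ : Fml} (hs : Γ ⊆ Γ') (h : Ded Ax Γ φ) : Ded Ax Γ' φ :=
  ⟨h.choose, fun ψ hψ => hs (h.choose_spec.1 ψ hψ), h.choose_spec.2⟩

theorem ded_mp {Γ : Set Fml} {φ ψ : Fml} (h₁ : Ded Ax Γ (φ.imp ψ)) (h₂ : Ded Ax Γ φ) :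
    Ded Ax Γ ψ := by
  obtain ⟨l₁, hl₁, hd₁⟩ := h₁
  obtain ⟨l₂, hl₂, hd₂⟩ := h₂
  refine ⟨l₁ ++ l₂, ?_, ?_⟩
  · intro χ hχ
    rcases List.mem_append.mp hχ with h | h
    · exact hl₁ χ h
    · exact hl₂ χ h
  · exact dmp2 (dcomp (conj_mono fun ψ' h => List.mem_append_left _ h) hd₁)
      (dcomp (conj_mono fun ψ' h => List.mem_append_right _ h) hd₂)

/-- The deduction theorem. -/
theorem ded_deduction {Γ : Set Fml} {φ ψ : Fml} (h : Ded Ax (insert ψ Γ) φ) :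
    Ded Ax Γ (ψ.imp φ) := by
  classical
  obtain ⟨l, hl, hd⟩ := h
  refine ⟨l.filter (· ≠ ψ), ?_, ?_⟩
  · intro χ hχ
    have := List.of_mem_filter hχ
    have hne : χ ≠ ψ := by simpa using this
    rcases hl χ (List.mem_of_mem_filter hχ) with h | h
    · exact absurd h hne
    · exact h
  · have key : Deriv Ax ((ψ.and (conjList (l.filter (· ≠ ψ)))).imp (conjList l)) := by
      refine imp_conj fun χ hχ => ?_
      by_cases hc : χ = ψ
      · subst hc; exact Deriv.andE₁ _ _
      · refine dcomp (Deriv.andE₂ _ _) (conj_mem ?_)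
        exact List.mem_filter.mpr ⟨hχ, by simpa using hc⟩
    exact imp_swap (curry (dcomp key hd))

end RegCompl

namespace RegCompl

variable {Ax : Fml → Prop}

/-! #### Prime theories and the Lindenbaum lemma -/

/-- A prime, consistent, deductively closed theory. -/
def IsPrime (Ax : Fml → Prop) (T : Set Fml) : Prop :=
  (∀ φ, Ded Ax T φ → φ ∈ T) ∧ (∀ φ ψ, φ.or ψ ∈ T → φ ∈ T ∨ ψ ∈ T) ∧ Fml.bot ∉ T

theorem IsPrime.mem_of_imp {T : Set Fml} (hT : IsPrime Ax T) {φ ψ : Fml}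
    (h : φ ∈ T) (hd : Deriv Ax (φ.imp ψ)) : ψ ∈ T :=
  hT.1 ψ (ded_mp (ded_thm hd) (ded_mem h))

theorem IsPrime.mem_mp {T : Set Fml} (hT : IsPrime Ax T) {φ ψ : Fml}
    (h : φ.imp ψ ∈ T) (h' : φ ∈ T) : ψ ∈ T :=
  hT.1 ψ (ded_mp (ded_mem h) (ded_mem h'))

theorem IsPrime.thm_mem {T : Set Fml} (hT : IsPrime Ax T) {φ : Fml}
    (h : Deriv Ax φ) : φ ∈ T :=
  hT.1 φ (ded_thm h)

theorem IsPrime.conj_mem {T : Set Fml} (hT : IsPrime Ax T) {l : List Fml}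
    (h : ∀ ψ ∈ l, ψ ∈ T) : conjList l ∈ T :=
  hT.1 _ ⟨l, h, did _⟩

theorem IsPrime.and_mem {T : Set Fml} (hT : IsPrime Ax T) {φ ψ : Fml}
    (h₁ : φ ∈ T) (h₂ : ψ ∈ T) : φ.and ψ ∈ T :=
  hT.1 _ (ded_mp (ded_mp (ded_thm (Deriv.andI φ ψ)) (ded_mem h₁)) (ded_mem h₂))

/-- A finite list inside the union of a nonempty chain lies in one member. -/
theorem list_subset_chain_member {c : Set (Set Fml)} (hc : IsChain (· ⊆ ·) c)
    (hne : c.Nonempty) (l : List Fml) (hl : ∀ x ∈ l, x ∈ ⋃₀ c) :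
    ∃ t ∈ c, ∀ x ∈ l, x ∈ t := by
  induction l with
  | nil => exact ⟨hne.choose, hne.choose_spec, by simp⟩
  | cons a l ih =>
    obtain ⟨t₂, ht₂, hlt₂⟩ := ih fun x hx => hl x (List.mem_cons_of_mem a hx)
    obtain ⟨t₁, ht₁, hat₁⟩ := hl a (List.mem_cons_self)
    by_cases he : t₁ = t₂
    · exact ⟨t₂, ht₂, fun x hx => by
        rcases List.mem_cons.mp hx with h | h
        · subst h; exact he ▸ hat₁
        · exact hlt₂ x h⟩
    · rcases hc ht₁ ht₂ he with hsub | hsub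
      · exact ⟨t₂, ht₂, fun x hx => by
          rcases List.mem_cons.mp hx with h | h
          · subst h; exact hsub hat₁
          · exact hlt₂ x h⟩
      · exact ⟨t₁, ht₁, fun x hx => by
          rcases List.mem_cons.mp hx with h | h
          · subst h; exact hat₁
          · exact hsub (hlt₂ x h)⟩

/-- The Lindenbaum lemma: any set not deducing `φ` extends to a prime theory
not containing `φ`, which moreover is maximal with that property. -/
theorem lindenbaum {Γ : Set Fml} {φ : Fml} (h : ¬ Ded Ax Γ φ) :
    ∃ T, Γ ⊆ T ∧ IsPrime Ax T ∧ φ ∉ T ∧ (∀ α, α ∉ T → (α.imp φ) ∈ T) := by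
  classical
  set S : Set (Set Fml) := {T | Γ ⊆ T ∧ ¬ Ded Ax T φ} with hS
  have hzorn := zorn_subset_nonempty S ?hchain Γ ⟨Set.Subset.refl Γ, h⟩
  case hchain =>
    intro c hcS hchain hcne
    refine ⟨⋃₀ c, ⟨?_, ?_⟩, fun s hs => Set.subset_sUnion_of_mem hs⟩
    · obtain ⟨t, ht⟩ := hcne
      exact (hcS ht).1.trans (Set.subset_sUnion_of_mem ht)
    · rintro ⟨l, hl, hd⟩
      obtain ⟨t, htc, hlt⟩ := list_subset_chain_member hchain hcne l hl
      exact (hcS htc).2 ⟨l, hlt, hd⟩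
  obtain ⟨T, hΓT, hTmax⟩ := hzorn
  have hTS : T ∈ S := hTmax.1
  have hnded : ¬ Ded Ax T φ := hTS.2
  -- deductive closure
  have hclosed : ∀ ψ, Ded Ax T ψ → ψ ∈ T := by
    intro ψ hded
    by_contra hψ
    have hins : insert ψ T ∈ S := by
      refine ⟨hTS.1.trans (Set.subset_insert ψ T), ?_⟩
      intro hd
      exact hnded (ded_mp (ded_deduction hd) hded)
    exact hψ (hTmax.2 hins (Set.subset_insert ψ T) (Set.mem_insert ψ T))
  have hmaxprop : ∀ α, α ∉ T → (α.imp φ) ∈ T := by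
    intro α hα
    have : ¬ insert α T ∈ S := fun hins =>
      hα (hTmax.2 hins (Set.subset_insert α T) (Set.mem_insert α T))
    have hd : Ded Ax (insert α T) φ := by
      by_contra hd
      exact this ⟨hTS.1.trans (Set.subset_insert α T), hd⟩
    exact hclosed _ (ded_deduction hd)
  refine ⟨T, hΓT, ⟨hclosed, ?_, ?_⟩, fun hφ => hnded (ded_mem hφ), hmaxprop⟩
  · intro φ₁ φ₂ hor
    by_contra hcon
    push_neg at hcon
    have h₁ : (φ₁.imp φ) ∈ T := hmaxprop φ₁ hcon.1
    have h₂ : (φ₂.imp φ) ∈ T := hmaxprop φ₂ hcon.2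
    exact hnded (ded_mp (ded_mp (ded_mp (ded_thm (Deriv.orE φ₁ φ₂ φ))
      (ded_mem h₁)) (ded_mem h₂)) (ded_mem hor))
  · intro hbot
    exact hnded (ded_mp (ded_thm (Deriv.exfalso φ)) (ded_mem hbot))

end RegCompl

namespace RegCompl

variable {Ax : Fml → Prop}

/-! #### Modal combinators -/

theorem box_mono {φ ψ : Fml} (h : Deriv Ax (φ.imp ψ)) :
    Deriv Ax (φ.box.imp ψ.box) :=
  (Deriv.kBox φ ψ).mp h.nec

theorem dia_mono {φ ψ : Fml} (h : Deriv Ax (φ.imp ψ)) :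
    Deriv Ax (φ.dia.imp ψ.dia) :=
  (Deriv.kDia φ ψ).mp h.nec

theorem dia_box_and (φ ψ : Fml) :
    Deriv Ax (φ.box.imp (ψ.dia.imp ((φ.and ψ).dia))) :=
  dcomp (box_mono (Deriv.andI φ ψ)) (Deriv.kDia ψ (φ.and ψ))

theorem box_and_intro (φ ψ : Fml) :
    Deriv Ax ((φ.box.and ψ.box).imp ((φ.and ψ).box)) :=
  uncurry (dcomp (box_mono (Deriv.andI φ ψ)) (Deriv.kBox ψ (φ.and ψ)))

theorem box_dia (φ : Fml) : Deriv Ax (φ.box.imp φ.dia) :=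
  dcomp (Deriv.tBox φ) (Deriv.tDia φ)

theorem IsPrime.box_conj_mem {T : Set Fml} (hT : IsPrime Ax T) {l : List Fml}
    (h : ∀ ψ ∈ l, ψ.box ∈ T) : (conjList l).box ∈ T := by
  induction l with
  | nil => exact hT.thm_mem d_conj_nil.nec
  | cons a l ih =>
    have h₁ : a.box ∈ T := h a (List.mem_cons_self)
    have h₂ : (conjList l).box ∈ T := ih fun ψ hψ => h ψ (List.mem_cons_of_mem a hψ)
    exact hT.mem_of_imp (hT.and_mem h₁ h₂) (box_and_intro a (conjList l))

/-! #### The canonical modal relation -/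

/-- The canonical modal accessibility relation between theories. -/
def Sq (T U : Set Fml) : Prop :=
  (∀ φ, φ.box ∈ T → φ ∈ U) ∧ (∀ φ, φ ∈ U → φ.dia ∈ T)

theorem sq_refl {T : Set Fml} (hT : IsPrime Ax T) : Sq T T :=
  ⟨fun φ h => hT.mem_of_imp h (Deriv.tBox φ), fun φ h => hT.mem_of_imp h (Deriv.tDia φ)⟩

theorem sq_trans {T U V : Set Fml} (hT : IsPrime Ax T) (hU : IsPrime Ax U)
    (h₁ : Sq T U) (h₂ : Sq U V) : Sq T V := by
  constructor
  · intro φ h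
    exact h₂.1 φ (h₁.1 φ.box (hT.mem_of_imp h (Deriv.fourBox φ)))
  · intro φ h
    exact hT.mem_of_imp (h₁.2 φ.dia (h₂.2 φ h)) (Deriv.fourDia φ)

/-! #### A generic Zorn construction for prime extensions -/

/-- Generic construction: given a predicate `Q` on formulas that is monotone
under provable implication, splits over disjunctions, and fails at `⊥`, any
set all of whose finite conjunctions satisfy `Q` extends to a prime theory
all of whose finite conjunctions satisfy `Q`. -/
theorem zorn_prime (Q : Fml → Prop)
    (hQmono : ∀ a b, Deriv Ax (a.imp b) → Q a → Q b)
    (hQor : ∀ a b, Q (a.or b) → Q a ∨ Q b)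
    (hQbot : ¬ Q Fml.bot)
    (S₀ : Set Fml) (hS₀ : ∀ l : List Fml, (∀ x ∈ l, x ∈ S₀) → Q (conjList l)) :
    ∃ T, S₀ ⊆ T ∧ IsPrime Ax T ∧ ∀ l : List Fml, (∀ x ∈ l, x ∈ T) → Q (conjList l) := by
  classical
  set S : Set (Set Fml) := {T | S₀ ⊆ T ∧ ∀ l : List Fml, (∀ x ∈ l, x ∈ T) → Q (conjList l)}
    with hSdef
  have hzorn := zorn_subset_nonempty S ?hchain S₀ ⟨Set.Subset.refl _, hS₀⟩
  case hchain =>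
    intro c hcS hchain hcne
    refine ⟨⋃₀ c, ⟨?_, ?_⟩, fun s hs => Set.subset_sUnion_of_mem hs⟩
    · obtain ⟨t, ht⟩ := hcne
      exact (hcS ht).1.trans (Set.subset_sUnion_of_mem ht)
    · intro l hl
      obtain ⟨t, htc, hlt⟩ := list_subset_chain_member hchain hcne l hl
      exact (hcS htc).2 l hlt
  obtain ⟨T, hS₀T, hTmax⟩ := hzorn
  have hTS : T ∈ S := hTmax.1
  have hcond : ∀ l : List Fml, (∀ x ∈ l, x ∈ T) → Q (conjList l) := hTS.2
  -- closure under deduction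
  have hclosed : ∀ ψ, Ded Ax T ψ → ψ ∈ T := by
    intro ψ hded
    by_contra hψ
    obtain ⟨m, hm, hdm⟩ := hded
    have hins : insert ψ T ∈ S := by
      refine ⟨hTS.1.trans (Set.subset_insert ψ T), ?_⟩
      intro l hl
      have key : Deriv Ax ((conjList (m ++ l.filter (· ≠ ψ))).imp (conjList l)) := by
        refine imp_conj fun x hx => ?_
        by_cases hc : x = ψ
        · subst hc
          exact dcomp (conj_mono fun y hy => List.mem_append_left _ hy) hdm
        · refine conj_mem (List.mem_append_right _ ?_)
          exact List.mem_filter.mpr ⟨hx, by simpa using hc⟩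
      refine hQmono _ _ key (hcond _ ?_)
      intro x hx
      rcases List.mem_append.mp hx with h | h
      · exact hm x h
      · have hxl := List.mem_of_mem_filter h
        have hne : x ≠ ψ := by simpa using List.of_mem_filter h
        rcases hl x hxl with h' | h'
        · exact absurd h' hne
        · exact h'
    exact hψ (hTmax.2 hins (Set.subset_insert ψ T) (Set.mem_insert ψ T))
  -- primality
  have hprime : ∀ φ₁ φ₂, φ₁.or φ₂ ∈ T → φ₁ ∈ T ∨ φ₂ ∈ T := by
    intro φ₁ φ₂ hor
    by_contra hcon
    push_neg at hcon
    -- each failed insertion yields a bad conjunction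
    have hbad : ∀ φ', φ' ∉ T → ∃ C : List Fml, (∀ x ∈ C, x ∈ T) ∧
        ¬ Q (φ'.and (conjList C)) := by
      intro φ' hφ'
      have : ¬ insert φ' T ∈ S := fun hins =>
        hφ' (hTmax.2 hins (Set.subset_insert φ' T) (Set.mem_insert φ' T))
      have : ¬ ∀ l : List Fml, (∀ x ∈ l, x ∈ insert φ' T) → Q (conjList l) := by
        intro hall
        exact this ⟨hTS.1.trans (Set.subset_insert φ' T), hall⟩
      push_neg at this
      obtain ⟨l, hl, hnq⟩ := this
      refine ⟨l.filter (· ≠ φ'), ?_, ?_⟩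
      · intro x hx
        have hxl := List.mem_of_mem_filter hx
        have hne : x ≠ φ' := by simpa using List.of_mem_filter hx
        rcases hl x hxl with h' | h'
        · exact absurd h' hne
        · exact h'
      · intro hq
        refine hnq (hQmono _ _ ?_ hq)
        refine imp_conj fun x hx => ?_
        by_cases hc : x = φ'
        · subst hc; exact Deriv.andE₁ _ _
        · exact dcomp (Deriv.andE₂ _ _) (conj_mem (List.mem_filter.mpr ⟨hx, by simpa using hc⟩))
    obtain ⟨C₁, hC₁, hq₁⟩ := hbad φ₁ hcon.1
    obtain ⟨C₂, hC₂, hq₂⟩ := hbad φ₂ hcon.2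
    set C := C₁ ++ C₂ with hC
    have hCT : ∀ x ∈ C, x ∈ T := by
      intro x hx
      rcases List.mem_append.mp hx with h | h
      · exact hC₁ x h
      · exact hC₂ x h
    have hq₁' : ¬ Q (φ₁.and (conjList C)) := fun hq =>
      hq₁ (hQmono _ _ (and_mono (did φ₁) (conj_mono fun y hy => List.mem_append_left _ hy)) hq)
    have hq₂' : ¬ Q (φ₂.and (conjList C)) := fun hq =>
      hq₂ (hQmono _ _ (and_mono (did φ₂) (conj_mono fun y hy => List.mem_append_right _ hy)) hq)
    have hQl : Q (conjList ((φ₁.or φ₂) :: C)) := by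
      refine hcond _ ?_
      intro x hx
      rcases List.mem_cons.mp hx with h | h
      · subst h; exact hor
      · exact hCT x h
    have hsplit : Deriv Ax ((conjList ((φ₁.or φ₂) :: C)).imp
        ((φ₁.and (conjList C)).or (φ₂.and (conjList C)))) := by
      rw [conjList_cons]
      refine uncurry (or_elim_d ?_ ?_)
      · exact curry (dcomp (and_mono (did φ₁) (did _)) (Deriv.orI₁ _ _))
      · exact curry (dcomp (and_mono (did φ₂) (did _)) (Deriv.orI₂ _ _))
    rcases hQor _ _ (hQmono _ _ hsplit hQl) with h | h
    · exact hq₁' h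
    · exact hq₂' h
  have hbot : Fml.bot ∉ T := by
    intro hb
    have : Q (conjList [Fml.bot]) := hcond _ (by simpa using hb)
    exact hQbot (hQmono _ _ (Deriv.andE₁ _ _) this)
  exact ⟨T, hS₀T, ⟨hclosed, hprime, hbot⟩, hcond⟩

end RegCompl

namespace RegCompl

variable {Ax : Fml → Prop}

/-- Hypothesis: all DP instances are derivable. -/
def HasDP (Ax : Fml → Prop) : Prop :=
  ∀ φ ψ : Fml, Deriv Ax (((φ.or ψ).dia).imp ((φ.dia).or (ψ.dia)))

/-- Hypothesis: N is derivable. -/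
def HasN (Ax : Fml → Prop) : Prop := Deriv Ax ((Fml.bot.dia).imp Fml.bot)

/-- Hypothesis: all FS2 instances are derivable. -/
def HasFS2 (Ax : Fml → Prop) : Prop :=
  ∀ φ ψ : Fml, Deriv Ax (((φ.dia).imp (ψ.box)).imp ((φ.imp ψ).box))

/-- Hypothesis: all CD instances are derivable. -/
def HasCD (Ax : Fml → Prop) : Prop :=
  ∀ φ ψ : Fml, Deriv Ax (((φ.or ψ).box).imp ((φ.box).or (ψ.dia)))

/-- Hypothesis: all GD instances are derivable. -/
def HasGD (Ax : Fml → Prop) : Prop :=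
  ∀ φ ψ : Fml, Deriv Ax ((φ.imp ψ).or (ψ.imp φ))

theorem dia_notbot {Θ : Set Fml} (hN : HasN Ax) (hΘ : IsPrime Ax Θ) :
    Fml.bot.dia ∉ Θ := fun h => hΘ.2.2 (hΘ.mem_of_imp h hN)

/-- The `◇`-type extension lemma: any set whose finite conjunctions are all
`◇`-possible at `Θ` extends to a prime `Sq`-successor of `Θ`. -/
theorem goodExt (hDP : HasDP Ax) (hN : HasN Ax) {Θ : Set Fml} (hΘ : IsPrime Ax Θ)
    (S₀ : Set Fml) (hbox : ∀ φ, φ.box ∈ Θ → φ ∈ S₀)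
    (hgood : ∀ l : List Fml, (∀ x ∈ l, x ∈ S₀) → (conjList l).dia ∈ Θ) :
    ∃ P, IsPrime Ax P ∧ Sq Θ P ∧ S₀ ⊆ P := by
  obtain ⟨T, hS₀T, hTprime, hcond⟩ := zorn_prime (Ax := Ax) (fun c => c.dia ∈ Θ)
    (fun a b hab ha => hΘ.mem_of_imp ha (dia_mono hab))
    (fun a b hab => hΘ.2.1 _ _ (hΘ.mem_of_imp hab (hDP a b)))
    (dia_notbot hN hΘ) S₀ hgood
  refine ⟨T, hTprime, ⟨fun φ h => hS₀T (hbox φ h), fun φ h => ?_⟩, hS₀T⟩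
  have : (conjList [φ]).dia ∈ Θ := hcond [φ] (by simpa using h)
  exact hΘ.mem_of_imp this (dia_mono (Deriv.andE₁ _ _))

/-- Existence of `◇`-witnessing successors. -/
theorem diaExist (hDP : HasDP Ax) (hN : HasN Ax) {Θ : Set Fml} (hΘ : IsPrime Ax Θ)
    {χ : Fml} (hχ : χ.dia ∈ Θ) :
    ∃ P, IsPrime Ax P ∧ Sq Θ P ∧ χ ∈ P := by
  classical
  have hgood : ∀ l : List Fml, (∀ x ∈ l, x ∈ {x | x.box ∈ Θ} ∪ {χ}) →
      (conjList l).dia ∈ Θ := by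
    intro l hl
    set lb := l.filter (· ≠ χ) with hlb
    have hlbbox : ∀ x ∈ lb, x.box ∈ Θ := by
      intro x hx
      have hne : x ≠ χ := by simpa using List.of_mem_filter hx
      rcases hl x (List.mem_of_mem_filter hx) with h | h
      · exact h
      · exact absurd h hne
    have hb : (conjList lb).box ∈ Θ := hΘ.box_conj_mem hlbbox
    have hbc : ((conjList lb).and χ).dia ∈ Θ :=
      hΘ.mem_mp (hΘ.mem_of_imp hb (dia_box_and (conjList lb) χ)) hχ
    refine hΘ.mem_of_imp hbc (dia_mono (imp_conj fun x hx => ?_))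
    by_cases hc : x = χ
    · subst hc; exact Deriv.andE₂ _ _
    · exact dcomp (Deriv.andE₁ _ _) (conj_mem (List.mem_filter.mpr ⟨hx, by simpa using hc⟩))
  obtain ⟨P, h₁, h₂, h₃⟩ := goodExt hDP hN hΘ ({x | x.box ∈ Θ} ∪ {χ})
    (fun φ h => Set.mem_union_left _ h) hgood
  exact ⟨P, h₁, h₂, h₃ (Set.mem_union_right _ rfl)⟩

/-- Forth–up confluence for the canonical relation. -/
theorem fuExist (hDP : HasDP Ax) (hN : HasN Ax) {Δ Δ' P0 : Set Fml}
    (hΔ : IsPrime Ax Δ) (hΔ' : IsPrime Ax Δ') (hP0 : IsPrime Ax P0)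
    (hsub : Δ ⊆ Δ') (hsq : Sq Δ P0) :
    ∃ P, IsPrime Ax P ∧ Sq Δ' P ∧ P0 ⊆ P := by
  classical
  letI : DecidablePred (· ∈ P0) := fun _ => Classical.propDecidable _
  have hgood : ∀ l : List Fml, (∀ x ∈ l, x ∈ P0 ∪ {x | x.box ∈ Δ'}) →
      (conjList l).dia ∈ Δ' := by
    intro l hl
    set lp := l.filter (· ∈ P0) with hlp
    set lb := l.filter (· ∉ P0) with hlbd
    have hlpm : ∀ x ∈ lp, x ∈ P0 := fun x hx => by
      have := List.of_mem_filter hx; simpa using this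
    have hlbm : ∀ x ∈ lb, x.box ∈ Δ' := by
      intro x hx
      have hnp : x ∉ P0 := by simpa using List.of_mem_filter hx
      rcases hl x (List.mem_of_mem_filter hx) with h | h
      · exact absurd h hnp
      · exact h
    have hc : conjList lp ∈ P0 := hP0.conj_mem hlpm
    have hcd : (conjList lp).dia ∈ Δ' := hsub (hsq.2 _ hc)
    have hb : (conjList lb).box ∈ Δ' := hΔ'.box_conj_mem hlbm
    have hbc : ((conjList lb).and (conjList lp)).dia ∈ Δ' :=
      hΔ'.mem_mp (hΔ'.mem_of_imp hb (dia_box_and _ _)) hcd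
    refine hΔ'.mem_of_imp hbc (dia_mono (imp_conj fun x hx => ?_))
    by_cases hcse : x ∈ P0
    · exact dcomp (Deriv.andE₂ _ _) (conj_mem (List.mem_filter.mpr ⟨hx, by simpa using hcse⟩))
    · exact dcomp (Deriv.andE₁ _ _) (conj_mem (List.mem_filter.mpr ⟨hx, by simpa using hcse⟩))
  obtain ⟨P, h₁, h₂, h₃⟩ := goodExt hDP hN hΔ' (P0 ∪ {x | x.box ∈ Δ'})
    (fun φ h => Set.mem_union_right _ h) hgood
  exact ⟨P, h₁, h₂, fun x hx => h₃ (Set.mem_union_left _ hx)⟩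

end RegCompl

namespace RegCompl

variable {Ax : Fml → Prop}

/-- Strip one diamond. -/
def undia : Fml → Fml
  | .dia φ => φ
  | φ => φ

@[simp] theorem undia_dia (φ : Fml) : undia φ.dia = φ := rfl

/-- Back–up confluence for the canonical relation, using FS2. -/
theorem backupExist (hFS2 : HasFS2 Ax) {Δ P P' : Set Fml}
    (hΔ : IsPrime Ax Δ) (hP : IsPrime Ax P) (hP' : IsPrime Ax P')
    (hsq : Sq Δ P) (hsub : P ⊆ P') :
    ∃ Θ, IsPrime Ax Θ ∧ Δ ⊆ Θ ∧ Sq Θ P' := by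
  classical
  set Q : Fml → Prop := fun c => ∀ δ, Deriv Ax (c.imp δ.box) → δ ∈ P' with hQdef
  have hQmono : ∀ a b, Deriv Ax (a.imp b) → Q a → Q b := by
    intro a b hab ha δ hd
    exact ha δ (dcomp hab hd)
  have hQor : ∀ a b, Q (a.or b) → Q a ∨ Q b := by
    intro a b hab
    by_contra hcon
    push_neg at hcon
    obtain ⟨⟨δ₁, hd₁, hδ₁⟩, ⟨δ₂, hd₂, hδ₂⟩⟩ :
        (∃ δ, Deriv Ax (a.imp δ.box) ∧ δ ∉ P') ∧
        (∃ δ, Deriv Ax (b.imp δ.box) ∧ δ ∉ P') := by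
      constructor
      · by_contra h; push_neg at h
        exact hcon.1 fun δ hd => h δ hd
      · by_contra h; push_neg at h
        exact hcon.2 fun δ hd => h δ hd
    have hd : Deriv Ax ((a.or b).imp ((δ₁.or δ₂).box)) :=
      or_elim_d (dcomp hd₁ (box_mono (Deriv.orI₁ δ₁ δ₂)))
        (dcomp hd₂ (box_mono (Deriv.orI₂ δ₁ δ₂)))
    rcases hP'.2.1 _ _ (hab _ hd) with h | h
    · exact hδ₁ h
    · exact hδ₂ h
  have hQbot : ¬ Q Fml.bot := by
    intro h
    exact hP'.2.2 (h Fml.bot (Deriv.exfalso Fml.bot.box))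
  set S₀ : Set Fml := Δ ∪ {x | ∃ β ∈ P', x = β.dia} with hS₀def
  have hS₀ : ∀ l : List Fml, (∀ x ∈ l, x ∈ S₀) → Q (conjList l) := by
    intro l hl δ hd
    letI : DecidablePred (· ∈ Δ) := fun _ => Classical.propDecidable _
    set lΔ := l.filter (· ∈ Δ) with hlΔ
    set lD := l.filter (· ∉ Δ) with hlD
    have hlΔm : ∀ x ∈ lΔ, x ∈ Δ := fun x hx => by
      have := List.of_mem_filter hx; simpa using this
    have hlDm : ∀ x ∈ lD, ∃ β ∈ P', x = β.dia := by
      intro x hx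
      have hnd : x ∉ Δ := by simpa using List.of_mem_filter hx
      rcases hl x (List.mem_of_mem_filter hx) with h | h
      · exact absurd h hnd
      · exact h
    set bs := lD.map undia with hbs
    have hbsm : ∀ β ∈ bs, β ∈ P' := by
      intro β hβ
      obtain ⟨x, hx, hux⟩ := List.mem_map.mp hβ
      obtain ⟨β', hβ', hform⟩ := hlDm x hx
      subst hform
      simpa [undia] using hux ▸ hβ'
    have hc : conjList bs ∈ P' := hP'.conj_mem hbsm
    have hdiaD : Deriv Ax ((conjList bs).dia.imp (conjList lD)) := by
      refine imp_conj fun x hx => ?_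
      obtain ⟨β', hβ', hform⟩ := hlDm x hx
      subst hform
      exact dia_mono (conj_mem (by
        have : undia β'.dia ∈ bs := List.mem_map.mpr ⟨β'.dia, hx, rfl⟩
        simpa using this))
    have hsplit : Deriv Ax (((conjList lΔ).and (conjList bs).dia).imp (conjList l)) := by
      refine imp_conj fun x hx => ?_
      by_cases hcse : x ∈ Δ
      · exact dcomp (Deriv.andE₁ _ _) (conj_mem (List.mem_filter.mpr ⟨hx, by simpa using hcse⟩))
      · exact dcomp (Deriv.andE₂ _ _)
          (dcomp hdiaD (conj_mem (List.mem_filter.mpr ⟨hx, by simpa using hcse⟩)))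
    have hΔmem : conjList lΔ ∈ Δ := hΔ.conj_mem hlΔm
    have himp : ((conjList bs).dia.imp δ.box) ∈ Δ :=
      hΔ.mem_of_imp hΔmem (curry (dcomp hsplit hd))
    have hbox : ((conjList bs).imp δ).box ∈ Δ :=
      hΔ.mem_of_imp himp (hFS2 (conjList bs) δ)
    exact hP'.mem_mp (hsub (hsq.1 _ hbox)) hc
  obtain ⟨T, hS₀T, hTprime, hcond⟩ := zorn_prime Q hQmono hQor hQbot S₀ hS₀
  refine ⟨T, hTprime, fun x hx => hS₀T (Set.mem_union_left _ hx), ?_, ?_⟩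
  · intro δ hδ
    have : Q (conjList [δ.box]) := hcond [δ.box] (by simpa using hδ)
    exact this δ (Deriv.andE₁ _ _)
  · intro β hβ
    exact hS₀T (Set.mem_union_right _ ⟨β, hβ, rfl⟩)

/-- Forth–down confluence for the canonical relation, using CD. -/
theorem fdExist (hDP : HasDP Ax) (hN : HasN Ax) (hCD : HasCD Ax) {Δ Θ P : Set Fml}
    (hΔ : IsPrime Ax Δ) (hΘ : IsPrime Ax Θ) (hP : IsPrime Ax P)
    (hsub : Δ ⊆ Θ) (hsq : Sq Θ P) :
    ∃ P0, IsPrime Ax P0 ∧ Sq Δ P0 ∧ P0 ⊆ P := by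
  classical
  set Q : Fml → Prop := fun c =>
    ¬ ∃ q p : Fml, q.dia ∉ Δ ∧ p ∉ P ∧ Deriv Ax (c.imp (q.or p)) with hQdef
  have hQmono : ∀ a b, Deriv Ax (a.imp b) → Q a → Q b := by
    rintro a b hab ha ⟨q, p, hq, hp, hd⟩
    exact ha ⟨q, p, hq, hp, dcomp hab hd⟩
  have hQor : ∀ a b, Q (a.or b) → Q a ∨ Q b := by
    intro a b hab
    by_contra hcon
    push_neg at hcon
    obtain ⟨hna, hnb⟩ := hcon
    simp only [hQdef, not_not] at hna hnb
    obtain ⟨q₁, p₁, hq₁, hp₁, hd₁⟩ := hna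
    obtain ⟨q₂, p₂, hq₂, hp₂, hd₂⟩ := hnb
    refine hab ⟨q₁.or q₂, p₁.or p₂, ?_, ?_, ?_⟩
    · intro h
      rcases hΔ.2.1 _ _ (hΔ.mem_of_imp h (hDP q₁ q₂)) with h | h
      · exact hq₁ h
      · exact hq₂ h
    · intro h
      rcases hP.2.1 _ _ h with h | h
      · exact hp₁ h
      · exact hp₂ h
    · refine or_elim_d (dcomp hd₁ ?_) (dcomp hd₂ ?_)
      · exact or_mono (Deriv.orI₁ q₁ q₂) (Deriv.orI₁ p₁ p₂)
      · exact or_mono (Deriv.orI₂ q₁ q₂) (Deriv.orI₂ p₁ p₂)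
  have hQbot : ¬ Q Fml.bot := by
    intro h
    exact h ⟨Fml.bot, Fml.bot, dia_notbot hN hΔ, hP.2.2, Deriv.exfalso _⟩
  have hS₀ : ∀ l : List Fml, (∀ x ∈ l, x ∈ {x | x.box ∈ Δ}) → Q (conjList l) := by
    rintro l hl ⟨q, p, hq, hp, hd⟩
    have hb : (conjList l).box ∈ Δ := hΔ.box_conj_mem hl
    have hswap : Deriv Ax ((conjList l).imp (p.or q)) :=
      dcomp hd (or_elim_d (Deriv.orI₂ p q) (Deriv.orI₁ p q))
    have hboxpq : (p.or q).box ∈ Δ := hΔ.mem_of_imp hb (box_mono hswap)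
    rcases hΔ.2.1 _ _ (hΔ.mem_of_imp hboxpq (hCD p q)) with h | h
    · exact hp (hsq.1 p (hsub h))
    · exact hq h
  obtain ⟨T, hS₀T, hTprime, hcond⟩ := zorn_prime Q hQmono hQor hQbot _ hS₀
  have hTP : T ⊆ P := by
    intro β hβ
    by_contra hβP
    exact hcond [β] (by simpa using hβ)
      ⟨Fml.bot, β, dia_notbot hN hΔ, hβP, dcomp (Deriv.andE₁ _ _) (Deriv.orI₂ _ _)⟩
  refine ⟨T, hTprime, ⟨fun φ h => hS₀T h, fun β hβ => ?_⟩, hTP⟩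
  by_contra hβd
  exact hcond [β] (by simpa using hβ)
    ⟨β, Fml.bot, hβd, hP.2.2, dcomp (Deriv.andE₁ _ _) (Deriv.orI₁ _ _)⟩

end RegCompl

namespace RegCompl

variable {Ax : Fml → Prop}

/-- Existence of `□`-refuting successors, using FS2. -/
theorem boxExistFS2 (hFS2 : HasFS2 Ax) {Δ : Set Fml} (hΔ : IsPrime Ax Δ)
    {ψ : Fml} (hψ : ψ.box ∉ Δ) :
    ∃ Θ P, IsPrime Ax Θ ∧ IsPrime Ax P ∧ Δ ⊆ Θ ∧ Sq Θ P ∧ ψ ∉ P := by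
  classical
  have hnded : ¬ Ded Ax Δ ψ.box := fun h => hψ (hΔ.1 _ h)
  obtain ⟨Θ, hΔΘ, hΘ, hψΘ, hmax⟩ := lindenbaum hnded
  set Q : Fml → Prop := fun c => c.dia ∈ Θ ∧ (c.imp ψ).box ∉ Θ with hQdef
  have hQmono : ∀ a b, Deriv Ax (a.imp b) → Q a → Q b := by
    intro a b hab ⟨h₁, h₂⟩
    refine ⟨hΘ.mem_of_imp h₁ (dia_mono hab), fun hb => ?_⟩
    exact h₂ (hΘ.mem_of_imp hb (box_mono (imp_antitone hab)))
  have hbox_of_nQ : ∀ a : Fml, a.dia ∈ Θ → ¬ Q a → (a.imp ψ).box ∈ Θ := by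
    intro a hd hq
    by_contra hb
    exact hq ⟨hd, hb⟩
  have himpbox : ∀ a : Fml, a.dia ∉ Θ → (a.imp ψ).box ∈ Θ := by
    intro a hd
    exact hΘ.mem_of_imp (hmax _ hd) (hFS2 a ψ)
  have hQor : ∀ a b, Q (a.or b) → Q a ∨ Q b := by
    intro a b ⟨h₁, h₂⟩
    by_contra hcon
    push_neg at hcon
    have ha : (a.imp ψ).box ∈ Θ := by
      by_cases hd : a.dia ∈ Θ
      · exact hbox_of_nQ a hd hcon.1
      · exact himpbox a hd
    have hb : (b.imp ψ).box ∈ Θ := by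
      by_cases hd : b.dia ∈ Θ
      · exact hbox_of_nQ b hd hcon.2
      · exact himpbox b hd
    refine h₂ (hΘ.mem_of_imp (hΘ.and_mem ha hb) ?_)
    exact dcomp (box_and_intro _ _) (box_mono (uncurry (Deriv.orE a b ψ)))
  have hQbot : ¬ Q Fml.bot := by
    rintro ⟨-, h₂⟩
    exact h₂ (hΘ.thm_mem (Deriv.exfalso ψ).nec)
  have hS₀ : ∀ l : List Fml, (∀ x ∈ l, x ∈ {x | x.box ∈ Θ}) → Q (conjList l) := by
    intro l hl
    have hb : (conjList l).box ∈ Θ := hΘ.box_conj_mem hl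
    refine ⟨hΘ.mem_of_imp hb (box_dia _), fun hbb => ?_⟩
    exact hψΘ (hΘ.mem_mp (hΘ.mem_of_imp hbb (Deriv.kBox _ _)) hb)
  obtain ⟨T, hS₀T, hTprime, hcond⟩ := zorn_prime Q hQmono hQor hQbot _ hS₀
  refine ⟨Θ, T, hΘ, hTprime, hΔΘ, ⟨fun φ h => hS₀T h, fun β hβ => ?_⟩, fun hβ => ?_⟩
  · have : Q (conjList [β]) := hcond [β] (by simpa using hβ)
    exact hΘ.mem_of_imp this.1 (dia_mono (Deriv.andE₁ _ _))
  · have : Q (conjList [ψ]) := hcond [ψ] (by simpa using hβ)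
    exact this.2 (hΘ.thm_mem (Deriv.andE₁ ψ (conjList [])).nec)

/-- Existence of `□`-refuting successors, using CD. -/
theorem boxExistCD (hDP : HasDP Ax) (hN : HasN Ax) (hCD : HasCD Ax) {Δ : Set Fml}
    (hΔ : IsPrime Ax Δ) {ψ : Fml} (hψ : ψ.box ∉ Δ) :
    ∃ Θ P, IsPrime Ax Θ ∧ IsPrime Ax P ∧ Δ ⊆ Θ ∧ Sq Θ P ∧ ψ ∉ P := by
  classical
  have hnded : ¬ Ded Ax Δ ψ.box := fun h => hψ (hΔ.1 _ h)
  obtain ⟨Θ, hΔΘ, hΘ, hψΘ, -⟩ := lindenbaum hnded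
  set Q : Fml → Prop := fun c =>
    ¬ ∃ q p : Fml, q.dia ∉ Θ ∧ Deriv Ax (p.imp ψ) ∧ Deriv Ax (c.imp (q.or p)) with hQdef
  have hQmono : ∀ a b, Deriv Ax (a.imp b) → Q a → Q b := by
    rintro a b hab ha ⟨q, p, hq, hp, hd⟩
    exact ha ⟨q, p, hq, hp, dcomp hab hd⟩
  have hQor : ∀ a b, Q (a.or b) → Q a ∨ Q b := by
    intro a b hab
    by_contra hcon
    push_neg at hcon
    obtain ⟨hna, hnb⟩ := hcon
    simp only [hQdef, not_not] at hna hnb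
    obtain ⟨q₁, p₁, hq₁, hp₁, hd₁⟩ := hna
    obtain ⟨q₂, p₂, hq₂, hp₂, hd₂⟩ := hnb
    refine hab ⟨q₁.or q₂, p₁.or p₂, ?_, or_elim_d hp₁ hp₂, ?_⟩
    · intro h
      rcases hΘ.2.1 _ _ (hΘ.mem_of_imp h (hDP q₁ q₂)) with h | h
      · exact hq₁ h
      · exact hq₂ h
    · refine or_elim_d (dcomp hd₁ ?_) (dcomp hd₂ ?_)
      · exact or_mono (Deriv.orI₁ q₁ q₂) (Deriv.orI₁ p₁ p₂)
      · exact or_mono (Deriv.orI₂ q₁ q₂) (Deriv.orI₂ p₁ p₂)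
  have hQbot : ¬ Q Fml.bot := by
    intro h
    exact h ⟨Fml.bot, Fml.bot, dia_notbot hN hΘ, Deriv.exfalso ψ, Deriv.exfalso _⟩
  have hS₀ : ∀ l : List Fml, (∀ x ∈ l, x ∈ {x | x.box ∈ Θ}) → Q (conjList l) := by
    rintro l hl ⟨q, p, hq, hp, hd⟩
    have hb : (conjList l).box ∈ Θ := hΘ.box_conj_mem hl
    have hswap : Deriv Ax ((conjList l).imp (p.or q)) :=
      dcomp hd (or_elim_d (Deriv.orI₂ p q) (Deriv.orI₁ p q))
    have hboxpq : (p.or q).box ∈ Θ := hΘ.mem_of_imp hb (box_mono hswap)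
    rcases hΘ.2.1 _ _ (hΘ.mem_of_imp hboxpq (hCD p q)) with h | h
    · exact hψΘ (hΘ.mem_of_imp h (box_mono hp))
    · exact hq h
  obtain ⟨T, hS₀T, hTprime, hcond⟩ := zorn_prime Q hQmono hQor hQbot _ hS₀
  refine ⟨Θ, T, hΘ, hTprime, hΔΘ, ⟨fun φ h => hS₀T h, fun β hβ => ?_⟩, fun hβ => ?_⟩
  · by_contra hβd
    exact hcond [β] (by simpa using hβ)
      ⟨β, Fml.bot, hβd, Deriv.exfalso ψ, dcomp (Deriv.andE₁ _ _) (Deriv.orI₁ _ _)⟩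
  · exact hcond [ψ] (by simpa using hβ)
      ⟨Fml.bot, ψ, dia_notbot hN hΘ, did ψ, dcomp (Deriv.andE₁ _ _) (Deriv.orI₂ _ _)⟩

/-- Upward linearity of prime extensions, using GD. -/
theorem uplinear (hGD : HasGD Ax) {Δ T₁ T₂ : Set Fml} (hΔ : IsPrime Ax Δ)
    (h₁ : Δ ⊆ T₁) (h₂ : Δ ⊆ T₂) (hp₁ : IsPrime Ax T₁) (hp₂ : IsPrime Ax T₂) :
    T₁ ⊆ T₂ ∨ T₂ ⊆ T₁ := by
  by_contra hcon
  push_neg at hcon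
  obtain ⟨α, hα₁, hα₂⟩ := Set.not_subset.mp hcon.1
  obtain ⟨β, hβ₂, hβ₁⟩ := Set.not_subset.mp hcon.2
  rcases hΔ.2.1 _ _ (hΔ.thm_mem (hGD α β)) with h | h
  · exact hβ₁ (hp₁.mem_mp (h₁ h) hα₁)
  · exact hα₂ (hp₂.mem_mp (h₂ h) hβ₂)

end RegCompl

namespace RegCompl

/-- Worlds of the canonical model: prime theories. -/
def CanW (Ax : Fml → Prop) : Type := {T : Set Fml // IsPrime Ax T}

/-- The canonical model (lifted to an arbitrary universe). -/
def canM (Ax : Fml → Prop) : KModel.{u} where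
  W := ULift.{u} (CanW Ax)
  fallible := ∅
  le w v := w.down.1 ⊆ v.down.1
  sq w v := Sq w.down.1 v.down.1
  val p := {w | Fml.var p ∈ w.down.1}

variable {Ax : Fml → Prop}

/-- The truth lemma for the canonical model. -/
theorem truth (hDP : HasDP Ax) (hN : HasN Ax)
    (hBox : ∀ T : Set Fml, IsPrime Ax T → ∀ ψ : Fml, ψ.box ∉ T →
      ∃ Θ P, IsPrime Ax Θ ∧ IsPrime Ax P ∧ T ⊆ Θ ∧ Sq Θ P ∧ ψ ∉ P) :
    ∀ (φ : Fml) (w : (canM.{u} Ax).W), (canM.{u} Ax).Sat φ w ↔ φ ∈ w.down.1 := by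
  intro φ
  induction φ with
  | var p =>
    intro w
    exact Iff.rfl
  | bot =>
    intro w
    constructor
    · intro h; exact absurd h (Set.notMem_empty w)
    · intro h; exact absurd h w.down.2.2.2
  | and φ ψ ihφ ihψ =>
    intro w
    simp only [KModel.Sat]
    rw [ihφ w, ihψ w]
    constructor
    · intro ⟨h₁, h₂⟩; exact w.down.2.and_mem h₁ h₂
    · intro h
      exact ⟨w.down.2.mem_of_imp h (Deriv.andE₁ _ _), w.down.2.mem_of_imp h (Deriv.andE₂ _ _)⟩
  | or φ ψ ihφ ihψ =>
    intro w
    simp only [KModel.Sat]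
    rw [ihφ w, ihψ w]
    constructor
    · intro h
      rcases h with h | h
      · exact w.down.2.mem_of_imp h (Deriv.orI₁ _ _)
      · exact w.down.2.mem_of_imp h (Deriv.orI₂ _ _)
    · exact w.down.2.2.1 φ ψ
  | imp φ ψ ihφ ihψ =>
    intro w
    simp only [KModel.Sat]
    constructor
    · intro h
      by_contra hni
      have hnded : ¬ Ded Ax (insert φ w.down.1) ψ := by
        intro hd
        exact hni (w.down.2.1 _ (ded_deduction hd))
      obtain ⟨Sg, hsub, hSg, hψSg, -⟩ := lindenbaum hnded
      have hle : (canM.{u} Ax).le w (ULift.up ⟨Sg, hSg⟩) :=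
        fun x hx => hsub (Set.mem_insert_of_mem _ hx)
      have hsat : (canM.{u} Ax).Sat ψ (ULift.up ⟨Sg, hSg⟩) :=
        h _ hle ((ihφ _).mpr (hsub (Set.mem_insert _ _)))
      exact hψSg ((ihψ _).mp hsat)
    · intro h v hle hsat
      exact (ihψ v).mpr (v.down.2.mem_mp (hle h) ((ihφ v).mp hsat))
  | dia φ ih =>
    intro w
    simp only [KModel.Sat]
    constructor
    · intro h
      by_contra hd
      have hnded : ¬ Ded Ax w.down.1 φ.dia := fun hdd => hd (w.down.2.1 _ hdd)
      obtain ⟨Sg, hsub, hSg, hdSg, -⟩ := lindenbaum hnded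
      obtain ⟨v, hsq, hsat⟩ := h (ULift.up ⟨Sg, hSg⟩) hsub
      exact hdSg (hsq.2 φ ((ih v).mp hsat))
    · intro h u hle
      obtain ⟨P, hP, hsq, hφ⟩ := diaExist hDP hN u.down.2 (hle h)
      exact ⟨ULift.up ⟨P, hP⟩, hsq, (ih _).mpr hφ⟩
  | box φ ih =>
    intro w
    simp only [KModel.Sat]
    constructor
    · intro h
      by_contra hb
      obtain ⟨Θ, P, hΘ, hP, hsub, hsq, hφ⟩ := hBox w.down.1 w.down.2 φ hb
      exact hφ ((ih (ULift.up ⟨P, hP⟩)).mp (h (ULift.up ⟨Θ, hΘ⟩) (ULift.up ⟨P, hP⟩) hsub hsq))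
    · intro h u v hle hsq
      exact (ih v).mpr (hsq.1 φ (hle h))

/-! #### Frame conditions of the canonical model -/

theorem canM_biint : (canM.{u} Ax).IsBiInt := by
  refine ⟨fun w => Set.Subset.refl _, fun u v w h₁ h₂ => h₁.trans h₂,
    fun w => sq_refl w.down.2, fun u v w h₁ h₂ => sq_trans u.down.2 v.down.2 h₁ h₂,
    ?_, ?_, ?_, ?_⟩
  · intro w v h; exact absurd h (Set.notMem_empty w)
  · intro w v h; exact absurd h (Set.notMem_empty w)
  · intro p w v h hle; exact hle h
  · intro p w h; exact absurd h (Set.notMem_empty w)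

theorem canM_infallible : (canM.{u} Ax).Infallible := rfl

theorem canM_forthup (hDP : HasDP Ax) (hN : HasN Ax) : (canM.{u} Ax).ForthUp := by
  intro w w' v hle hsq
  obtain ⟨P, hP, hsq', hsub⟩ := fuExist hDP hN w.down.2 w'.down.2 v.down.2 hle hsq
  exact ⟨ULift.up ⟨P, hP⟩, hsub, hsq'⟩

theorem canM_backup (hFS2 : HasFS2 Ax) : (canM.{u} Ax).BackUp := by
  intro w v v' hsq hle
  obtain ⟨Θ, hΘ, hsub, hsq'⟩ := backupExist hFS2 w.down.2 v.down.2 v'.down.2 hsq hle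
  exact ⟨ULift.up ⟨Θ, hΘ⟩, hsub, hsq'⟩

theorem canM_forthdown (hDP : HasDP Ax) (hN : HasN Ax) (hCD : HasCD Ax) :
    (canM.{u} Ax).ForthDown := by
  intro w v v' hle hsq
  obtain ⟨P0, hP0, hsq', hsub⟩ := fdExist hDP hN hCD w.down.2 v.down.2 v'.down.2 hle hsq
  exact ⟨ULift.up ⟨P0, hP0⟩, hsq', hsub⟩

theorem canM_uplinear (hGD : HasGD Ax) : (canM.{u} Ax).UpLinear := by
  intro w u v h₁ h₂
  exact uplinear hGD w.down.2 h₁ h₂ u.down.2 v.down.2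

/-- Completeness, abstractly. -/
theorem completeness (C : KModel.{u} → Prop) (hDP : HasDP Ax) (hN : HasN Ax)
    (hBox : ∀ T : Set Fml, IsPrime Ax T → ∀ ψ : Fml, ψ.box ∉ T →
      ∃ Θ P, IsPrime Ax Θ ∧ IsPrime Ax P ∧ T ⊆ Θ ∧ Sq Θ P ∧ ψ ∉ P)
    (hclass : C (canM.{u} Ax)) {Γ : Set Fml} {φ : Fml}
    (h : ¬ SynConseq (Deriv Ax) Γ φ) : ¬ SemConseq.{u} C Γ φ := by
  obtain ⟨T, hΓT, hT, hφT, -⟩ := lindenbaum h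
  intro hsem
  have hsat := hsem (canM.{u} Ax) hclass (ULift.up ⟨T, hT⟩) (Set.notMem_empty _)
    (fun ψ hψ => (truth hDP hN hBox ψ _).mpr (hΓT hψ))
  exact hφT ((truth hDP hN hBox φ _).mp hsat)

end RegCompl

namespace RegCompl

variable {Ax : Fml → Prop}

/-! #### Soundness -/

theorem persist {M : KModel.{u}} (hM : M.IsBiInt) :
    ∀ (φ : Fml) {w v : M.W}, M.le w v → M.Sat φ w → M.Sat φ v := by
  intro φ
  induction φ with
  | var p => intro w v hle h; exact hM.2.2.2.2.2.2.1 p w v h hle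
  | bot => intro w v hle h; exact hM.2.2.2.2.1 w v h hle
  | and φ ψ ihφ ihψ =>
    intro w v hle h
    exact ⟨ihφ hle h.1, ihψ hle h.2⟩
  | or φ ψ ihφ ihψ =>
    intro w v hle h
    rcases h with h | h
    · exact Or.inl (ihφ hle h)
    · exact Or.inr (ihψ hle h)
  | imp φ ψ ihφ ihψ =>
    intro w v hle h x hx hφ
    exact h x (hM.2.1 _ _ _ hle hx) hφ
  | dia φ ih =>
    intro w v hle h u hu
    exact h u (hM.2.1 _ _ _ hle hu)
  | box φ ih =>
    intro w v hle h u y hu hsq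
    exact h u y (hM.2.1 _ _ _ hle hu) hsq

theorem fallibleSat {M : KModel.{u}} (hM : M.IsBiInt) :
    ∀ (φ : Fml) {w : M.W}, w ∈ M.fallible → M.Sat φ w := by
  intro φ
  induction φ with
  | var p => intro w h; exact hM.2.2.2.2.2.2.2 p w h
  | bot => intro w h; exact h
  | and φ ψ ihφ ihψ => intro w h; exact ⟨ihφ h, ihψ h⟩
  | or φ ψ ihφ ihψ => intro w h; exact Or.inl (ihφ h)
  | imp φ ψ ihφ ihψ => intro w h v hle _; exact ihψ (hM.2.2.2.2.1 _ _ h hle)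
  | dia φ ih =>
    intro w h u hle
    exact ⟨u, hM.2.2.1 u, ih (hM.2.2.2.2.1 _ _ h hle)⟩
  | box φ ih =>
    intro w h u v hle hsq
    exact ih (hM.2.2.2.2.2.1 _ _ (hM.2.2.2.2.1 _ _ h hle) hsq)

/-- In forth-up confluent models, a single `⊑`-witness suffices for `◇`. -/
theorem dia_of_wit {M : KModel.{u}} (hM : M.IsBiInt) (hfu : M.ForthUp)
    {φ : Fml} {w y : M.W} (hsq : M.sq w y) (hy : M.Sat φ y) : M.Sat φ.dia w := by
  intro u hle
  obtain ⟨y', hley', hsq'⟩ := hfu w u y hle hsq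
  exact ⟨y', hsq', persist hM φ hley' hy⟩

theorem valid_DP {M : KModel.{u}} (hM : M.IsBiInt) (hfu : M.ForthUp) (φ ψ : Fml)
    (w : M.W) : M.Sat (((φ.or ψ).dia).imp ((φ.dia).or (ψ.dia))) w := by
  intro v _ h
  obtain ⟨y, hsq, hy⟩ := h v (hM.1 v)
  rcases hy with hy | hy
  · exact Or.inl (dia_of_wit hM hfu hsq hy)
  · exact Or.inr (dia_of_wit hM hfu hsq hy)

theorem valid_N {M : KModel.{u}} (hM : M.IsBiInt) (hinf : M.Infallible)
    (w : M.W) : M.Sat ((Fml.bot.dia).imp Fml.bot) w := by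
  intro v _ h
  obtain ⟨y, -, hy⟩ := h v (hM.1 v)
  have hy' : y ∈ M.fallible := hy
  rw [hinf] at hy'
  exact absurd hy' (Set.notMem_empty y)

theorem valid_FS2 {M : KModel.{u}} (hM : M.IsBiInt) (hfu : M.ForthUp)
    (hb : M.BackUp) (φ ψ : Fml) (w : M.W) :
    M.Sat (((φ.dia).imp (ψ.box)).imp ((φ.imp ψ).box)) w := by
  intro v _ h u y hvu hsq_uy z hyz hφz
  obtain ⟨t, hut, hsq_tz⟩ := hb u y z hsq_uy hyz
  have hdia : M.Sat φ.dia t := dia_of_wit hM hfu hsq_tz hφz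
  exact h t (hM.2.1 _ _ _ hvu hut) hdia t z (hM.1 t) hsq_tz

theorem valid_CD {M : KModel.{u}} (hM : M.IsBiInt) (hfu : M.ForthUp)
    (hfd : M.ForthDown) (φ ψ : Fml) (w : M.W) :
    M.Sat (((φ.or ψ).box).imp ((φ.box).or (ψ.dia))) w := by
  classical
  intro v _ h
  by_cases hq : M.Sat ψ.dia v
  · exact Or.inr hq
  · left
    have hex : ∃ u, M.le v u ∧ ∀ y, M.sq u y → ¬ M.Sat ψ y := by
      by_contra hcon
      push_neg at hcon
      refine hq fun u hle => ?_
      obtain ⟨y, hsq, hy⟩ := hcon u hle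
      exact ⟨y, hsq, hy⟩
    obtain ⟨u₀, hvu₀, hu₀⟩ := hex
    intro u y hvu hsq
    obtain ⟨t, hsq_vt, hle_ty⟩ := hfd v u y hvu hsq
    rcases h v t (hM.1 v) hsq_vt with hφ | hψ
    · exact persist hM φ hle_ty hφ
    · obtain ⟨t', hle_tt', hsq'⟩ := hfu v u₀ t hvu₀ hsq_vt
      exact absurd (persist hM ψ hle_tt' hψ) (hu₀ t' hsq')

theorem valid_GD {M : KModel.{u}} (hM : M.IsBiInt) (hlin : M.UpLinear)
    (φ ψ : Fml) (w : M.W) : M.Sat ((φ.imp ψ).or (ψ.imp φ)) w := by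
  classical
  by_cases hc : M.Sat (φ.imp ψ) w
  · exact Or.inl hc
  · right
    have hex : ∃ v, M.le w v ∧ M.Sat φ v ∧ ¬ M.Sat ψ v := by
      by_contra hcon
      push_neg at hcon
      exact hc fun v hle hφ => hcon v hle hφ
    obtain ⟨v, hwv, hφv, hψv⟩ := hex
    intro u hwu hψu
    rcases hlin w u v hwu hwv with h | h
    · exact absurd (persist hM ψ h hψu) hψv
    · exact persist hM φ h hφv

/-- Generic soundness of the Hilbert system. -/
theorem deriv_sound {C : KModel.{u} → Prop} (hBi : ∀ M, C M → M.IsBiInt)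
    (h4 : ∀ M, C M → M.BackUp ∨ M.ForthDown)
    (hAx : ∀ χ, Ax χ → ∀ M, C M → ∀ w, M.Sat χ w) :
    ∀ {φ : Fml}, Deriv Ax φ → ∀ M : KModel.{u}, C M → ∀ w, M.Sat φ w := by
  intro φ hd
  induction hd with
  | ax h => exact hAx _ h
  | then₁ φ ψ =>
    intro M hC w v _ hφ u hu _
    exact persist (hBi M hC) φ hu hφ
  | then₂ φ ψ χ =>
    intro M hC w v _ h₁ u hvu h₂ x hux hφ
    have hM := hBi M hC
    exact h₁ x (hM.2.1 _ _ _ hvu hux) hφ x (hM.1 x) (h₂ x hux hφ)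
  | andE₁ φ ψ => intro M hC w v _ h; exact h.1
  | andE₂ φ ψ => intro M hC w v _ h; exact h.2
  | andI φ ψ =>
    intro M hC w v _ hφ u hu hψ
    exact ⟨persist (hBi M hC) φ hu hφ, hψ⟩
  | orI₁ φ ψ => intro M hC w v _ h; exact Or.inl h
  | orI₂ φ ψ => intro M hC w v _ h; exact Or.inr h
  | orE φ ψ χ =>
    intro M hC w v _ h₁ u hvu h₂ x hux hor
    have hM := hBi M hC
    rcases hor with h | h
    · exact h₁ x (hM.2.1 _ _ _ hvu hux) h
    · exact h₂ x hux h
  | exfalso φ =>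
    intro M hC w v _ h
    exact fallibleSat (hBi M hC) φ h
  | kBox φ ψ =>
    intro M hC w v _ h₁ u hvu h₂ x y hux hsq
    have hM := hBi M hC
    exact h₁ x y (hM.2.1 _ _ _ hvu hux) hsq y (hM.1 y) (h₂ x y hux hsq)
  | kDia φ ψ =>
    intro M hC w v _ h₁ u hvu h₂ x hux
    have hM := hBi M hC
    obtain ⟨y, hsq, hy⟩ := h₂ x hux
    exact ⟨y, hsq, h₁ x y (hM.2.1 _ _ _ hvu hux) hsq y (hM.1 y) hy⟩
  | tBox φ =>
    intro M hC w v _ h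
    have hM := hBi M hC
    exact h v v (hM.1 v) (hM.2.2.1 v)
  | tDia φ =>
    intro M hC w v _ hφ u hu
    have hM := hBi M hC
    exact ⟨u, hM.2.2.1 u, persist hM φ hu hφ⟩
  | fourBox φ =>
    intro M hC w v _ h u y hvu hsq_uy x z hyx hsq_xz
    have hM := hBi M hC
    rcases h4 M hC with hb | hf
    · obtain ⟨t, hut, hsq_tx⟩ := hb u y x hsq_uy hyx
      exact h t z (hM.2.1 _ _ _ hvu hut) (hM.2.2.2.1 _ _ _ hsq_tx hsq_xz)
    · obtain ⟨t, hsq_yt, hle_tz⟩ := hf y x z hyx hsq_xz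
      have hφt : M.Sat φ t := h u t hvu (hM.2.2.2.1 _ _ _ hsq_uy hsq_yt)
      exact persist hM φ hle_tz hφt
  | fourDia φ =>
    intro M hC w v _ h u hu
    have hM := hBi M hC
    obtain ⟨y, hsq, hdia⟩ := h u hu
    obtain ⟨z, hsq', hz⟩ := hdia y (hM.1 y)
    exact ⟨z, hM.2.2.2.1 _ _ _ hsq hsq', hz⟩
  | mp h₁ h₂ ih₁ ih₂ =>
    intro M hC w
    exact ih₁ M hC w w ((hBi M hC).1 w) (ih₂ M hC w)
  | nec h ih =>
    intro M hC w u v _ _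
    exact ih M hC v

theorem satConj {M : KModel.{u}} {w : M.W} :
    ∀ {l : List Fml}, (∀ ψ ∈ l, M.Sat ψ w) → M.Sat (conjList l) w := by
  intro l
  induction l with
  | nil => intro _ v _ h; exact h
  | cons a l ih =>
    intro h
    exact ⟨h a (List.mem_cons_self), ih fun ψ hψ => h ψ (List.mem_cons_of_mem a hψ)⟩

/-- Generic soundness for syntactic consequence. -/
theorem soundness {C : KModel.{u} → Prop} (hBi : ∀ M, C M → M.IsBiInt)
    (h4 : ∀ M, C M → M.BackUp ∨ M.ForthDown)
    (hAx : ∀ χ, Ax χ → ∀ M, C M → ∀ w, M.Sat χ w)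
    {Γ : Set Fml} {φ : Fml} (h : SynConseq (Deriv Ax) Γ φ) : SemConseq.{u} C Γ φ := by
  obtain ⟨l, hl, hd⟩ := h
  intro M hC w _ hsat
  have hconj : M.Sat (conjList l) w := satConj fun ψ hψ => hsat ψ (hl ψ hψ)
  exact deriv_sound hBi h4 hAx hd M hC w w ((hBi M hC).1 w) hconj

end RegCompl
/-- **Soundness and strong completeness of IS4, S4I, GS4 and GS4c.** For each of
the logics Λ ∈ {IS4, S4I, GS4, GS4c}, and for every set `Γ` of `L`-formulas and
every `L`-formula `φ`: `Γ ⊨_Λ φ` if and only if `Γ ⊢_Λ φ`, where `⊨_Λ` is local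
semantic consequence on the class of Λ frames. -/
theorem regular_soundness_strong_completeness (Γ : Set Fml) (φ : Fml) :
    (SemConseq.{u} KModel.IsIS4 Γ φ ↔ SynConseq IS4 Γ φ) ∧
    (SemConseq.{u} KModel.IsS4I Γ φ ↔ SynConseq S4I Γ φ) ∧
    (SemConseq.{u} KModel.IsGS4 Γ φ ↔ SynConseq GS4 Γ φ) ∧
    (SemConseq.{u} KModel.IsGS4c Γ φ ↔ SynConseq GS4c Γ φ) := by
  classical
  open RegCompl in
  refine ⟨?_, ?_, ?_, ?_⟩
  -- IS4
  · have hDP : HasDP (fun χ => AxDP χ ∨ AxN χ ∨ AxFS2 χ) :=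
      fun φ' ψ' => Deriv.ax (Or.inl ⟨φ', ψ', rfl⟩)
    have hN : HasN (fun χ => AxDP χ ∨ AxN χ ∨ AxFS2 χ) :=
      Deriv.ax (Or.inr (Or.inl rfl))
    have hFS2 : HasFS2 (fun χ => AxDP χ ∨ AxN χ ∨ AxFS2 χ) :=
      fun φ' ψ' => Deriv.ax (Or.inr (Or.inr ⟨φ', ψ', rfl⟩))
    constructor
    · intro hsem
      by_contra hsyn
      exact completeness.{u} KModel.IsIS4 hDP hN
        (fun T hT ψ h => boxExistFS2 hFS2 hT h)
        ⟨⟨canM_biint, canM_backup hFS2⟩, canM_forthup hDP hN, canM_infallible⟩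
        hsyn hsem
    · intro hsyn
      refine soundness (fun M hC => hC.1.1) (fun M hC => Or.inl hC.1.2) ?_ hsyn
      rintro χ (⟨φ', ψ', rfl⟩ | rfl | ⟨φ', ψ', rfl⟩) M hC w
      · exact valid_DP hC.1.1 hC.2.1 φ' ψ' w
      · exact valid_N hC.1.1 hC.2.2 w
      · exact valid_FS2 hC.1.1 hC.2.1 hC.1.2 φ' ψ' w
  -- S4I
  · have hDP : HasDP (fun χ => AxDP χ ∨ AxN χ ∨ AxCD χ) :=
      fun φ' ψ' => Deriv.ax (Or.inl ⟨φ', ψ', rfl⟩)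
    have hN : HasN (fun χ => AxDP χ ∨ AxN χ ∨ AxCD χ) :=
      Deriv.ax (Or.inr (Or.inl rfl))
    have hCD : HasCD (fun χ => AxDP χ ∨ AxN χ ∨ AxCD χ) :=
      fun φ' ψ' => Deriv.ax (Or.inr (Or.inr ⟨φ', ψ', rfl⟩))
    constructor
    · intro hsem
      by_contra hsyn
      exact completeness.{u} KModel.IsS4I hDP hN
        (fun T hT ψ h => boxExistCD hDP hN hCD hT h)
        ⟨canM_biint, canM_forthup hDP hN, canM_forthdown hDP hN hCD,
          canM_infallible⟩ hsyn hsem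
    · intro hsyn
      refine soundness (fun M hC => hC.1) (fun M hC => Or.inr hC.2.2.1) ?_ hsyn
      rintro χ (⟨φ', ψ', rfl⟩ | rfl | ⟨φ', ψ', rfl⟩) M hC w
      · exact valid_DP hC.1 hC.2.1 φ' ψ' w
      · exact valid_N hC.1 hC.2.2.2 w
      · exact valid_CD hC.1 hC.2.1 hC.2.2.1 φ' ψ' w
  -- GS4
  · have hDP : HasDP (fun χ => AxDP χ ∨ AxN χ ∨ AxFS2 χ ∨ AxGD χ) :=
      fun φ' ψ' => Deriv.ax (Or.inl ⟨φ', ψ', rfl⟩)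
    have hN : HasN (fun χ => AxDP χ ∨ AxN χ ∨ AxFS2 χ ∨ AxGD χ) :=
      Deriv.ax (Or.inr (Or.inl rfl))
    have hFS2 : HasFS2 (fun χ => AxDP χ ∨ AxN χ ∨ AxFS2 χ ∨ AxGD χ) :=
      fun φ' ψ' => Deriv.ax (Or.inr (Or.inr (Or.inl ⟨φ', ψ', rfl⟩)))
    have hGD : HasGD (fun χ => AxDP χ ∨ AxN χ ∨ AxFS2 χ ∨ AxGD χ) :=
      fun φ' ψ' => Deriv.ax (Or.inr (Or.inr (Or.inr ⟨φ', ψ', rfl⟩)))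
    constructor
    · intro hsem
      by_contra hsyn
      exact completeness.{u} KModel.IsGS4 hDP hN
        (fun T hT ψ h => boxExistFS2 hFS2 hT h)
        ⟨⟨⟨canM_biint, canM_backup hFS2⟩, canM_forthup hDP hN, canM_infallible⟩,
          canM_uplinear hGD⟩ hsyn hsem
    · intro hsyn
      refine soundness (fun M hC => hC.1.1.1) (fun M hC => Or.inl hC.1.1.2) ?_ hsyn
      rintro χ (⟨φ', ψ', rfl⟩ | rfl | ⟨φ', ψ', rfl⟩ | ⟨φ', ψ', rfl⟩) M hC w
      · exact valid_DP hC.1.1.1 hC.1.2.1 φ' ψ' w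
      · exact valid_N hC.1.1.1 hC.1.2.2 w
      · exact valid_FS2 hC.1.1.1 hC.1.2.1 hC.1.1.2 φ' ψ' w
      · exact valid_GD hC.1.1.1 hC.2 φ' ψ' w
  -- GS4c
  · have hDP : HasDP (fun χ => AxDP χ ∨ AxN χ ∨ AxFS2 χ ∨ AxGD χ ∨ AxCD χ) :=
      fun φ' ψ' => Deriv.ax (Or.inl ⟨φ', ψ', rfl⟩)
    have hN : HasN (fun χ => AxDP χ ∨ AxN χ ∨ AxFS2 χ ∨ AxGD χ ∨ AxCD χ) :=
      Deriv.ax (Or.inr (Or.inl rfl))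
    have hFS2 : HasFS2 (fun χ => AxDP χ ∨ AxN χ ∨ AxFS2 χ ∨ AxGD χ ∨ AxCD χ) :=
      fun φ' ψ' => Deriv.ax (Or.inr (Or.inr (Or.inl ⟨φ', ψ', rfl⟩)))
    have hGD : HasGD (fun χ => AxDP χ ∨ AxN χ ∨ AxFS2 χ ∨ AxGD χ ∨ AxCD χ) :=
      fun φ' ψ' => Deriv.ax (Or.inr (Or.inr (Or.inr (Or.inl ⟨φ', ψ', rfl⟩))))
    have hCD : HasCD (fun χ => AxDP χ ∨ AxN χ ∨ AxFS2 χ ∨ AxGD χ ∨ AxCD χ) :=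
      fun φ' ψ' => Deriv.ax (Or.inr (Or.inr (Or.inr (Or.inr ⟨φ', ψ', rfl⟩))))
    constructor
    · intro hsem
      by_contra hsyn
      exact completeness.{u} KModel.IsGS4c hDP hN
        (fun T hT ψ h => boxExistFS2 hFS2 hT h)
        ⟨⟨⟨⟨canM_biint, canM_backup hFS2⟩, canM_forthup hDP hN, canM_infallible⟩,
          canM_uplinear hGD⟩, canM_forthdown hDP hN hCD⟩ hsyn hsem
    · intro hsyn
      refine soundness (fun M hC => hC.1.1.1.1) (fun M hC => Or.inl hC.1.1.1.2) ?_ hsyn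
      rintro χ (⟨φ', ψ', rfl⟩ | rfl | ⟨φ', ψ', rfl⟩ | ⟨φ', ψ', rfl⟩ | ⟨φ', ψ', rfl⟩) M hC w
      · exact valid_DP hC.1.1.1.1 hC.1.1.2.1 φ' ψ' w
      · exact valid_N hC.1.1.1.1 hC.1.1.2.2 w
      · exact valid_FS2 hC.1.1.1.1 hC.1.1.2.1 hC.1.1.1.2 φ' ψ' w
      · exact valid_GD hC.1.1.1.1 hC.1.2 φ' ψ' w
      · exact valid_CD hC.1.1.1.1 hC.1.1.2.1 hC.2 φ' ψ' w
end

section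
/- For every set Γ of L-formulas and every L-formula φ: Γ ⊨_CS4 φ if and only if Γ ⊢_CS4 φ, where ⊨_CS4 denotes local semantic consequence on the class of CS4 frames. That is, CS4 is sound and strongly complete with respect to the class of CS4 frames. -/
universe u

namespace CS4Aux

/-! ### Hilbert-style toolkit -/

abbrev Thm (φ : Fml) : Prop := CS4 φ

lemma tId (φ : Fml) : Thm (φ.imp φ) :=
  Deriv.mp (Deriv.mp (Deriv.then₂ φ (φ.imp φ) φ) (Deriv.then₁ φ (φ.imp φ)))
    (Deriv.then₁ φ φ)

lemma tConst {φ : Fml} (ψ : Fml) (h : Thm φ) : Thm (ψ.imp φ) :=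
  Deriv.mp (Deriv.then₁ φ ψ) h

lemma tSyl {φ ψ χ : Fml} (h2 : Thm (ψ.imp χ)) (h1 : Thm (φ.imp ψ)) : Thm (φ.imp χ) :=
  Deriv.mp (Deriv.mp (Deriv.then₂ φ ψ χ) (tConst φ h2)) h1

lemma tMpd {φ ψ χ : Fml} (h1 : Thm (φ.imp (ψ.imp χ))) (h2 : Thm (φ.imp ψ)) :
    Thm (φ.imp χ) :=
  Deriv.mp (Deriv.mp (Deriv.then₂ φ ψ χ) h1) h2

lemma tPair {χ φ ψ : Fml} (h1 : Thm (χ.imp φ)) (h2 : Thm (χ.imp ψ)) :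
    Thm (χ.imp (φ.and ψ)) :=
  tMpd (tSyl (Deriv.andI φ ψ) h1) h2

lemma tCase {φ ψ χ : Fml} (h1 : Thm (φ.imp χ)) (h2 : Thm (ψ.imp χ)) :
    Thm ((φ.or ψ).imp χ) :=
  Deriv.mp (Deriv.mp (Deriv.orE φ ψ χ) h1) h2

lemma tTop : Thm (Fml.bot.imp Fml.bot) := Deriv.exfalso Fml.bot

/-! ### Derivability from a set of premises -/

inductive Df (S : Set Fml) : Fml → Prop
  | prem {φ} (h : φ ∈ S) : Df S φ
  | thm {φ} (h : Thm φ) : Df S φ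
  | mp {φ ψ} (h1 : Df S (φ.imp ψ)) (h2 : Df S φ) : Df S ψ

lemma Df.mono {S S' : Set Fml} (hss : S ⊆ S') {φ} (h : Df S φ) : Df S' φ := by
  induction h with
  | prem h => exact .prem (hss h)
  | thm h => exact .thm h
  | mp _ _ ih1 ih2 => exact .mp ih1 ih2

lemma Df.deduction {S : Set Fml} {φ ψ : Fml} (h : Df (insert φ S) ψ) :
    Df S (φ.imp ψ) := by
  induction h with
  | @prem χ h =>
    rcases (Set.mem_insert_iff).1 h with h | h
    · subst h; exact .thm (tId _)
    · exact .mp (.thm (Deriv.then₁ χ φ)) (.prem h)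
  | @thm χ h => exact .mp (.thm (Deriv.then₁ χ φ)) (.thm h)
  | @mp α β _ _ ih1 ih2 => exact .mp (.mp (.thm (Deriv.then₂ φ α β)) ih1) ih2

lemma conj_append₁ (l₁ l₂ : List Fml) :
    Thm ((conjList (l₁ ++ l₂)).imp (conjList l₁)) := by
  induction l₁ with
  | nil => exact tConst _ tTop
  | cons a t ih => exact tPair (Deriv.andE₁ _ _) (tSyl ih (Deriv.andE₂ _ _))

lemma conj_append₂ (l₁ l₂ : List Fml) :
    Thm ((conjList (l₁ ++ l₂)).imp (conjList l₂)) := by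
  induction l₁ with
  | nil => exact tId _
  | cons a t ih => exact tSyl ih (Deriv.andE₂ _ _)

lemma df_conjList {S : Set Fml} {l : List Fml} (hl : ∀ ψ ∈ l, ψ ∈ S) :
    Df S (conjList l) := by
  induction l with
  | nil => exact .thm tTop
  | cons a t ih =>
    exact .mp (.mp (.thm (Deriv.andI _ _)) (.prem (hl a (by simp))))
      (ih fun ψ h => hl ψ (by simp [h]))

lemma df_iff_conj {S : Set Fml} {φ : Fml} :
    Df S φ ↔ ∃ l : List Fml, (∀ ψ ∈ l, ψ ∈ S) ∧ Thm ((conjList l).imp φ) := by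
  constructor
  · intro h
    induction h with
    | @prem χ h => exact ⟨[χ], by simp [h], Deriv.andE₁ _ _⟩
    | @thm χ h => exact ⟨[], by simp, tConst _ h⟩
    | @mp α β _ _ ih1 ih2 =>
      obtain ⟨l₁, hl₁, h1⟩ := ih1
      obtain ⟨l₂, hl₂, h2⟩ := ih2
      refine ⟨l₁ ++ l₂, ?_, ?_⟩
      · intro ψ hψ
        rcases List.mem_append.1 hψ with h | h
        exacts [hl₁ _ h, hl₂ _ h]
      · exact tMpd (tSyl h1 (conj_append₁ l₁ l₂)) (tSyl h2 (conj_append₂ l₁ l₂))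
  · rintro ⟨l, hl, h⟩
    exact .mp (.thm h) (df_conjList hl)

/-! ### Disjunctions -/

def disjList (l : List Fml) : Fml := l.foldr Fml.or Fml.bot

lemma disj_const {l : List Fml} {δ : Fml} (h : ∀ a ∈ l, a = δ) :
    Thm ((disjList l).imp δ) := by
  induction l with
  | nil => exact Deriv.exfalso δ
  | cons a t ih =>
    have ha : a = δ := h a (by simp)
    subst ha
    exact tCase (tId _) (ih fun b hb => h b (by simp [hb]))

lemma disj_app_left (l₁ l₂ : List Fml) :
    Thm ((disjList l₁).imp (disjList (l₁ ++ l₂))) := by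
  induction l₁ with
  | nil => exact Deriv.exfalso _
  | cons a t ih => exact tCase (Deriv.orI₁ _ _) (tSyl (Deriv.orI₂ _ _) ih)

lemma disj_app_right (l₁ l₂ : List Fml) :
    Thm ((disjList l₂).imp (disjList (l₁ ++ l₂))) := by
  induction l₁ with
  | nil => exact tId _
  | cons a t ih => exact tSyl (Deriv.orI₂ _ _) ih

/-! ### Theories -/

def IsTheory (T : Set Fml) : Prop := ∀ φ, Df T φ → φ ∈ T

def IsPrime (T : Set Fml) : Prop := ∀ φ ψ, φ.or ψ ∈ T → φ ∈ T ∨ ψ ∈ T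

lemma prime_disj {T : Set Fml} (hT : IsTheory T) (hP : IsPrime T) :
    ∀ {m : List Fml}, m ≠ [] → disjList m ∈ T → ∃ a ∈ m, a ∈ T := by
  intro m
  induction m with
  | nil => intro hm; exact absurd rfl hm
  | cons a t ih =>
    intro _ h
    have h' : (a.or (disjList t)) ∈ T := h
    rcases hP _ _ h' with h | h
    · exact ⟨a, by simp, h⟩
    · rcases t with _ | ⟨b, t'⟩
      · have hbot : Fml.bot ∈ T := h
        exact ⟨a, by simp, hT a (.mp (.thm (Deriv.exfalso a)) (.prem hbot))⟩
      · obtain ⟨c, hc, hcT⟩ := ih (by simp) h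
        exact ⟨c, List.mem_cons_of_mem _ hc, hcT⟩

/-! ### Lindenbaum lemma -/

def Bad (S D : Set Fml) : Prop :=
  ∃ m : List Fml, m ≠ [] ∧ (∀ a ∈ m, a ∈ D) ∧ Df S (disjList m)

lemma lindenbaum {S D : Set Fml} (h : ¬ Bad S D) :
    ∃ T, S ⊆ T ∧ IsTheory T ∧ IsPrime T ∧ ∀ a ∈ D, a ∉ T := by
  set P : Set (Set Fml) := {T | ¬ Bad T D} with hP
  have hzorn : ∀ c ⊆ P, IsChain (· ⊆ ·) c → c.Nonempty →
      ∃ ub ∈ P, ∀ s ∈ c, s ⊆ ub := by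
    intro c hc hchain hne
    refine ⟨⋃₀ c, ?_, fun s hs => Set.subset_sUnion_of_mem hs⟩
    rintro ⟨m, hm, hmD, hdf⟩
    obtain ⟨l, hl, hthm⟩ := df_iff_conj.1 hdf
    -- find a single chain element containing all of l
    have : ∃ T ∈ c, ∀ ψ ∈ l, ψ ∈ T := by
      clear hthm
      induction l with
      | nil => obtain ⟨T, hT⟩ := hne; exact ⟨T, hT, by simp⟩
      | cons a t ih =>
        obtain ⟨T, hTc, hT⟩ := ih (fun ψ hψ => hl ψ (by simp [hψ]))
        obtain ⟨T', hT'c, haT'⟩ := hl a (by simp)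
        by_cases hEq : T = T'
        · exact ⟨T, hTc, by
            intro ψ hψ
            rcases List.mem_cons.1 hψ with rfl | hψ
            · exact hEq ▸ haT'
            · exact hT ψ hψ⟩
        · rcases hchain hTc hT'c hEq with hss | hss
          · refine ⟨T', hT'c, ?_⟩
            intro ψ hψ
            rcases List.mem_cons.1 hψ with rfl | hψ
            · exact haT'
            · exact hss (hT ψ hψ)
          · refine ⟨T, hTc, ?_⟩
            intro ψ hψ
            rcases List.mem_cons.1 hψ with rfl | hψ
            · exact hss haT'
            · exact hT ψ hψ
    obtain ⟨T, hTc, hT⟩ := this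
    exact hc hTc ⟨m, hm, hmD, df_iff_conj.2 ⟨l, hT, hthm⟩⟩
  obtain ⟨M, hSM, hMP, hMmax⟩ := zorn_subset_nonempty P hzorn S h
  -- M is deductively closed
  have hth : IsTheory M := by
    intro χ hχ
    by_contra hn
    have hins : insert χ M ∈ P := by
      rintro ⟨m, hm, hmD, hdf⟩
      exact hMP ⟨m, hm, hmD, .mp (Df.deduction hdf) hχ⟩
    have := hMmax hins (Set.subset_insert _ _)
    exact hn (this (Set.mem_insert _ _))
  have hpr : IsPrime M := by
    intro α β hαβ
    by_contra hn
    push_neg at hn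
    obtain ⟨hα, hβ⟩ := hn
    have badα : Bad (insert α M) D := by
      by_contra hb
      have := hMmax hb (Set.subset_insert _ _)
      exact hα (this (Set.mem_insert _ _))
    have badβ : Bad (insert β M) D := by
      by_contra hb
      have := hMmax hb (Set.subset_insert _ _)
      exact hβ (this (Set.mem_insert _ _))
    obtain ⟨m₁, hm₁, hm₁D, hdf₁⟩ := badα
    obtain ⟨m₂, hm₂, hm₂D, hdf₂⟩ := badβ
    have h1 : Df M (α.imp (disjList m₁)) := Df.deduction hdf₁
    have h2 : Df M (β.imp (disjList m₂)) := Df.deduction hdf₂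
    have h1' : Df M (α.imp (disjList (m₁ ++ m₂))) :=
      .mp (.mp (.thm (Deriv.then₂ _ _ _))
        (.thm (tConst _ (disj_app_left m₁ m₂)))) h1
    have h2' : Df M (β.imp (disjList (m₁ ++ m₂))) :=
      .mp (.mp (.thm (Deriv.then₂ _ _ _))
        (.thm (tConst _ (disj_app_right m₁ m₂)))) h2
    have hd : Df M (disjList (m₁ ++ m₂)) :=
      .mp (.mp (.mp (.thm (Deriv.orE α β _)) h1') h2') (.prem hαβ)
    refine hMP ⟨m₁ ++ m₂, by simp [hm₁], ?_, hd⟩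
    intro a ha
    rcases List.mem_append.1 ha with h | h
    exacts [hm₁D _ h, hm₂D _ h]
  refine ⟨M, hSM, hth, hpr, ?_⟩
  intro a haD haM
  exact hMP ⟨[a], by simp, by simp [haD],
    .mp (.thm (Deriv.orI₁ a Fml.bot)) (.prem haM)⟩

lemma lindenbaum_single {S : Set Fml} {δ : Fml} (h : ¬ Df S δ) :
    ∃ T, S ⊆ T ∧ IsTheory T ∧ IsPrime T ∧ δ ∉ T := by
  have hb : ¬ Bad S {δ} := by
    rintro ⟨m, hm, hmD, hdf⟩
    exact h (.mp (.thm (disj_const fun a ha => hmD a ha)) hdf)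
  obtain ⟨T, h1, h2, h3, h4⟩ := lindenbaum hb
  exact ⟨T, h1, h2, h3, h4 δ rfl⟩

/-! ### Modal derived rules -/

lemma tBoxPair {φ ψ : Fml} : Thm ((φ.box).imp ((ψ.box).imp ((φ.and ψ).box))) :=
  tSyl (Deriv.kBox ψ (φ.and ψ))
    (Deriv.mp (Deriv.kBox φ (ψ.imp (φ.and ψ))) (Deriv.nec (Deriv.andI φ ψ)))

lemma conj_box_thm (l : List Fml) :
    Thm ((conjList (l.map Fml.box)).imp ((conjList l).box)) := by
  induction l with
  | nil => exact tConst _ (Deriv.nec tTop)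
  | cons a t ih =>
    exact tMpd (tSyl tBoxPair (Deriv.andE₁ _ _)) (tSyl ih (Deriv.andE₂ _ _))

lemma box_lift {l : List Fml} {χ : Fml} (h : Thm ((conjList l).imp χ)) :
    Thm ((conjList (l.map Fml.box)).imp (χ.box)) :=
  tSyl (Deriv.mp (Deriv.kBox _ _) (Deriv.nec h)) (conj_box_thm l)

lemma dia_lift {l : List Fml} {ψ χ : Fml} (h : Thm ((conjList l).imp (ψ.imp χ))) :
    Thm ((conjList (l.map Fml.box)).imp ((ψ.dia).imp (χ.dia))) :=
  tSyl (Deriv.kDia ψ χ) (box_lift h)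

lemma dMono {φ ψ : Fml} (h : Thm (φ.imp ψ)) : Thm ((φ.dia).imp (ψ.dia)) :=
  Deriv.mp (Deriv.kDia φ ψ) (Deriv.nec h)

lemma boxed_mem {Θ : Set Fml} {l : List Fml} (hl : ∀ ψ ∈ l, ψ.box ∈ Θ) :
    ∀ ψ ∈ l.map Fml.box, ψ ∈ Θ := by
  intro ψ hψ
  obtain ⟨a, ha, rfl⟩ := List.mem_map.1 hψ
  exact hl a ha

lemma box_pull {Θ : Set Fml} (hT : IsTheory Θ) {χ : Fml}
    (h : Df {ψ | ψ.box ∈ Θ} χ) : χ.box ∈ Θ := by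
  obtain ⟨l, hl, hc⟩ := df_iff_conj.1 h
  exact hT _ (.mp (.thm (box_lift hc)) (df_conjList (boxed_mem hl)))

lemma dia_pull {Θ : Set Fml} (hT : IsTheory Θ) {φ γ : Fml}
    (hd : φ.dia ∈ Θ) (h : Df (insert φ {ψ | ψ.box ∈ Θ}) γ) : γ.dia ∈ Θ := by
  obtain ⟨l, hl, hc⟩ := df_iff_conj.1 (Df.deduction h)
  have h1 : Df Θ ((φ.dia).imp (γ.dia)) :=
    .mp (.thm (dia_lift hc)) (df_conjList (boxed_mem hl))
  exact hT _ (.mp h1 (.prem hd))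

/-! ### Disjunctions over a set -/

inductive DisjOf (A : Set Fml) : Fml → Prop
  | base {φ} (h : φ ∈ A) : DisjOf A φ
  | or {φ ψ} (h1 : DisjOf A φ) (h2 : DisjOf A ψ) : DisjOf A (φ.or ψ)

lemma disjOf_empty {γ : Fml} (h : DisjOf (∅ : Set Fml) γ) : False := by
  induction h with
  | base h => exact h
  | or _ _ ih _ => exact ih

lemma disjOf_single {φ γ : Fml} (h : DisjOf {φ} γ) : Thm (γ.imp φ) := by
  induction h with
  | @base χ h => rw [Set.mem_singleton_iff] at h; subst h; exact tId _
  | or _ _ ih1 ih2 => exact tCase ih1 ih2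

lemma dia_disj {A : Set Fml} :
    ∀ {m : List Fml}, m ≠ [] → (∀ a ∈ m, ∃ γ, DisjOf A γ ∧ a = γ.dia) →
      ∃ γ, DisjOf A γ ∧ Thm ((disjList m).imp (γ.dia)) := by
  intro m
  induction m with
  | nil => intro hm; exact absurd rfl hm
  | cons a t ih =>
    intro _ h
    obtain ⟨γ₁, hγ₁, ha⟩ := h a (by simp)
    subst ha
    rcases t with _ | ⟨b, t'⟩
    · exact ⟨γ₁, hγ₁, tCase (tId _) (Deriv.exfalso _)⟩
    · obtain ⟨γ₂, hγ₂, h₂⟩ := ih (by simp) (fun c hc => h c (by simp [hc]))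
      exact ⟨γ₁.or γ₂, .or hγ₁ hγ₂,
        tCase (dMono (Deriv.orI₁ _ _)) (tSyl (dMono (Deriv.orI₂ _ _)) h₂)⟩

end CS4Aux

namespace CS4Aux

/-! ### The canonical model -/

def Valid (Θ A : Set Fml) : Prop :=
  IsTheory Θ ∧ IsPrime Θ ∧ ∀ γ, DisjOf A γ → γ.dia ∉ Θ

def CanW : Type := {p : Set Fml × Set Fml // Valid p.1 p.2}

def canM : KModel.{u} where
  W := ULift.{u} CanW
  fallible := {w | Fml.bot ∈ w.down.1.1}
  le w v := w.down.1.1 ⊆ v.down.1.1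
  sq w v := (∀ χ, χ.box ∈ w.down.1.1 → χ ∈ v.down.1.1) ∧ w.down.1.2 ⊆ v.down.1.2
  val p := {w | Fml.var p ∈ w.down.1.1}

lemma validEmpty {T : Set Fml} (hth : IsTheory T) (hpr : IsPrime T) :
    Valid T ∅ :=
  ⟨hth, hpr, fun _ hγ _ => disjOf_empty hγ⟩

lemma canM_isCS4 : (canM.{u}).IsCS4 := by
  constructor
  · refine ⟨fun w => subset_rfl, fun u v w h1 h2 => h1.trans h2, ?_, ?_,
      fun w v hw hle => hle hw, ?_, fun p w v h hle => hle h, ?_⟩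
    · exact fun w => ⟨fun χ hχ =>
        w.down.2.1 _ (.mp (.thm (Deriv.tBox χ)) (.prem hχ)), subset_rfl⟩
    · exact fun u v w h1 h2 =>
        ⟨fun χ hχ => h2.1 _ (h1.1 _
          (u.down.2.1 _ (.mp (.thm (Deriv.fourBox χ)) (.prem hχ)))),
         h1.2.trans h2.2⟩
    · exact fun w v hw hsq => hsq.1 Fml.bot
        (w.down.2.1 _ (.mp (.thm (Deriv.exfalso (Fml.bot.box))) (.prem hw)))
    · exact fun p w hw =>
        w.down.2.1 _ (.mp (.thm (Deriv.exfalso (Fml.var p))) (.prem hw))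
  · -- back-up confluence
    intro w v v' hsq hle
    have hnb : ¬ Bad w.down.1.1 {β | ∃ χ, χ ∉ v'.down.1.1 ∧ β = χ.box} := by
      rintro ⟨m, hm, hmD, hdf⟩
      obtain ⟨a, ham, haT⟩ :=
        prime_disj w.down.2.1 w.down.2.2.1 hm (w.down.2.1 _ hdf)
      obtain ⟨χ, hχ, rfl⟩ := hmD a ham
      exact hχ (hle (hsq.1 χ haT))
    obtain ⟨T, hsub, hth, hpr, hD⟩ := lindenbaum hnb
    refine ⟨⟨⟨(T, ∅), validEmpty hth hpr⟩⟩, hsub, ?_, Set.empty_subset _⟩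
    intro χ hχ
    by_contra hn
    exact hD _ ⟨χ, hn, rfl⟩ hχ

/-! ### Truth lemma -/

lemma truth (φ : Fml) : ∀ w : (canM.{u}).W, canM.Sat φ w ↔ φ ∈ w.down.1.1 := by
  induction φ with
  | var p => exact fun w => Iff.rfl
  | bot => exact fun w => Iff.rfl
  | and φ ψ ihφ ihψ =>
    intro w
    constructor
    · rintro ⟨h1, h2⟩
      exact w.down.2.1 _ (.mp (.mp (.thm (Deriv.andI φ ψ))
        (.prem ((ihφ w).1 h1))) (.prem ((ihψ w).1 h2)))
    · intro h
      exact ⟨(ihφ w).2 (w.down.2.1 _ (.mp (.thm (Deriv.andE₁ φ ψ)) (.prem h))),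
             (ihψ w).2 (w.down.2.1 _ (.mp (.thm (Deriv.andE₂ φ ψ)) (.prem h)))⟩
  | or φ ψ ihφ ihψ =>
    intro w
    constructor
    · rintro (h | h)
      · exact w.down.2.1 _ (.mp (.thm (Deriv.orI₁ φ ψ)) (.prem ((ihφ w).1 h)))
      · exact w.down.2.1 _ (.mp (.thm (Deriv.orI₂ φ ψ)) (.prem ((ihψ w).1 h)))
    · intro h
      rcases w.down.2.2.1 _ _ h with h | h
      · exact Or.inl ((ihφ w).2 h)
      · exact Or.inr ((ihψ w).2 h)
  | imp φ ψ ihφ ihψ =>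
    intro w
    constructor
    · intro hsat
      by_contra hn
      have hnd : ¬ Df (insert φ w.down.1.1) ψ := fun hd =>
        hn (w.down.2.1 _ (Df.deduction hd))
      obtain ⟨T, hsub, hth, hpr, hψT⟩ := lindenbaum_single hnd
      have hle : canM.le w ⟨⟨(T, ∅), validEmpty hth hpr⟩⟩ :=
        fun x hx => hsub (Set.mem_insert_of_mem _ hx)
      exact hψT ((ihψ _).1 (hsat _ hle ((ihφ _).2 (hsub (Set.mem_insert _ _)))))
    · intro h v hle hφv
      exact (ihψ v).2 (v.down.2.1 _ (.mp (.prem (hle h)) (.prem ((ihφ v).1 hφv))))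
  | dia φ ih =>
    intro w
    constructor
    · intro hsat
      by_contra hn
      have hnb : ¬ Bad w.down.1.1 {β | ∃ γ, DisjOf {φ} γ ∧ β = γ.dia} := by
        rintro ⟨m, hm, hmD, hdf⟩
        obtain ⟨a, ham, haT⟩ :=
          prime_disj w.down.2.1 w.down.2.2.1 hm (w.down.2.1 _ hdf)
        obtain ⟨γ, hγ, rfl⟩ := hmD a ham
        exact hn (w.down.2.1 _ (.mp (.thm (dMono (disjOf_single hγ))) (.prem haT)))
      obtain ⟨T, hsub, hth, hpr, hD⟩ := lindenbaum hnb
      have hvalid : Valid T {φ} := ⟨hth, hpr, fun γ hγ => hD _ ⟨γ, hγ, rfl⟩⟩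
      obtain ⟨v, hsq, hsat'⟩ := hsat ⟨⟨(T, {φ}), hvalid⟩⟩ hsub
      have hφv : φ ∈ v.down.1.1 := (ih v).1 hsat'
      exact v.down.2.2.2 φ (.base (hsq.2 rfl))
        (v.down.2.1 _ (.mp (.thm (Deriv.tDia φ)) (.prem hφv)))
    · intro h u hle
      have hd' : φ.dia ∈ u.down.1.1 := hle h
      have hnb : ¬ Bad (insert φ {ψ | ψ.box ∈ u.down.1.1})
          {β | ∃ γ, DisjOf u.down.1.2 γ ∧ β = γ.dia} := by
        rintro ⟨m, hm, hmD, hdf⟩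
        obtain ⟨γ, hγ, hthm⟩ := dia_disj hm (fun a ha => hmD a ha)
        have h2 : (γ.dia).dia ∈ u.down.1.1 :=
          dia_pull u.down.2.1 hd' (.mp (.thm hthm) hdf)
        exact u.down.2.2.2 γ hγ
          (u.down.2.1 _ (.mp (.thm (Deriv.fourDia γ)) (.prem h2)))
      obtain ⟨Φ, hsub, hth, hpr, hD⟩ := lindenbaum hnb
      have hvalid : Valid Φ u.down.1.2 := ⟨hth, hpr, fun γ hγ => hD _ ⟨γ, hγ, rfl⟩⟩
      refine ⟨⟨⟨(Φ, u.down.1.2), hvalid⟩⟩,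
        ⟨fun χ hχ => hsub (Set.mem_insert_of_mem _ hχ), subset_rfl⟩, ?_⟩
      exact (ih _).2 (hsub (Set.mem_insert _ _))
  | box φ ih =>
    intro w
    constructor
    · intro hsat
      by_contra hn
      have hnd : ¬ Df {ψ | ψ.box ∈ w.down.1.1} φ := fun hd =>
        hn (box_pull w.down.2.1 hd)
      obtain ⟨Φ, hsub, hth, hpr, hφΦ⟩ := lindenbaum_single hnd
      exact hφΦ ((ih ⟨⟨(Φ, ∅), validEmpty hth hpr⟩⟩).1
        (hsat ⟨⟨(w.down.1.1, ∅), validEmpty w.down.2.1 w.down.2.2.1⟩⟩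
          ⟨⟨(Φ, ∅), validEmpty hth hpr⟩⟩ subset_rfl
          ⟨fun χ hχ => hsub hχ, subset_rfl⟩))
    · intro h u v hle hsq
      exact (ih v).2 (hsq.1 φ (hle h))

end CS4Aux

namespace CS4Aux

/-! ### Soundness -/

lemma persist {M : KModel.{u}} (hB : M.IsBiInt) (φ : Fml) :
    ∀ {w v}, M.le w v → M.Sat φ w → M.Sat φ v := by
  obtain ⟨hrefl, htrans, hsrefl, hstrans, hfle, hfsq, hval, hvf⟩ := hB
  induction φ with
  | var p => exact fun h hs => hval _ _ _ hs h
  | bot => exact fun h hs => hfle _ _ hs h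
  | and φ ψ ih1 ih2 => exact fun h hs => ⟨ih1 h hs.1, ih2 h hs.2⟩
  | or φ ψ ih1 ih2 =>
    rintro w v h (hs | hs)
    · exact Or.inl (ih1 h hs)
    · exact Or.inr (ih2 h hs)
  | imp φ ψ _ _ => exact fun h hs u hu hφ => hs u (htrans _ _ _ h hu) hφ
  | dia φ _ => exact fun h hs u hu => hs u (htrans _ _ _ h hu)
  | box φ _ => exact fun h hs u x hu hx => hs u x (htrans _ _ _ h hu) hx

lemma fallible_sat {M : KModel.{u}} (hB : M.IsBiInt) (φ : Fml) :
    ∀ w ∈ M.fallible, M.Sat φ w := by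
  obtain ⟨hrefl, htrans, hsrefl, hstrans, hfle, hfsq, hval, hvf⟩ := hB
  induction φ with
  | var p => exact fun w hw => hvf _ _ hw
  | bot => exact fun w hw => hw
  | and φ ψ ih1 ih2 => exact fun w hw => ⟨ih1 w hw, ih2 w hw⟩
  | or φ ψ ih1 _ => exact fun w hw => Or.inl (ih1 w hw)
  | imp φ ψ _ ih2 => exact fun w hw v hv _ => ih2 v (hfle _ _ hw hv)
  | dia φ ih => exact fun w hw u hu => ⟨u, hsrefl u, ih u (hfle _ _ hw hu)⟩
  | box φ ih => exact fun w hw u v hu hv => ih v (hfsq _ _ (hfle _ _ hw hu) hv)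

lemma sound {φ : Fml} (h : CS4 φ) :
    ∀ M : KModel.{u}, M.IsCS4 → ∀ w, M.Sat φ w := by
  induction h with
  | ax h => exact h.elim
  | then₁ φ ψ =>
    intro M hM w v _ hφ u hu _
    exact persist hM.1 φ hu hφ
  | then₂ φ ψ χ =>
    intro M hM w a _ h1 b hb h2 c hc h3
    exact h1 c (hM.1.2.1 _ _ _ hb hc) h3 c (hM.1.1 c) (h2 c hc h3)
  | andE₁ φ ψ => exact fun M hM w v _ h => h.1
  | andE₂ φ ψ => exact fun M hM w v _ h => h.2
  | andI φ ψ =>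
    intro M hM w v _ h1 u hu h2
    exact ⟨persist hM.1 φ hu h1, h2⟩
  | orI₁ φ ψ => exact fun M hM w v _ h => Or.inl h
  | orI₂ φ ψ => exact fun M hM w v _ h => Or.inr h
  | orE φ ψ χ =>
    intro M hM w a _ h1 b hb h2 c hc h3
    rcases h3 with h3 | h3
    · exact h1 c (hM.1.2.1 _ _ _ hb hc) h3
    · exact h2 c hc h3
  | exfalso φ => exact fun M hM w v _ h => fallible_sat hM.1 φ v h
  | kBox φ ψ =>
    intro M hM w a ha h1 b hb h2 u v hu hv
    exact h1 u v (hM.1.2.1 _ _ _ hb hu) hv v (hM.1.1 v) (h2 u v hu hv)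
  | kDia φ ψ =>
    intro M hM w a ha h1 b hb h2 u hu
    obtain ⟨v, hv, hφ⟩ := h2 u hu
    exact ⟨v, hv, h1 u v (hM.1.2.1 _ _ _ hb hu) hv v (hM.1.1 v) hφ⟩
  | tBox φ => exact fun M hM w v _ h => h v v (hM.1.1 v) (hM.1.2.2.1 v)
  | tDia φ =>
    intro M hM w v _ h u hu
    exact ⟨u, hM.1.2.2.1 u, persist hM.1 φ hu h⟩
  | fourBox φ =>
    intro M hM w a ha h u v hu hv u' v' hu' hv'
    obtain ⟨y, hy1, hy2⟩ := hM.2 u v u' hv hu'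
    exact h y v' (hM.1.2.1 _ _ _ hu hy1) (hM.1.2.2.2.1 _ _ _ hy2 hv')
  | fourDia φ =>
    intro M hM w v _ h u hu
    obtain ⟨x, hx, hdx⟩ := h u hu
    obtain ⟨y, hy, hφ⟩ := hdx x (hM.1.1 x)
    exact ⟨y, hM.1.2.2.2.1 _ _ _ hx hy, hφ⟩
  | mp _ _ ih1 ih2 =>
    intro M hM w
    exact ih1 M hM w w (hM.1.1 w) (ih2 M hM w)
  | nec _ ih => exact fun M hM w u v _ _ => ih M hM v

lemma sat_conjList {M : KModel.{u}} {w : M.W} {l : List Fml}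
    (h : ∀ ψ ∈ l, M.Sat ψ w) : M.Sat (conjList l) w := by
  induction l with
  | nil => exact fun v _ hv => hv
  | cons a t ih => exact ⟨h a (by simp), ih fun ψ hψ => h ψ (by simp [hψ])⟩

end CS4Aux

open CS4Aux in
/-- **Soundness and strong completeness of CS4.** For every set `Γ` of
`L`-formulas and every `L`-formula `φ`: `Γ ⊨_CS4 φ` if and only if `Γ ⊢_CS4 φ`,
where `⊨_CS4` is local semantic consequence on the class of CS4 frames. -/
theorem cs4_soundness_strong_completeness (Γ : Set Fml) (φ : Fml) :
    SemConseq.{u} KModel.IsCS4 Γ φ ↔ SynConseq CS4 Γ φ := by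
  constructor
  · intro h
    by_contra hn
    have hdf : ¬ Df Γ φ := by
      intro hd
      obtain ⟨l, hl, hc⟩ := df_iff_conj.1 hd
      exact hn ⟨l, hl, hc⟩
    obtain ⟨T, hsub, hth, hpr, hφT⟩ := lindenbaum_single hdf
    set w : (canM.{u}).W := ⟨⟨(T, ∅), validEmpty hth hpr⟩⟩ with hw
    have hbot : w ∉ (canM.{u}).fallible := by
      intro hb
      exact hφT (hth φ (.mp (.thm (Deriv.exfalso φ)) (.prem hb)))
    have hsat : ∀ ψ ∈ Γ, (canM.{u}).Sat ψ w :=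
      fun ψ hψ => (truth ψ w).2 (hsub hψ)
    exact hφT ((truth φ w).1 (h canM canM_isCS4 w hbot hsat))
  · rintro ⟨l, hl, hc⟩ M hM w _ hΓ
    exact sound hc M hM w w (hM.1.1 w)
      (sat_conjList fun ψ hψ => hΓ ψ (hl ψ hψ))
end

section
/- Every substitution instance of the axiom 4□ (□p → □□p) is valid on every bi-intuitionistic frame that is back–up confluent, and also on every bi-intuitionistic frame that is forth–down confluent. -/
universe u

theorem Sat_mono (M : KModel.{u}) (hM : M.IsBiInt) (φ : Fml) :
    ∀ w v : M.W, M.le w v → M.Sat φ w → M.Sat φ v := by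
  obtain ⟨hrefl, htrans, _, hsqtrans, hfle, _, hval, _⟩ := hM
  induction φ with
  | var p => exact fun w v h hw => hval p w v hw h
  | bot => exact fun w v h hw => hfle w v hw h
  | and a b iha ihb => exact fun w v h hw => ⟨iha w v h hw.1, ihb w v h hw.2⟩
  | or a b iha ihb =>
      rintro w v h (hw | hw)
      · exact Or.inl (iha w v h hw)
      · exact Or.inr (ihb w v h hw)
  | imp a b iha ihb =>
      exact fun w v h hw u hu ha => hw u (htrans w v u h hu) ha
  | dia a ih =>
      exact fun w v h hw u hu => hw u (htrans w v u h hu)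
  | box a ih =>
      exact fun w v h hw u u' hu hu' => hw u u' (htrans w v u h hu) hu'

/-- **Validity of 4□.** Every substitution instance `□φ → □□φ` of the axiom
`□p → □□p` is valid on every bi-intuitionistic frame that is back–up confluent,
and also on every bi-intuitionistic frame that is forth–down confluent. -/
theorem fourBox_valid (M : KModel.{u}) (hM : M.IsBiInt) (φ : Fml) :
    (M.BackUp → ∀ w : M.W, w ∉ M.fallible →
      M.Sat (((φ.box).imp ((φ.box).box))) w) ∧
    (M.ForthDown → ∀ w : M.W, w ∉ M.fallible →
      M.Sat (((φ.box).imp ((φ.box).box))) w) := by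
  constructor
  · intro hBU v _ u hvu hbox a b hua hab
    intro c d hbc hcd
    obtain ⟨u', hu', hsq⟩ := hBU a b c hab hbc
    exact hbox u' d (hM.2.1 u a u' hua hu') (hM.2.2.2.1 u' c d hsq hcd)
  · intro hFD v _ u hvu hbox a b hua hab
    intro c d hbc hcd
    obtain ⟨w', hsq, hle⟩ := hFD b c d hbc hcd
    exact Sat_mono M hM φ w' d hle
      (hbox a w' hua (hM.2.2.2.1 a b w' hab hsq))
end

section
/- Let M = (W, W⊥, ≼, ⊑, V) be a bi-intuitionistic model, Σ a set of L-formulas, and ∼ a Σ-bisimulation on M that is also an equivalence relation. Then: (1) if ⊑ is forth–up confluent, so is the modal relation of M/∼; (2) if ⊑ is back–up confluent, so is the modal relation of M/∼; (3) if ≼ is upward linear, so is the intuitionistic relation of M/∼. -/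
universe u

namespace KModel

/-- The positive part `ℓ+(w)` of the `Σ`-label of a world. -/
def labelPlus (M : KModel.{u}) (S : Set Fml) (w : M.W) : Set Fml :=
  {φ | φ ∈ S ∧ M.Sat φ w}

/-- The part `ℓ◇(w)` of the `Σ`-label of a world: formulas of `Σ` satisfied at
no `⊑`-successor of `w`. -/
def labelDia (M : KModel.{u}) (S : Set Fml) (w : M.W) : Set Fml :=
  {φ | φ ∈ S ∧ ∀ v, M.sq w v → ¬ M.Sat φ v}

/-- `Z` is a `Σ`-bisimulation on `M`: it is forth–up and back–up confluent for
`≼` and preserves `Σ`-labels. -/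
def IsBisim (M : KModel.{u}) (S : Set Fml) (Z : M.W → M.W → Prop) : Prop :=
  (∀ w w' v, M.le w w' → Z w v → ∃ v', M.le v v' ∧ Z w' v') ∧
  (∀ w v v', Z w v → M.le v v' → ∃ w', M.le w w' ∧ Z w' v') ∧
  (∀ w v, Z w v →
    labelPlus M S w = labelPlus M S v ∧ labelDia M S w = labelDia M S v)

/-- The greatest `Σ`-bisimulation on `M`: the union of all `Σ`-bisimulations. -/
def GBisim (M : KModel.{u}) (S : Set Fml) (w v : M.W) : Prop :=
  ∃ Z, IsBisim M S Z ∧ Z w v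

/-- The quotient of a model by a relation `r` on its worlds: worlds are the
classes; a class is fallible iff it contains a fallible world; `[w] ≼ [v]` iff
`w' ≼ v'` for some `w' ∼ w`, `v' ∼ v`; the modal relation is the transitive
closure of the analogous relation; and `[w] ∈ V(p)` iff `w ∈ V(p)`. -/
def QuotModel (M : KModel.{u}) (r : M.W → M.W → Prop) : KModel.{u} where
  W := Quot r
  fallible := {x | ∃ w, Quot.mk r w = x ∧ w ∈ M.fallible}
  le := fun x y => ∃ w v, Quot.mk r w = x ∧ Quot.mk r v = y ∧ M.le w v
  sq := Relation.TransGen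
    (fun x y => ∃ w v, Quot.mk r w = x ∧ Quot.mk r v = y ∧ M.sq w v)
  val := fun p => {x | ∃ w, Quot.mk r w = x ∧ w ∈ M.val p}

end KModel

/-- A set of formulas closed under subformulas. -/
def SubClosed (S : Set Fml) : Prop :=
  (∀ φ ψ : Fml, φ.and ψ ∈ S → φ ∈ S ∧ ψ ∈ S) ∧
  (∀ φ ψ : Fml, φ.or ψ ∈ S → φ ∈ S ∧ ψ ∈ S) ∧
  (∀ φ ψ : Fml, φ.imp ψ ∈ S → φ ∈ S ∧ ψ ∈ S) ∧
  (∀ φ : Fml, φ.dia ∈ S → φ ∈ S) ∧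
  (∀ φ : Fml, φ.box ∈ S → φ ∈ S)

/-- **Preservation of frame conditions by bisimulation quotients.** Let `M` be a
bi-intuitionistic model, `Σ` a set of `L`-formulas, and `∼` a `Σ`-bisimulation
on `M` that is also an equivalence relation.  Then: (1) if `⊑` is forth–up
confluent, so is the modal relation of `M/∼`; (2) if `⊑` is back–up confluent,
so is the modal relation of `M/∼`; (3) if `≼` is upward linear, so is the
intuitionistic relation of `M/∼`. -/
theorem quotient_preserves_frame_conditions (M : KModel.{u}) (hM : M.IsBiInt)
    (S : Set Fml) (r : M.W → M.W → Prop) (hbis : M.IsBisim S r)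
    (heq : Equivalence r) :
    (M.ForthUp → (M.QuotModel r).ForthUp) ∧
    (M.BackUp → (M.QuotModel r).BackUp) ∧
    (M.UpLinear → (M.QuotModel r).UpLinear) := by
  obtain ⟨hfu, hbu, -⟩ := hbis
  have hq : ∀ a b : M.W, Quot.mk r a = Quot.mk r b → r a b := fun a b h =>
    heq.eqvGen_iff.mp (Quot.eq.mp h)
  -- characterization of the quotient intuitionistic relation from a representative
  have hle : ∀ (w : M.W) (y : Quot r), (M.QuotModel r).le (Quot.mk r w) y ↔
      ∃ c, M.le w c ∧ Quot.mk r c = y := by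
    intro w y
    constructor
    · rintro ⟨w1, u1, hw1, hu1, hle1⟩
      obtain ⟨v', hv1, hv2⟩ := hfu w1 u1 w hle1 (hq _ _ hw1)
      exact ⟨v', hv1, (Quot.sound hv2).symm.trans hu1⟩
    · rintro ⟨c, h1, h2⟩
      exact ⟨w, c, rfl, h2, h1⟩
  set sqb : Quot r → Quot r → Prop :=
    fun x y => ∃ w v, Quot.mk r w = x ∧ Quot.mk r v = y ∧ M.sq w v with hsqb
  have hsq : (M.QuotModel r).sq = Relation.TransGen sqb := rfl
  refine ⟨?_, ?_, ?_⟩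
  · -- ForthUp
    intro hF x x' y hxx' hxy
    rw [hsq] at hxy ⊢
    have step : ∀ a b, sqb a b → ∀ a', (M.QuotModel r).le a a' →
        ∃ b', (M.QuotModel r).le b b' ∧ sqb a' b' := by
      rintro a b ⟨w, v, hw, hv, hwv⟩ a' ha
      subst hw; have ha := (hle w a').mp ha
      obtain ⟨c, hwc, hc⟩ := ha
      obtain ⟨v'', hv1, hv2⟩ := hF w c v hwc hwv
      exact ⟨Quot.mk r v'', ⟨v, v'', hv, rfl, hv1⟩, ⟨c, v'', hc, rfl, hv2⟩⟩
    have main : ∀ a, Relation.TransGen sqb a y → ∀ a', (M.QuotModel r).le a a' →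
        ∃ y', (M.QuotModel r).le y y' ∧ Relation.TransGen sqb a' y' := by
      intro a h
      induction h using Relation.TransGen.head_induction_on with
      | single h =>
        intro a' ha
        obtain ⟨y', h1, h2⟩ := step _ _ h a' ha
        exact ⟨y', h1, Relation.TransGen.single h2⟩
      | head h h' IH =>
        intro a' ha
        obtain ⟨c', hc1, hc2⟩ := step _ _ h a' ha
        obtain ⟨y', h1, h2⟩ := IH c' hc1
        exact ⟨y', h1, h2.head hc2⟩
    exact main x hxy x' hxx'
  · -- BackUp
    intro hB x y y' hxy hyy'
    rw [hsq] at hxy ⊢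
    have step : ∀ a b, sqb a b → ∀ b', (M.QuotModel r).le b b' →
        ∃ a', (M.QuotModel r).le a a' ∧ sqb a' b' := by
      rintro a b ⟨w, v, hw, hv, hwv⟩ b' hb
      subst hv; have hb := (hle v b').mp hb
      obtain ⟨c, hvc, hc⟩ := hb
      obtain ⟨w', hw1, hw2⟩ := hB w v c hwv hvc
      exact ⟨Quot.mk r w', ⟨w, w', hw, rfl, hw1⟩, ⟨w', c, rfl, hc, hw2⟩⟩
    have main : ∀ b, Relation.TransGen sqb x b → ∀ b', (M.QuotModel r).le b b' →
        ∃ x', (M.QuotModel r).le x x' ∧ Relation.TransGen sqb x' b' := by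
      intro b h
      induction h with
      | single h =>
        intro b' hb
        obtain ⟨x', h1, h2⟩ := step _ _ h b' hb
        exact ⟨x', h1, Relation.TransGen.single h2⟩
      | tail h h' IH =>
        intro b' hb
        obtain ⟨z', hz1, hz2⟩ := step _ _ h' b' hb
        obtain ⟨x', h1, h2⟩ := IH z' hz1
        exact ⟨x', h1, h2.tail hz2⟩
    exact main y hxy y' hyy'
  · -- UpLinear
    intro hL x u v hxu hxv
    obtain ⟨w, rfl⟩ := Quot.exists_rep x
    obtain ⟨c, hwc, hc⟩ := (hle w u).mp hxu
    obtain ⟨d, hwd, hd⟩ := (hle w v).mp hxv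
    rcases hL w c d hwc hwd with h | h
    · exact Or.inl ⟨c, d, hc, hd, h⟩
    · exact Or.inr ⟨d, c, hd, hc, h⟩
end
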